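/- arXiv:2509.01194 — 6 statements merged into one kernel-verified Lean document; each statement's English description precedes it below -/
import Mathlib

section
/- Let Z be a metric measure space in which every ball has positive and finite measure. Then the space LIP^∞(Z) of bounded real-valued Lipschitz functions with norm ‖f‖ = ‖f‖_{L^∞} + lip(f) is 2-isomorphic to the Hajłasz–Sobolev space M^{1,∞}(Z). Concretely: (a) every u ∈ LIP^∞(Z) satisfies that the constant function 2⁻¹ lip(u) is a Hajłasz gradient of u; and (b) every u ∈ M^{1,∞}(Z) has a representative û ∈ LIP^∞(Z) with lip(û) ≤ 2‖g‖_{L^∞(Z)} for every essentially bounded Hajłasz gradient g of u. -/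
open MeasureTheory Metric Set ENNReal NNReal

/-- A set with null complement is dense when all balls have positive measure. -/
lemma dense_of_compl_null {Z : Type*} [MetricSpace Z] [MeasurableSpace Z] {μ : Measure Z}
    (hballs : ∀ (z : Z) (r : ℝ), 0 < r → 0 < μ (Metric.ball z r) ∧ μ (Metric.ball z r) < ∞)
    {S : Set Z} (hS : μ Sᶜ = 0) : Dense S := by
  rw [Metric.dense_iff]
  intro x r hr
  by_contra h
  rw [Set.not_nonempty_iff_eq_empty] at h
  have hsub : Metric.ball x r ⊆ Sᶜ := by
    intro y hy
    intro hyS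
    exact Set.eq_empty_iff_forall_notMem.mp h y ⟨hy, hyS⟩
  have := measure_mono_null hsub hS
  exact absurd this (hballs x r hr).1.ne'

/-- From a Hajłasz gradient, extract a full-measure set on which `u` is Lipschitz. -/
lemma lipschitzOn_of_gradient {Z : Type*} [MetricSpace Z] [MeasurableSpace Z] {μ : Measure Z}
    {u g : Z → ℝ} (hg0 : ∀ z, 0 ≤ g z) (hgmem : MemLp g ⊤ μ)
    {N : Set Z} (hN : μ N = 0)
    (hgrad : ∀ x ∉ N, ∀ y ∉ N, |u x - u y| ≤ dist x y * (g x + g y)) :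
    ∃ S : Set Z, μ Sᶜ = 0 ∧ LipschitzOnWith (2 * (eLpNorm g ⊤ μ).toNNReal) u S := by
  set C : ℝ := (eLpNorm g ⊤ μ).toReal with hC
  have hfin : eLpNorm g ⊤ μ ≠ ∞ := hgmem.2.ne
  have hae : ∀ᵐ x ∂μ, g x ≤ C := by
    filter_upwards [ae_le_eLpNormEssSup (f := g) (μ := μ)] with x hx
    have : (‖g x‖₊ : ℝ≥0∞) ≤ eLpNorm g ⊤ μ := by
      rwa [eLpNorm_exponent_top]
    have h2 : (‖g x‖₊ : ℝ) ≤ C := by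
      have h3 := ENNReal.toReal_mono hfin this
      simpa [hC] using h3
    calc g x ≤ |g x| := le_abs_self _
    _ = ‖g x‖ := rfl
    _ = (‖g x‖₊ : ℝ) := rfl
    _ ≤ C := h2
  set B : Set Z := {x | ¬ g x ≤ C} with hB
  have hBnull : μ B = 0 := ae_iff.mp hae
  refine ⟨(N ∪ B)ᶜ, ?_, ?_⟩
  · rw [compl_compl]
    exact measure_union_null hN hBnull
  · rw [lipschitzOnWith_iff_dist_le_mul]
    intro x hx y hy
    simp only [Set.mem_compl_iff, Set.mem_union, not_or] at hx hy
    have hgx : g x ≤ C := not_not.mp hx.2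
    have hgy : g y ≤ C := not_not.mp hy.2
    have h1 : dist (u x) (u y) = |u x - u y| := Real.dist_eq _ _
    rw [h1]
    calc |u x - u y| ≤ dist x y * (g x + g y) := hgrad x hx.1 y hy.1
    _ ≤ dist x y * (C + C) := by
        apply mul_le_mul_of_nonneg_left (add_le_add hgx hgy) dist_nonneg
    _ = (2 * (eLpNorm g ⊤ μ).toNNReal : ℝ≥0) * dist x y := by
        push_cast [ENNReal.coe_toNNReal_eq_toReal]
        simp only [← hC]
        ring
  
/-- In a metric measure space whose balls have positive and finite measure,
`LIP^∞(Z)` and `M^{1,∞}(Z)` are `2`-isomorphic. Concretely: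
(a) for every bounded Lipschitz `u` with Lipschitz constant `K`, the constant function
`K/2` is a Hajłasz gradient of `u`; and
(b) every `u ∈ M^{1,∞}(Z)` has a bounded Lipschitz representative `uhat` with
`lip(uhat) ≤ 2 ‖g‖_{L^∞}` for every essentially bounded Hajłasz gradient `g` of `u`. -/
theorem lip_infty_two_isomorphic_hajlasz
    {Z : Type*} [MetricSpace Z] [MeasurableSpace Z] (μ : Measure Z)
    (hballs : ∀ (z : Z) (r : ℝ), 0 < r → 0 < μ (Metric.ball z r) ∧ μ (Metric.ball z r) < ∞) :
    (∀ (u : Z → ℝ) (K : ℝ≥0), LipschitzWith K u →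
      ∀ x y : Z, |u x - u y| ≤ dist x y * ((K : ℝ) / 2 + (K : ℝ) / 2)) ∧
    (∀ u : Z → ℝ, MemLp u ⊤ μ →
      (∃ g : Z → ℝ, (∀ z, 0 ≤ g z) ∧ MemLp g ⊤ μ ∧ ∃ N : Set Z, μ N = 0 ∧
          ∀ x ∉ N, ∀ y ∉ N, |u x - u y| ≤ dist x y * (g x + g y)) →
      ∃ uhat : Z → ℝ, uhat =ᵐ[μ] u ∧ (∀ z, |uhat z| ≤ (eLpNorm u ⊤ μ).toReal) ∧
        ∀ g : Z → ℝ, (∀ z, 0 ≤ g z) → MemLp g ⊤ μ →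
          (∃ N : Set Z, μ N = 0 ∧
            ∀ x ∉ N, ∀ y ∉ N, |u x - u y| ≤ dist x y * (g x + g y)) →
          LipschitzWith (2 * (eLpNorm g ⊤ μ).toNNReal) uhat) := by
  constructor
  · intro u K hK x y
    have := hK.dist_le_mul x y
    rw [Real.dist_eq] at this
    calc |u x - u y| ≤ K * dist x y := this
    _ = dist x y * ((K : ℝ) / 2 + (K : ℝ) / 2) := by ring
  · rintro u hu ⟨g₀, hg₀0, hg₀mem, N₀, hN₀, hgrad₀⟩
    obtain ⟨S₀, hS₀, hlip₀⟩ := lipschitzOn_of_gradient hg₀0 hg₀mem hN₀ hgrad₀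
    obtain ⟨uhat, huhatlip, hEq₀⟩ := hlip₀.extend_real
    have hEq₀' : Set.EqOn uhat u S₀ := fun x hx => (hEq₀ hx).symm
    have hae : uhat =ᵐ[μ] u := by
      rw [Filter.eventuallyEq_iff_exists_mem]
      exact ⟨S₀, by rwa [mem_ae_iff], hEq₀'⟩
    refine ⟨uhat, hae, ?_, ?_⟩
    · -- bound
      set M : ℝ := (eLpNorm u ⊤ μ).toReal with hM
      have hfin : eLpNorm u ⊤ μ ≠ ∞ := hu.2.ne
      have haeu : ∀ᵐ x ∂μ, |u x| ≤ M := by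
        filter_upwards [ae_le_eLpNormEssSup (f := u) (μ := μ)] with x hx
        have : (‖u x‖₊ : ℝ≥0∞) ≤ eLpNorm u ⊤ μ := by rwa [eLpNorm_exponent_top]
        have h2 : (‖u x‖₊ : ℝ) ≤ M := by
          have h3 := ENNReal.toReal_mono hfin this
          simpa [hM] using h3
        exact h2
      set A : Set Z := {x | ¬ |u x| ≤ M} with hA
      have hAnull : μ A = 0 := ae_iff.mp haeu
      have hTnull : μ (S₀ᶜ ∪ A) = 0 := measure_union_null hS₀ hAnull
      have hTdense : Dense (S₀ᶜ ∪ A)ᶜ := by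
        apply dense_of_compl_null hballs
        rwa [compl_compl]
      have hclosed : IsClosed {z : Z | |uhat z| ≤ M} :=
        isClosed_le (continuous_abs.comp huhatlip.continuous) continuous_const
      have hsub : (S₀ᶜ ∪ A)ᶜ ⊆ {z : Z | |uhat z| ≤ M} := by
        intro z hz
        simp only [Set.compl_union, Set.mem_inter_iff, Set.mem_compl_iff] at hz
        have h1 : z ∈ S₀ := not_not.mp hz.1
        have h2 : |u z| ≤ M := not_not.mp hz.2
        rw [Set.mem_setOf_eq, hEq₀' h1]
        exact h2
      intro z
      have : closure (S₀ᶜ ∪ A)ᶜ ⊆ {z : Z | |uhat z| ≤ M} := hclosed.closure_subset_iff.mpr hsub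
      rw [hTdense.closure_eq] at this
      exact this (Set.mem_univ z)
    · rintro g hg0 hgmem ⟨N, hN, hgrad⟩
      obtain ⟨S, hS, hlip⟩ := lipschitzOn_of_gradient hg0 hgmem hN hgrad
      obtain ⟨v, hvlip, hEqv⟩ := hlip.extend_real
      have hdense : Dense (S₀ ∩ S) := by
        apply dense_of_compl_null hballs
        rw [Set.compl_inter]
        exact measure_union_null hS₀ hS
      have heq : uhat = v := by
        apply Continuous.ext_on hdense huhatlip.continuous hvlip.continuous
        intro z hz
        rw [hEq₀' hz.1, hEqv hz.2]
      rw [heq]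
      exact hvlip
end

section
/- Let Z be a locally complete metric measure space with an infinitesimally doubling reference measure that is finite and positive on all balls. If Z is ∞-thick (C,R)-quasiconvex, then Z is very ∞-thick (C′,R)-quasiconvex for every C′ > C. -/
open MeasureTheory Metric Set ENNReal NNReal

/-- A rectifiable curve in arclength (unit-speed) parametrization: a `1`-Lipschitz map
on `[0, len]`. -/
structure Curve (Z : Type*) [MetricSpace Z] where
  toFun : ℝ → Z
  len : ℝ
  len_nonneg : 0 ≤ len
  lip : LipschitzOnWith 1 toFun (Set.Icc 0 len)

namespace Curve

variable {Z : Type*} [MetricSpace Z]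

/-- The starting point of a curve. -/
def start (γ : Curve Z) : Z := γ.toFun 0

/-- The end point of a curve. -/
def finish (γ : Curve Z) : Z := γ.toFun γ.len

/-- The curve integral `∫_γ ρ ds`, computed in the unit-speed parametrization. -/
noncomputable def integ (γ : Curve Z) (ρ : Z → ℝ≥0∞) : ℝ≥0∞ :=
  ∫⁻ s in Set.Icc (0 : ℝ) γ.len, ρ (γ.toFun s)

end Curve

variable {Z : Type*} [MetricSpace Z] [MeasurableSpace Z]

/-- A curve family is `∞`-negligible if some nonnegative Borel function vanishing
`μ`-a.e. has infinite curve integral over every member of the family. -/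
def InfNegligible (μ : Measure Z) (Γ : Set (Curve Z)) : Prop :=
  ∃ ρ : Z → ℝ≥0∞, Measurable ρ ∧ (∀ᵐ z ∂μ, ρ z = 0) ∧ ∀ γ ∈ Γ, γ.integ ρ = ∞

/-- The family `Γ(x, y; C)` of `C`-quasiconvex curves joining `x` to `y`. -/
def qcFam (C : ℝ) (x y : Z) : Set (Curve Z) :=
  {γ | γ.start = x ∧ γ.finish = y ∧ γ.len ≤ C * dist x y}

/-- `Z` is very `∞`-thick `(C, R)`-quasiconvex. -/
def VeryThick (μ : Measure Z) (C : ℝ) (R : ℝ≥0∞) : Prop :=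
  ∀ x₀ x y : Z, edist x x₀ < R → edist y x₀ < R → ¬ InfNegligible μ (qcFam C x y)

/-- The family `Γ(E, F; C)` of curves joining `E` to `F` that are `C`-quasiconvex. -/
def thickFam (C : ℝ) (E F : Set Z) : Set (Curve Z) :=
  {γ | γ.start ∈ E ∧ γ.finish ∈ F ∧ γ.len ≤ C * dist γ.start γ.finish}

/-- `Z` is `∞`-thick `(C, R)`-quasiconvex. -/
def ThickQC (μ : Measure Z) (C : ℝ) (R : ℝ≥0∞) : Prop :=
  ∀ x₀ : Z, ∀ E F : Set Z, MeasurableSet E → MeasurableSet F →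
    E ⊆ {z | edist z x₀ < R} → F ⊆ {z | edist z x₀ < R} →
    0 < μ E → 0 < μ F → ¬ InfNegligible μ (thickFam C E F)

/-- `Z` is locally complete. -/
def LocallyComplete (Z : Type*) [MetricSpace Z] : Prop :=
  ∀ z : Z, ∃ ε > (0 : ℝ), IsComplete (Metric.closedBall z ε)

/-- The measure `μ` is infinitesimally doubling. -/
def InfinitesimallyDoubling (μ : Measure Z) : Prop :=
  ∀ᵐ z ∂μ, ∃ K : ℝ≥0, ∃ r₀ > (0 : ℝ), ∀ r : ℝ, 0 < r → r < r₀ →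
    μ (Metric.ball z (2 * r)) ≤ K * μ (Metric.ball z r)

/-- Every ball has positive and finite measure. -/
def BallsPosFin (μ : Measure Z) : Prop :=
  ∀ (z : Z) (r : ℝ), 0 < r → 0 < μ (Metric.ball z r) ∧ μ (Metric.ball z r) < ∞

/-- `ρ` is an `∞`-weak upper gradient of `u`. -/
def IsInfWeakUpperGrad (μ : Measure Z) (u : Z → ℝ) (ρ : Z → ℝ≥0∞) : Prop :=
  Measurable ρ ∧ ∃ Γ₀ : Set (Curve Z), InfNegligible μ Γ₀ ∧
    ∀ γ : Curve Z, γ ∉ Γ₀ → ENNReal.ofReal |u γ.start - u γ.finish| ≤ γ.integ ρ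

set_option linter.unusedSectionVars false
set_option maxHeartbeats 1000000

section Helpers

open Filter Topology

lemma isComplete_closedBall_mono {p : Z} {r ε : ℝ} (h : IsComplete (Metric.closedBall p ε))
    (hr : r ≤ ε) : IsComplete (Metric.closedBall p r) := by
  intro f hf hfs
  obtain ⟨z, hz, htend⟩ := h f hf (hfs.trans (Filter.principal_mono.mpr
    (Metric.closedBall_subset_closedBall hr)))
  refine ⟨z, ?_, htend⟩
  have hne : f.NeBot := hf.1
  have : ClusterPt z (Filter.principal (Metric.closedBall p r)) :=
    Filter.NeBot.mono hne (le_inf htend hfs)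
  have hcl : z ∈ closure (Metric.closedBall p r) := mem_closure_iff_clusterPt.mpr this
  rwa [IsClosed.closure_eq Metric.isClosed_closedBall] at hcl

lemma exists_slack {x₀ p : Z} {R : ℝ≥0∞} (h : edist p x₀ < R) :
    ∃ r > (0:ℝ), ∀ z : Z, dist z p < r → edist z x₀ < R := by
  obtain ⟨δ, hδ0, hδ⟩ := ENNReal.lt_iff_exists_add_pos_lt.mp h
  refine ⟨(δ:ℝ), by exact_mod_cast hδ0, fun z hz => ?_⟩
  have h1 : edist z p < (δ : ℝ≥0∞) := by
    rw [edist_dist]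
    calc ENNReal.ofReal (dist z p) < ENNReal.ofReal (δ:ℝ) :=
      ENNReal.ofReal_lt_ofReal_iff (by exact_mod_cast hδ0) |>.mpr hz
    _ = (δ : ℝ≥0∞) := ENNReal.ofReal_coe_nnreal
  calc edist z x₀ ≤ edist z p + edist p x₀ := edist_triangle _ _ _
    _ < (δ : ℝ≥0∞) + edist p x₀ := by
        exact ENNReal.add_lt_add_right (ne_top_of_lt h) h1
    _ = edist p x₀ + δ := add_comm _ _
    _ < R := hδ

end Helpers
section Construction

open Filter Topology

structure Gap (Z : Type*) [MetricSpace Z] where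
  a : ℝ
  b : ℝ
  p : Z
  q : Z

structure Fill (Z : Type*) [MetricSpace Z] where
  τl : ℝ
  τr : ℝ
  c : Curve Z

/-- All data and hypotheses for the construction. -/
structure Ctx (W : Type*) [MetricSpace W] [MeasurableSpace W] [BorelSpace W] where
  μ : Measure W
  x₀ : W
  R : ℝ≥0∞
  C : ℝ
  N : Set W
  x : W
  y : W
  C' : ℝ
  hC : 1 ≤ C
  hloc : LocallyComplete W
  hballs : BallsPosFin μ
  hthick : ThickQC μ C R
  hN : MeasurableSet N
  hN0 : μ N = 0
  hx : edist x x₀ < R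
  hy : edist y x₀ < R
  hxy : x ≠ y
  hC' : C < C'

variable [BorelSpace Z]

namespace Ctx

variable (X : Ctx Z)

lemma hC0 : (0:ℝ) < X.C := lt_of_lt_of_le one_pos X.hC

/-- A good gap: positive length, small jump, endpoints in the big ball,
an anchored complete ball. -/
def GoodGap (g : Gap Z) : Prop :=
  0 < g.b - g.a ∧ dist g.p g.q ≤ (g.b - g.a)/(4*X.C) ∧
    edist g.p X.x₀ < X.R ∧ edist g.q X.x₀ < X.R ∧
    (IsComplete (Metric.closedBall g.p (g.b - g.a)) ∨
      IsComplete (Metric.closedBall g.q (g.b - g.a)))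

def FillHyp (g : Gap Z) (T : ℝ) : Prop :=
  0 < T ∧ T ≤ (g.b - g.a)/8 ∧ edist g.p X.x₀ < X.R ∧ edist g.q X.x₀ < X.R ∧
    X.C * dist g.p g.q + 3*T < g.b - g.a

structure FillSpec (g : Gap Z) (T : ℝ) (Fl : Fill Z) : Prop where
  τl_pos : 0 < Fl.τl
  τr_pos : 0 < Fl.τr
  τl_le : Fl.τl ≤ T
  τr_le : Fl.τr ≤ T
  jl : dist g.p Fl.c.start ≤ min Fl.τl Fl.τr / (4*X.C)
  jr : dist Fl.c.finish g.q ≤ min Fl.τl Fl.τr / (4*X.C)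
  sN : Fl.c.start ∉ X.N
  fN : Fl.c.finish ∉ X.N
  sR : edist Fl.c.start X.x₀ < X.R
  fR : edist Fl.c.finish X.x₀ < X.R
  complL : IsComplete (Metric.closedBall g.p Fl.τl)
  complR : IsComplete (Metric.closedBall g.q Fl.τr)
  room : Fl.τl + Fl.c.len + Fl.τr < g.b - g.a
  avoid : ∀ᵐ s ∂(volume.restrict (Icc (0:ℝ) Fl.c.len)), Fl.c.toFun s ∉ X.N

lemma exists_fill (g : Gap Z) (T : ℝ) (h : X.FillHyp g T) :
    ∃ Fl : Fill Z, X.FillSpec g T Fl := by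
  obtain ⟨hT0, hT8, hRp, hRq, hroom⟩ := h
  obtain ⟨εp, hεp, hcp⟩ := X.hloc g.p
  obtain ⟨εq, hεq, hcq⟩ := X.hloc g.q
  set τl := min T εp with hτl
  set τr := min T εq with hτr
  have hτl0 : 0 < τl := lt_min hT0 hεp
  have hτr0 : 0 < τr := lt_min hT0 hεq
  obtain ⟨rp, hrp0, hrp⟩ := exists_slack hRp
  obtain ⟨rq, hrq0, hrq⟩ := exists_slack hRq
  have h4C : (0:ℝ) < 4 * X.C := by have := X.hC0; linarith
  set η := min (min τl τr / (4*X.C)) (min rp rq) with hη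
  have hη0 : 0 < η := lt_min (div_pos (lt_min hτl0 hτr0) h4C) (lt_min hrp0 hrq0)
  -- the test sets
  set E := Metric.ball g.p η \ X.N with hE
  set F := Metric.ball g.q η \ X.N with hF
  have hEm : MeasurableSet E := measurableSet_ball.diff X.hN
  have hFm : MeasurableSet F := measurableSet_ball.diff X.hN
  have hEpos : 0 < X.μ E := by
    rw [hE, measure_diff_null X.hN0]; exact (X.hballs g.p η hη0).1
  have hFpos : 0 < X.μ F := by
    rw [hF, measure_diff_null X.hN0]; exact (X.hballs g.q η hη0).1
  have hEsub : E ⊆ {z | edist z X.x₀ < X.R} := by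
    intro z hz
    exact hrp z (lt_of_lt_of_le hz.1 (le_trans (min_le_right _ _) (min_le_left _ _)))
  have hFsub : F ⊆ {z | edist z X.x₀ < X.R} := by
    intro z hz
    exact hrq z (lt_of_lt_of_le hz.1 (le_trans (min_le_right _ _) (min_le_right _ _)))
  have hneg := X.hthick X.x₀ E F hEm hFm hEsub hFsub hEpos hFpos
  -- test function
  set ρ' : Z → ℝ≥0∞ := X.N.indicator (fun _ => (⊤:ℝ≥0∞)) with hρ'
  have hρ'm : Measurable ρ' := measurable_const.indicator X.hN
  have hρ'ae : ∀ᵐ z ∂X.μ, ρ' z = 0 := by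
    rw [MeasureTheory.ae_iff]
    refine measure_mono_null ?_ X.hN0
    intro z hz
    by_contra hzN
    exact hz (Set.indicator_of_notMem hzN _)
  obtain ⟨γ, hγmem, hγfin⟩ : ∃ γ ∈ thickFam X.C E F, γ.integ ρ' ≠ ⊤ := by
    by_contra hc
    push_neg at hc
    exact hneg ⟨ρ', hρ'm, hρ'ae, hc⟩
  obtain ⟨hγs, hγf, hγlen⟩ := hγmem
  -- a.e. avoidance of N along γ
  have havoid : ∀ᵐ s ∂(volume.restrict (Icc (0:ℝ) γ.len)), γ.toFun s ∉ X.N := by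
    have hγae : AEMeasurable γ.toFun (volume.restrict (Icc (0:ℝ) γ.len)) :=
      γ.lip.continuousOn.aemeasurable measurableSet_Icc
    have hcomp : AEMeasurable (fun s => ρ' (γ.toFun s)) (volume.restrict (Icc (0:ℝ) γ.len)) :=
      hρ'm.comp_aemeasurable hγae
    have hlt := MeasureTheory.ae_lt_top' hcomp hγfin
    filter_upwards [hlt] with s hs hsN
    rw [hρ'] at hs
    simp [Set.indicator_of_mem hsN] at hs
  -- distances
  have hds : dist g.p γ.start < η := by
    have := hγs.1; rw [Metric.mem_ball] at this; rw [dist_comm]; exact this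
  have hdf : dist γ.finish g.q < η := by
    have := hγf.1; rw [Metric.mem_ball] at this; exact this
  have hηle : η ≤ min τl τr / (4 * X.C) := min_le_left _ _
  -- length bound
  have hlen : γ.len ≤ X.C * dist g.p g.q + 2 * X.C * η := by
    have h1 : dist γ.start γ.finish ≤ dist g.p g.q + 2 * η := by
      have := dist_triangle4 γ.start g.p g.q γ.finish
      rw [dist_comm γ.start g.p] at this
      have h2 : dist g.q γ.finish = dist γ.finish g.q := dist_comm _ _
      nlinarith [hds, hdf]
    calc γ.len ≤ X.C * dist γ.start γ.finish := hγlen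
      _ ≤ X.C * (dist g.p g.q + 2 * η) := by
          exact mul_le_mul_of_nonneg_left h1 (le_of_lt X.hC0)
      _ = X.C * dist g.p g.q + 2 * X.C * η := by ring
  have hmin_le : min τl τr ≤ T := le_trans (min_le_left _ _) (min_le_left _ _)
  have h2Cη : 2 * X.C * η ≤ T / 2 := by
    have : η ≤ min τl τr / (4 * X.C) := hηle
    have h1 : 2 * X.C * η ≤ 2 * X.C * (min τl τr / (4 * X.C)) := by
      apply mul_le_mul_of_nonneg_left this
      have := X.hC0; linarith
    have h2 : 2 * X.C * (min τl τr / (4 * X.C)) = min τl τr / 2 := by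
      field_simp; rw [mul_div_assoc, div_self X.hC0.ne']; norm_num
    rw [h2] at h1
    linarith
  refine ⟨⟨τl, τr, γ⟩, ?_, ?_, ?_, ?_, ?_, ?_, ?_, ?_, ?_, ?_, ?_, ?_, ?_, ?_⟩
  · exact hτl0
  · exact hτr0
  · exact min_le_left _ _
  · exact min_le_left _ _
  · exact le_trans (le_of_lt hds) hηle
  · exact le_trans (le_of_lt hdf) hηle
  · exact hγs.2
  · exact hγf.2
  · exact hEsub hγs
  · exact hFsub hγf
  · exact isComplete_closedBall_mono hcp (min_le_right _ _)
  · exact isComplete_closedBall_mono hcq (min_le_right _ _)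
  · show τl + γ.len + τr < g.b - g.a
    have hτlT : τl ≤ T := min_le_left _ _
    have hτrT : τr ≤ T := min_le_left _ _
    nlinarith [hlen, h2Cη, hroom]
  · exact havoid


open Classical in
/-- The chosen fill of a gap. -/
noncomputable def fillF (g : Gap Z) (T : ℝ) : Fill Z :=
  if h : X.FillHyp g T then (X.exists_fill g T h).choose
  else ⟨1, 1, ⟨fun _ => g.p, 0, le_refl 0, by intro u _ v _; simp⟩⟩

lemma fillF_spec {g : Gap Z} {T : ℝ} (h : X.FillHyp g T) :
    X.FillSpec g T (X.fillF g T) := by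
  rw [fillF, dif_pos h]
  exact (X.exists_fill g T h).choose_spec

/-- Basic quantities. -/
noncomputable def dd : ℝ := dist X.x X.y

lemma hd0 : 0 < X.dd := dist_pos.mpr X.hxy

noncomputable def Λ : ℝ := X.C' * X.dd

lemma hC'1 : (1:ℝ) ≤ X.C' := le_of_lt (lt_of_le_of_lt X.hC X.hC')

lemma hΛ0 : 0 < X.Λ := mul_pos (lt_of_lt_of_le one_pos X.hC'1) X.hd0

noncomputable def T0 : ℝ := min ((X.C' - X.C) * X.dd / 4) (X.Λ / 8)

lemma hT00 : 0 < X.T0 :=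
  lt_min (div_pos (mul_pos (sub_pos.mpr X.hC') X.hd0) (by norm_num))
    (div_pos X.hΛ0 (by norm_num))

noncomputable def groot : Gap Z := ⟨0, X.Λ, X.x, X.y⟩

lemma groot_hyp : X.FillHyp X.groot X.T0 := by
  refine ⟨X.hT00, ?_, X.hx, X.hy, ?_⟩
  · show X.T0 ≤ (X.Λ - 0)/8
    rw [sub_zero]; exact min_le_right _ _
  · show X.C * dist X.x X.y + 3 * X.T0 < X.Λ - 0
    rw [sub_zero]
    have h1 : X.T0 ≤ (X.C' - X.C) * X.dd / 4 := min_le_left _ _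
    have h2 : 0 < (X.C' - X.C) * X.dd := mul_pos (sub_pos.mpr X.hC') X.hd0
    have : X.Λ = X.C * X.dd + (X.C' - X.C) * X.dd := by rw [Λ]; ring
    rw [this]
    have : dist X.x X.y = X.dd := rfl
    rw [this]
    linarith

noncomputable def rootFill : Fill Z := X.fillF X.groot X.T0

lemma rootFill_spec : X.FillSpec X.groot X.T0 X.rootFill := X.fillF_spec X.groot_hyp

/-- Canonical fill of a good gap. -/
noncomputable def gfill (g : Gap Z) : Fill Z := X.fillF g ((g.b - g.a)/8)

lemma gfill_hyp {g : Gap Z} (hg : X.GoodGap g) : X.FillHyp g ((g.b - g.a)/8) := by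
  obtain ⟨hab, hjump, hRp, hRq, _⟩ := hg
  refine ⟨by linarith, le_refl _, hRp, hRq, ?_⟩
  have h4C : (0:ℝ) < 4 * X.C := by have := X.hC0; linarith
  have h1 : X.C * dist g.p g.q ≤ (g.b - g.a)/4 := by
    have := mul_le_mul_of_nonneg_left hjump (le_of_lt X.hC0)
    calc X.C * dist g.p g.q ≤ X.C * ((g.b - g.a)/(4*X.C)) := this
      _ = (g.b - g.a)/4 := by field_simp; exact mul_inv_cancel₀ X.hC0.ne'
  linarith

lemma gfill_spec {g : Gap Z} (hg : X.GoodGap g) :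
    X.FillSpec g ((g.b - g.a)/8) (X.gfill g) := X.fillF_spec (X.gfill_hyp hg)

/-- The local model: the function on a filled gap. -/
noncomputable def lm (g : Gap Z) (Fl : Fill Z) : ℝ → Z := fun t =>
  if t < g.a + Fl.τl then g.p
  else if t < g.b then Fl.c.toFun (min (t - (g.a + Fl.τl)) Fl.c.len)
  else g.q

section LM

variable {X}
variable {g : Gap Z} {T : ℝ} {Fl : Fill Z} (S : X.FillSpec g T Fl)

include S

lemma lm_left : lm g Fl g.a = g.p := by
  rw [lm, if_pos]
  linarith [S.τl_pos]

lemma lm_a_lt_b : g.a + Fl.τl < g.b := by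
  have := S.room
  have := Fl.c.len_nonneg
  have := S.τr_pos
  linarith

lemma lm_mid_le : g.a + Fl.τl + Fl.c.len ≤ g.b - Fl.τr := by
  have := S.room; linarith

lemma lm_start : lm g Fl (g.a + Fl.τl) = Fl.c.start := by
  rw [lm, if_neg (lt_irrefl _), if_pos (lm_a_lt_b S)]
  simp [Curve.start, min_eq_left Fl.c.len_nonneg]

lemma lm_finish : lm g Fl (g.b - Fl.τr) = Fl.c.finish := by
  have h1 : g.a + Fl.τl + Fl.c.len ≤ g.b - Fl.τr := lm_mid_le S
  have hlen := Fl.c.len_nonneg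
  rw [lm, if_neg (by linarith), if_pos (by linarith [S.τr_pos])]
  rw [min_eq_right (by linarith)]
  rfl

lemma lm_right : lm g Fl g.b = g.q := by
  have := lm_a_lt_b S
  rw [lm, if_neg (by linarith), if_neg (lt_irrefl _)]

lemma lm_childL {t : ℝ} (ht : t ∈ Ioo g.a (g.a + Fl.τl)) : lm g Fl t = g.p := by
  rw [lm, if_pos ht.2]

lemma lm_childR {t : ℝ} (ht : t ∈ Ioo (g.b - Fl.τr) g.b) : lm g Fl t = Fl.c.finish := by
  have h1 := lm_mid_le S
  have hlen := Fl.c.len_nonneg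
  rw [lm, if_neg (by cases ht; push_neg; linarith), if_pos ht.2]
  rw [min_eq_right (by cases ht; linarith)]
  rfl

end LM

section LM2

variable {X : Ctx Z}
variable {g : Gap Z} {T : ℝ} {Fl : Fill Z} (S : X.FillSpec g T Fl)

lemma curve_dist_le (c : Curve Z) {u v : ℝ} (hu : u ∈ Icc (0:ℝ) c.len)
    (hv : v ∈ Icc (0:ℝ) c.len) : dist (c.toFun u) (c.toFun v) ≤ |u - v| := by
  have := c.lip.dist_le_mul u hu v hv
  simpa [Real.dist_eq] using this

include S

lemma jl' : dist g.p Fl.c.start ≤ Fl.τl := by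
  refine le_trans S.jl (le_trans ?_ (min_le_left Fl.τl Fl.τr))
  apply div_le_self (le_min (le_of_lt S.τl_pos) (le_of_lt S.τr_pos))
  have := X.hC; linarith

lemma jr' : dist Fl.c.finish g.q ≤ Fl.τr := by
  refine le_trans S.jr (le_trans ?_ (min_le_right Fl.τl Fl.τr))
  apply div_le_self (le_min (le_of_lt S.τl_pos) (le_of_lt S.τr_pos))
  have := X.hC; linarith

lemma lm_classify {s : ℝ} (hs1 : s ∈ Icc g.a g.b) (hs2 : s ∉ Ioo g.a (g.a + Fl.τl))
    (hs3 : s ∉ Ioo (g.b - Fl.τr) g.b) :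
    s = g.a ∨ (g.a + Fl.τl ≤ s ∧ s ≤ g.b - Fl.τr) ∨ s = g.b := by
  simp only [mem_Ioo, not_and, not_lt] at hs2 hs3
  obtain ⟨hsa, hsb⟩ := hs1
  rcases eq_or_lt_of_le hsa with h | h
  · exact Or.inl h.symm
  · rcases le_or_gt s (g.b - Fl.τr) with h2 | h2
    · exact Or.inr (Or.inl ⟨hs2 h, h2⟩)
    · exact Or.inr (Or.inr (le_antisymm hsb (hs3 h2)))

lemma lm_mid {s : ℝ} (h1 : g.a + Fl.τl ≤ s) (h2 : s < g.b) :
    lm g Fl s = Fl.c.toFun (min (s - (g.a + Fl.τl)) Fl.c.len) := by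
  rw [lm, if_neg (not_lt.mpr h1), if_pos h2]

lemma min_mem_Icc {s : ℝ} (h1 : g.a + Fl.τl ≤ s) :
    min (s - (g.a + Fl.τl)) Fl.c.len ∈ Icc (0:ℝ) Fl.c.len :=
  ⟨le_min (by linarith) Fl.c.len_nonneg, min_le_right _ _⟩

/-- The local model is 1-Lipschitz on the complement of the child gaps. -/
lemma lm_lip (hpq : dist g.p g.q ≤ g.b - g.a) {s t : ℝ}
    (hs1 : s ∈ Icc g.a g.b) (hs2 : s ∉ Ioo g.a (g.a + Fl.τl)) (hs3 : s ∉ Ioo (g.b - Fl.τr) g.b)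
    (ht1 : t ∈ Icc g.a g.b) (ht2 : t ∉ Ioo g.a (g.a + Fl.τl)) (ht3 : t ∉ Ioo (g.b - Fl.τr) g.b)
    (hst : s ≤ t) : dist (lm g Fl s) (lm g Fl t) ≤ t - s := by
  have hab := lm_a_lt_b S
  have hmid := lm_mid_le S
  have hlen := Fl.c.len_nonneg
  have hjl := jl' S
  have hjr := jr' S
  have hclip := fun {u v} hu hv => curve_dist_le Fl.c (u := u) (v := v) hu hv
  rcases lm_classify S hs1 hs2 hs3 with rfl | ⟨hsl, hsr⟩ | rfl
  · -- s = g.a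
    rcases lm_classify S ht1 ht2 ht3 with h | ⟨htl, htr⟩ | rfl
    · rw [h, dist_self]; linarith [ht1.1, h ▸ hst]
    · -- t mid
      rw [lm_left S, lm_mid S htl (by linarith [S.τr_pos])]
      set m := min (t - (g.a + Fl.τl)) Fl.c.len with hm
      have hm1 : m ∈ Icc (0:ℝ) Fl.c.len := min_mem_Icc S htl
      calc dist g.p (Fl.c.toFun m)
          ≤ dist g.p Fl.c.start + dist Fl.c.start (Fl.c.toFun m) := dist_triangle _ _ _
        _ ≤ Fl.τl + |0 - m| := by
            refine add_le_add hjl ?_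
            exact hclip ⟨le_refl 0, hlen⟩ hm1
        _ ≤ Fl.τl + m := by
            rw [zero_sub, abs_neg, abs_of_nonneg hm1.1]
        _ ≤ Fl.τl + (t - (g.a + Fl.τl)) := by
            have : m ≤ t - (g.a + Fl.τl) := min_le_left _ _
            linarith
        _ = t - g.a := by ring
    · -- t = g.b
      rw [lm_left S, lm_right S]; exact hpq
  · -- s mid
    rcases lm_classify S ht1 ht2 ht3 with rfl | ⟨htl, htr⟩ | rfl
    · linarith [S.τl_pos]
    · -- both mid
      rw [lm_mid S hsl (by linarith [S.τr_pos]), lm_mid S htl (by linarith [S.τr_pos])]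
      set ms := min (s - (g.a + Fl.τl)) Fl.c.len with hms
      set mt := min (t - (g.a + Fl.τl)) Fl.c.len with hmt
      have h1 : ms ≤ mt := min_le_min (by linarith) (le_refl _)
      have h2 : mt ≤ ms + (t - s) := by
        have : mt ≤ min (s - (g.a + Fl.τl) + (t - s)) (Fl.c.len + (t - s)) :=
          min_le_min (by linarith) (by linarith)
        have h2' : (s - (g.a + Fl.τl) + (t - s)) ⊓ (Fl.c.len + (t - s)) = ms + (t - s) :=
          min_add_add_right _ _ _
        linarith [h2' ▸ this]
      calc dist (Fl.c.toFun ms) (Fl.c.toFun mt) ≤ |ms - mt| :=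
            hclip (min_mem_Icc S hsl) (min_mem_Icc S htl)
        _ ≤ t - s := by rw [abs_sub_comm, abs_of_nonneg (by linarith)]; linarith
    · -- s mid, t = g.b
      rw [lm_mid S hsl (by linarith [S.τr_pos]), lm_right S]
      set ms := min (s - (g.a + Fl.τl)) Fl.c.len with hms
      have key : Fl.c.len - ms + Fl.τr ≤ g.b - s := by
        rcases min_cases (s - (g.a + Fl.τl)) Fl.c.len with ⟨he, hle⟩ | ⟨he, hle⟩
        · rw [hms, he]; linarith [S.room]
        · rw [hms, he]; linarith
      calc dist (Fl.c.toFun ms) g.q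
          ≤ dist (Fl.c.toFun ms) Fl.c.finish + dist Fl.c.finish g.q := dist_triangle _ _ _
        _ ≤ |ms - Fl.c.len| + Fl.τr := by
            refine add_le_add (hclip (min_mem_Icc S hsl) ⟨hlen, le_refl _⟩) hjr
        _ = Fl.c.len - ms + Fl.τr := by
            rw [abs_sub_comm, abs_of_nonneg (by linarith [min_le_right (s - (g.a + Fl.τl)) Fl.c.len])]
        _ ≤ g.b - s := key
  · -- s = g.b
    have : t = g.b := le_antisymm ht1.2 hst
    rw [this, dist_self]; linarith

end LM2

section LM3

variable {X : Ctx Z}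
variable {g : Gap Z} {T : ℝ} {Fl : Fill Z} (S : X.FillSpec g T Fl)

include S

/-- Everything inside the filled gap stays near `g.p`. -/
lemma lm_close {t : ℝ} (ht : t ∈ Ioo g.a g.b) : dist g.p (lm g Fl t) ≤ g.b - g.a := by
  have hlen := Fl.c.len_nonneg
  have hroom := S.room
  have hjl := jl' S
  by_cases h : t < g.a + Fl.τl
  · rw [lm, if_pos h, dist_self]; linarith [S.τl_pos, S.τr_pos]
  · push_neg at h
    rw [lm_mid S h ht.2]
    set m := min (t - (g.a + Fl.τl)) Fl.c.len with hm
    have hm1 : m ∈ Icc (0:ℝ) Fl.c.len := min_mem_Icc S h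
    calc dist g.p (Fl.c.toFun m)
        ≤ dist g.p Fl.c.start + dist Fl.c.start (Fl.c.toFun m) := dist_triangle _ _ _
      _ ≤ Fl.τl + |0 - m| := add_le_add hjl
          (curve_dist_le Fl.c ⟨le_refl 0, hlen⟩ hm1)
      _ = Fl.τl + m := by rw [zero_sub, abs_neg, abs_of_nonneg hm1.1]
      _ ≤ g.b - g.a := by linarith [hm1.2, S.τr_pos]

/-- Points of the filled gap (outside the child gaps) that land in `N`. -/
lemma lm_bad {t : ℝ} (ht1 : t ∈ Icc g.a g.b) (ht2 : t ∉ Ioo g.a (g.a + Fl.τl))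
    (ht3 : t ∉ Ioo (g.b - Fl.τr) g.b) (htN : lm g Fl t ∈ X.N) :
    t = g.a ∨ t = g.b ∨
      (t - (g.a + Fl.τl) ∈ {r : ℝ | r ∈ Icc (0:ℝ) Fl.c.len ∧ Fl.c.toFun r ∈ X.N}) := by
  rcases lm_classify S ht1 ht2 ht3 with rfl | ⟨htl, htr⟩ | rfl
  · exact Or.inl rfl
  · refine Or.inr (Or.inr ?_)
    rw [lm_mid S htl (by linarith [S.τr_pos])] at htN
    rcases min_cases (t - (g.a + Fl.τl)) Fl.c.len with ⟨he, hle⟩ | ⟨he, hle⟩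
    · rw [he] at htN
      exact ⟨⟨by linarith, hle⟩, htN⟩
    · rw [he] at htN
      exact absurd htN S.fN
  · exact Or.inr (Or.inl rfl)

end LM3

/-- Children of a gap. -/
noncomputable def childL (g : Gap Z) : Gap Z :=
  ⟨g.a, g.a + (X.gfill g).τl, g.p, (X.gfill g).c.start⟩

noncomputable def childR (g : Gap Z) : Gap Z :=
  ⟨g.b - (X.gfill g).τr, g.b, (X.gfill g).c.finish, g.q⟩

lemma good_childL {g : Gap Z} (hg : X.GoodGap g) : X.GoodGap (X.childL g) := by
  have S := X.gfill_spec hg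
  have h4C : (0:ℝ) < 4 * X.C := by have := X.hC0; linarith
  have h1 : (X.childL g).b - (X.childL g).a = (X.gfill g).τl := by
    show g.a + (X.gfill g).τl - g.a = _; ring
  refine ⟨?_, ?_, hg.2.2.1, S.sR, Or.inl ?_⟩
  · rw [h1]; exact S.τl_pos
  · show dist g.p (X.gfill g).c.start ≤ _
    rw [h1]
    exact le_trans S.jl ((div_le_div_iff_of_pos_right h4C).mpr (min_le_left _ _))
  · show IsComplete (Metric.closedBall g.p _)
    rw [h1]; exact S.complL

lemma good_childR {g : Gap Z} (hg : X.GoodGap g) : X.GoodGap (X.childR g) := by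
  have S := X.gfill_spec hg
  have h4C : (0:ℝ) < 4 * X.C := by have := X.hC0; linarith
  have h1 : (X.childR g).b - (X.childR g).a = (X.gfill g).τr := by
    show g.b - (g.b - (X.gfill g).τr) = _; ring
  refine ⟨?_, ?_, S.fR, hg.2.2.2.1, Or.inr ?_⟩
  · rw [h1]; exact S.τr_pos
  · show dist (X.gfill g).c.finish g.q ≤ _
    rw [h1]
    exact le_trans S.jr ((div_le_div_iff_of_pos_right h4C).mpr (min_le_right _ _))
  · show IsComplete (Metric.closedBall g.q _)
    rw [h1]; exact S.complR

lemma childL_Ioo {g : Gap Z} (hg : X.GoodGap g) :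
    Ioo (X.childL g).a (X.childL g).b ⊆ Ioo g.a g.b := by
  have S := X.gfill_spec hg
  apply Ioo_subset_Ioo (le_refl _)
  have := lm_a_lt_b S; exact le_of_lt this

lemma childR_Ioo {g : Gap Z} (hg : X.GoodGap g) :
    Ioo (X.childR g).a (X.childR g).b ⊆ Ioo g.a g.b := by
  have S := X.gfill_spec hg
  refine Ioo_subset_Ioo ?_ (le_refl _)
  have h := S.room
  have h2 := S.τl_pos
  have h3 := (X.gfill g).c.len_nonneg
  show g.a ≤ g.b - (X.gfill g).τr
  linarith

lemma childL_Icc {g : Gap Z} (hg : X.GoodGap g) :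
    Icc (X.childL g).a (X.childL g).b ⊆ Icc g.a g.b := by
  have S := X.gfill_spec hg
  exact Icc_subset_Icc (le_refl _) (le_of_lt (lm_a_lt_b S))

lemma childR_Icc {g : Gap Z} (hg : X.GoodGap g) :
    Icc (X.childR g).a (X.childR g).b ⊆ Icc g.a g.b := by
  have S := X.gfill_spec hg
  refine Icc_subset_Icc ?_ (le_refl _)
  have h := S.room
  have h2 := S.τl_pos
  have h3 := (X.gfill g).c.len_nonneg
  show g.a ≤ g.b - (X.gfill g).τr
  linarith

/-- The stage-`k` list of gaps. -/
noncomputable def Gaps : ℕ → List (Gap Z)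
  | 0 => [⟨0, X.rootFill.τl, X.x, X.rootFill.c.start⟩,
          ⟨X.Λ - X.rootFill.τr, X.Λ, X.rootFill.c.finish, X.y⟩]
  | (k+1) => (Gaps k).flatMap (fun g => [X.childL g, X.childR g])

/-- The union of the (open) stage-`k` gaps. -/
def GapInt (k : ℕ) : Set ℝ := {t | ∃ g ∈ X.Gaps k, t ∈ Ioo g.a g.b}

/-- The stage-`k` approximating function. -/
noncomputable def FF : ℕ → ℝ → Z
  | 0 => lm X.groot X.rootFill
  | (k+1) => fun t =>
      if h : ∃ g ∈ X.Gaps k, t ∈ Ioo g.a g.b then lm h.choose (X.gfill h.choose) t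
      else FF k t

lemma mem_gaps_succ {k : ℕ} {g' : Gap Z} :
    g' ∈ X.Gaps (k+1) ↔ ∃ g ∈ X.Gaps k, g' = X.childL g ∨ g' = X.childR g := by
  simp only [Gaps, List.mem_flatMap, List.mem_cons, List.mem_singleton, List.not_mem_nil, or_false]

lemma FF_stable {k : ℕ} {t : ℝ} (h : t ∉ X.GapInt k) : X.FF (k+1) t = X.FF k t := by
  simp only [FF]
  rw [dif_neg]
  exact h

/-- The full stage invariant. -/
structure Inv (k : ℕ) : Prop where
  good : ∀ g ∈ X.Gaps k, X.GoodGap g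
  uniq : ∀ g₁ ∈ X.Gaps k, ∀ g₂ ∈ X.Gaps k, ∀ t : ℝ,
    t ∈ Icc g₁.a g₁.b → t ∈ Icc g₂.a g₂.b → g₁ = g₂
  sub : ∀ g ∈ X.Gaps k, 0 ≤ g.a ∧ g.b ≤ X.Λ
  maxlen : ∀ g ∈ X.Gaps k, g.b - g.a ≤ X.T0 / 8^k
  sumlen : ((X.Gaps k).map (fun g => g.b - g.a)).sum ≤ 2 * X.T0 / 4^k
  endval : ∀ g ∈ X.Gaps k, X.FF k g.a = g.p ∧ X.FF k g.b = g.q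
  intval : ∀ g ∈ X.Gaps k, ∀ t ∈ Ioo g.a g.b, X.FF k t = g.p
  lipd : ∀ s t : ℝ, s ∈ Icc 0 X.Λ → t ∈ Icc 0 X.Λ → s ∉ X.GapInt k → t ∉ X.GapInt k →
    s ≤ t → dist (X.FF k s) (X.FF k t) ≤ t - s

variable {X}

lemma good_len_pos {g : Gap Z} (hg : X.GoodGap g) : g.a < g.b := by
  have := hg.1; linarith

lemma good_dist_le {g : Gap Z} (hg : X.GoodGap g) : dist g.p g.q ≤ g.b - g.a := by
  refine le_trans hg.2.1 ?_
  apply div_le_self (le_of_lt hg.1)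
  have := X.hC; linarith

/-- Gap endpoints are not in the union of open gaps. -/
lemma notin_gapint {k : ℕ} (I : X.Inv k) {g : Gap Z} (hg : g ∈ X.Gaps k) :
    g.a ∉ X.GapInt k ∧ g.b ∉ X.GapInt k := by
  have hab := good_len_pos (I.good g hg)
  constructor
  · rintro ⟨g₂, hg₂, ht⟩
    have heq : g₂ = g := I.uniq g₂ hg₂ g hg g.a (Ioo_subset_Icc_self ht)
      ⟨le_refl _, le_of_lt hab⟩
    rw [heq] at ht
    exact lt_irrefl _ ht.1
  · rintro ⟨g₂, hg₂, ht⟩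
    have heq : g₂ = g := I.uniq g₂ hg₂ g hg g.b (Ioo_subset_Icc_self ht)
      ⟨le_of_lt hab, le_refl _⟩
    rw [heq] at ht
    exact lt_irrefl _ ht.2

lemma gapint_succ_subset {k : ℕ} (I : X.Inv k) : X.GapInt (k+1) ⊆ X.GapInt k := by
  rintro t ⟨g', hg', ht⟩
  rw [X.mem_gaps_succ] at hg'
  obtain ⟨g, hg, h | h⟩ := hg'
  · exact ⟨g, hg, X.childL_Ioo (I.good g hg) (h ▸ ht)⟩
  · exact ⟨g, hg, X.childR_Ioo (I.good g hg) (h ▸ ht)⟩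

/-- Value of `FF (k+1)` inside a stage-`k` gap. -/
lemma FF_gap {k : ℕ} (I : X.Inv k) {g : Gap Z} (hg : g ∈ X.Gaps k) {t : ℝ}
    (ht : t ∈ Ioo g.a g.b) : X.FF (k+1) t = lm g (X.gfill g) t := by
  have hex : ∃ g' ∈ X.Gaps k, t ∈ Ioo g'.a g'.b := ⟨g, hg, ht⟩
  simp only [FF]
  rw [dif_pos hex]
  obtain ⟨hmem, hmem2⟩ := hex.choose_spec
  have : hex.choose = g :=
    I.uniq _ hmem g hg t (Ioo_subset_Icc_self hmem2) (Ioo_subset_Icc_self ht)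
  rw [this]

/-- Children membership in `Gaps (k+1)`. -/
lemma childL_mem {k : ℕ} {g : Gap Z} (hg : g ∈ X.Gaps k) : X.childL g ∈ X.Gaps (k+1) :=
  X.mem_gaps_succ.mpr ⟨g, hg, Or.inl rfl⟩

lemma childR_mem {k : ℕ} {g : Gap Z} (hg : g ∈ X.Gaps k) : X.childR g ∈ X.Gaps (k+1) :=
  X.mem_gaps_succ.mpr ⟨g, hg, Or.inr rfl⟩

/-- Value and position of a point of a stage-`k` gap outside stage-`(k+1)` gaps. -/
lemma step_val {k : ℕ} (I : X.Inv k) {g : Gap Z} (hg : g ∈ X.Gaps k) {s : ℝ}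
    (hs : s ∈ Icc g.a g.b) (hs' : s ∉ X.GapInt (k+1)) :
    X.FF (k+1) s = lm g (X.gfill g) s ∧
      s ∉ Ioo g.a (g.a + (X.gfill g).τl) ∧ s ∉ Ioo (g.b - (X.gfill g).τr) g.b := by
  have S := X.gfill_spec (I.good g hg)
  have hL : s ∉ Ioo g.a (g.a + (X.gfill g).τl) := fun hin =>
    hs' ⟨X.childL g, childL_mem hg, hin⟩
  have hR : s ∉ Ioo (g.b - (X.gfill g).τr) g.b := fun hin =>
    hs' ⟨X.childR g, childR_mem hg, hin⟩
  refine ⟨?_, hL, hR⟩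
  rcases eq_or_lt_of_le hs.1 with h | h
  · rw [← h, X.FF_stable (notin_gapint I hg).1, (I.endval g hg).1, (lm_left S)]
  · rcases eq_or_lt_of_le hs.2 with h2 | h2
    · rw [h2, X.FF_stable (notin_gapint I hg).2, (I.endval g hg).2, (lm_right S)]
    · exact FF_gap I hg ⟨h, h2⟩

/-- The local Lipschitz estimate at stage `k+1` inside a stage-`k` gap. -/
lemma step_local {k : ℕ} (I : X.Inv k) {g : Gap Z} (hg : g ∈ X.Gaps k) {s t : ℝ}
    (hs : s ∈ Icc g.a g.b) (ht : t ∈ Icc g.a g.b)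
    (hs' : s ∉ X.GapInt (k+1)) (ht' : t ∉ X.GapInt (k+1)) (hst : s ≤ t) :
    dist (X.FF (k+1) s) (X.FF (k+1) t) ≤ t - s := by
  have S := X.gfill_spec (I.good g hg)
  obtain ⟨hv1, hp1, hp2⟩ := step_val I hg hs hs'
  obtain ⟨hw1, hq1, hq2⟩ := step_val I hg ht ht'
  rw [hv1, hw1]
  exact lm_lip S (good_dist_le (I.good g hg)) hs hp1 hp2 ht hq1 hq2 hst

lemma gaps0_memA : (⟨0, X.rootFill.τl, X.x, X.rootFill.c.start⟩ : Gap Z) ∈ X.Gaps 0 := by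
  simp [Gaps]

lemma gaps0_memB : (⟨X.Λ - X.rootFill.τr, X.Λ, X.rootFill.c.finish, X.y⟩ : Gap Z) ∈ X.Gaps 0 := by
  simp [Gaps]

lemma inv_zero : X.Inv 0 := by
  have S := X.rootFill_spec
  have hroom0 := S.room
  have hlen := X.rootFill.c.len_nonneg
  have hτl := S.τl_pos
  have hτr := S.τr_pos
  have h4C : (0:ℝ) < 4 * X.C := by have := X.hC0; linarith
  have hT0Λ : X.T0 ≤ X.Λ / 8 := min_le_right _ _
  have hΛ := X.hΛ0
  have hmem : ∀ g ∈ X.Gaps 0,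
      g = (⟨0, X.rootFill.τl, X.x, X.rootFill.c.start⟩ : Gap Z) ∨
      g = (⟨X.Λ - X.rootFill.τr, X.Λ, X.rootFill.c.finish, X.y⟩ : Gap Z) := by
    intro g hgm
    simpa [Gaps] using hgm
  have hroomΛ : X.rootFill.τl + X.rootFill.c.len + X.rootFill.τr < X.Λ := by
    have : X.groot.b - X.groot.a = X.Λ := by simp [groot]
    rw [← this]; exact S.room
  have hτlT : X.rootFill.τl ≤ X.T0 := S.τl_le
  have hτrT : X.rootFill.τr ≤ X.T0 := S.τr_le
  constructor
  -- good
  · intro g hgm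
    rcases hmem g hgm with rfl | rfl
    · refine ⟨by simpa using hτl, ?_, X.hx, S.sR, Or.inl ?_⟩
      · show dist X.x X.rootFill.c.start ≤ (X.rootFill.τl - 0)/(4*X.C)
        rw [sub_zero]
        exact le_trans S.jl ((div_le_div_iff_of_pos_right h4C).mpr (min_le_left _ _))
      · show IsComplete (Metric.closedBall X.x (X.rootFill.τl - 0))
        rw [sub_zero]
        exact S.complL
    · refine ⟨by simp; linarith, ?_, S.fR, X.hy, Or.inr ?_⟩
      · show dist X.rootFill.c.finish X.y ≤ (X.Λ - (X.Λ - X.rootFill.τr))/(4*X.C)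
        have he : X.Λ - (X.Λ - X.rootFill.τr) = X.rootFill.τr := by ring
        rw [he]
        exact le_trans S.jr ((div_le_div_iff_of_pos_right h4C).mpr (min_le_right _ _))
      · show IsComplete (Metric.closedBall X.y (X.Λ - (X.Λ - X.rootFill.τr)))
        have he : X.Λ - (X.Λ - X.rootFill.τr) = X.rootFill.τr := by ring
        rw [he]
        exact S.complR
  -- uniq
  · intro g₁ hg₁ g₂ hg₂ t ht₁ ht₂
    rcases hmem g₁ hg₁ with rfl | rfl <;> rcases hmem g₂ hg₂ with rfl | rfl
    · rfl
    · exfalso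
      simp only [mem_Icc] at ht₁ ht₂
      linarith [ht₁.2, ht₂.1]
    · exfalso
      simp only [mem_Icc] at ht₁ ht₂
      linarith [ht₂.2, ht₁.1]
    · rfl
  -- sub
  · intro g hgm
    rcases hmem g hgm with rfl | rfl
    · exact ⟨le_refl _, by show X.rootFill.τl ≤ X.Λ; linarith⟩
    · exact ⟨by show (0:ℝ) ≤ X.Λ - X.rootFill.τr; linarith, le_refl _⟩
  -- maxlen
  · intro g hgm
    rcases hmem g hgm with rfl | rfl
    · show X.rootFill.τl - 0 ≤ X.T0 / 8^0
      simp; linarith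
    · show X.Λ - (X.Λ - X.rootFill.τr) ≤ X.T0 / 8^0
      simp; linarith
  -- sumlen
  · show ((X.Gaps 0).map fun g => g.b - g.a).sum ≤ 2 * X.T0 / 4^0
    simp [Gaps]
    linarith
  -- endval
  · intro g hgm
    rcases hmem g hgm with rfl | rfl
    · constructor
      · show X.FF 0 0 = X.x
        have := lm_left S
        simpa [FF, groot] using this
      · show X.FF 0 X.rootFill.τl = X.rootFill.c.start
        have := lm_start S
        simpa [FF, groot] using this
    · constructor
      · show X.FF 0 (X.Λ - X.rootFill.τr) = X.rootFill.c.finish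
        have := lm_finish S
        simpa [FF, groot] using this
      · show X.FF 0 X.Λ = X.y
        have := lm_right S
        simpa [FF, groot] using this
  -- intval
  · intro g hgm t ht
    rcases hmem g hgm with rfl | rfl
    · show X.FF 0 t = X.x
      have : t ∈ Ioo X.groot.a (X.groot.a + X.rootFill.τl) := by
        simpa [groot] using ht
      have := lm_childL S this
      simpa [FF, groot] using this
    · show X.FF 0 t = X.rootFill.c.finish
      have hh : t ∈ Ioo (X.groot.b - X.rootFill.τr) X.groot.b := by
        simpa [groot] using ht
      have := lm_childR S hh
      simpa [FF, groot] using this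
  -- lipd
  · intro s t hs ht hs' ht' hst
    have hpq : dist X.groot.p X.groot.q ≤ X.groot.b - X.groot.a := by
      show dist X.x X.y ≤ X.Λ - 0
      rw [sub_zero, Λ]
      have h1 := X.hC'1
      have h2 : dist X.x X.y = X.dd := rfl
      nlinarith [X.hd0]
    have hsI : s ∈ Icc X.groot.a X.groot.b := by simpa [groot] using hs
    have htI : t ∈ Icc X.groot.a X.groot.b := by simpa [groot] using ht
    have hs2 : s ∉ Ioo X.groot.a (X.groot.a + X.rootFill.τl) := by
      intro hin
      exact hs' ⟨_, X.gaps0_memA, by simpa [groot] using hin⟩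
    have hs3 : s ∉ Ioo (X.groot.b - X.rootFill.τr) X.groot.b := by
      intro hin
      exact hs' ⟨_, X.gaps0_memB, by simpa [groot] using hin⟩
    have ht2 : t ∉ Ioo X.groot.a (X.groot.a + X.rootFill.τl) := by
      intro hin
      exact ht' ⟨_, X.gaps0_memA, by simpa [groot] using hin⟩
    have ht3 : t ∉ Ioo (X.groot.b - X.rootFill.τr) X.groot.b := by
      intro hin
      exact ht' ⟨_, X.gaps0_memB, by simpa [groot] using hin⟩
    have := lm_lip S hpq hsI hs2 hs3 htI ht2 ht3 hst
    simpa [FF] using this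

lemma notin_gapint_succ {k : ℕ} (I : X.Inv k) {g : Gap Z} (hg : g ∈ X.Gaps k) :
    g.a ∉ X.GapInt (k+1) ∧ g.b ∉ X.GapInt (k+1) :=
  ⟨fun hin => (notin_gapint I hg).1 (gapint_succ_subset I hin),
   fun hin => (notin_gapint I hg).2 (gapint_succ_subset I hin)⟩

lemma gap_mem_Icc {k : ℕ} (I : X.Inv k) {g : Gap Z} (hg : g ∈ X.Gaps k) :
    g.a ∈ Icc (0:ℝ) X.Λ ∧ g.b ∈ Icc (0:ℝ) X.Λ := by
  have h1 := I.sub g hg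
  have h2 := good_len_pos (I.good g hg)
  exact ⟨⟨h1.1, by linarith [h1.2]⟩, ⟨by linarith [h1.1], h1.2⟩⟩

lemma inv_succ {k : ℕ} (I : X.Inv k) : X.Inv (k+1) := by
  constructor
  -- good
  · intro g' hg'
    rw [X.mem_gaps_succ] at hg'
    obtain ⟨g, hg, rfl | rfl⟩ := hg'
    · exact X.good_childL (I.good g hg)
    · exact X.good_childR (I.good g hg)
  -- uniq
  · intro g₁' hg₁' g₂' hg₂' t ht₁ ht₂
    rw [X.mem_gaps_succ] at hg₁' hg₂'
    obtain ⟨g₁, hg₁, hc₁⟩ := hg₁'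
    obtain ⟨g₂, hg₂, hc₂⟩ := hg₂'
    have hIcc₁ : Icc g₁'.a g₁'.b ⊆ Icc g₁.a g₁.b := by
      rcases hc₁ with rfl | rfl
      · exact X.childL_Icc (I.good g₁ hg₁)
      · exact X.childR_Icc (I.good g₁ hg₁)
    have hIcc₂ : Icc g₂'.a g₂'.b ⊆ Icc g₂.a g₂.b := by
      rcases hc₂ with rfl | rfl
      · exact X.childL_Icc (I.good g₂ hg₂)
      · exact X.childR_Icc (I.good g₂ hg₂)
    have hpar : g₁ = g₂ := I.uniq g₁ hg₁ g₂ hg₂ t (hIcc₁ ht₁) (hIcc₂ ht₂)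
    subst hpar
    have S := X.gfill_spec (I.good g₁ hg₁)
    have hlen := (X.gfill g₁).c.len_nonneg
    have hroom := S.room
    rcases hc₁ with rfl | rfl <;> rcases hc₂ with rfl | rfl
    · rfl
    · exfalso
      have h1 : t ≤ g₁.a + (X.gfill g₁).τl := ht₁.2
      have h2 : g₁.b - (X.gfill g₁).τr ≤ t := ht₂.1
      linarith
    · exfalso
      have h1 : t ≤ g₁.a + (X.gfill g₁).τl := ht₂.2
      have h2 : g₁.b - (X.gfill g₁).τr ≤ t := ht₁.1
      linarith
    · rfl
  -- sub
  · intro g' hg'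
    rw [X.mem_gaps_succ] at hg'
    obtain ⟨g, hg, rfl | rfl⟩ := hg'
    · have S := X.gfill_spec (I.good g hg)
      exact ⟨(I.sub g hg).1, le_trans (le_of_lt (lm_a_lt_b S)) (I.sub g hg).2⟩
    · have S := X.gfill_spec (I.good g hg)
      have hroom := S.room
      have hlen := (X.gfill g).c.len_nonneg
      have h1 := (I.sub g hg).1
      have h2 := S.τl_pos
      refine ⟨?_, (I.sub g hg).2⟩
      show (0:ℝ) ≤ g.b - (X.gfill g).τr
      linarith
  -- maxlen
  · intro g' hg'
    rw [X.mem_gaps_succ] at hg'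
    obtain ⟨g, hg, rfl | rfl⟩ := hg'
    · have S := X.gfill_spec (I.good g hg)
      have h1 : (X.gfill g).τl ≤ (g.b - g.a)/8 := S.τl_le
      have h2 := I.maxlen g hg
      have h3 : X.T0 / 8^(k+1) = (X.T0 / 8^k)/8 := by
        rw [pow_succ, ← div_div]
      show g.a + (X.gfill g).τl - g.a ≤ X.T0 / 8^(k+1)
      rw [h3]
      have : (g.b - g.a)/8 ≤ (X.T0/8^k)/8 := by linarith
      linarith
    · have S := X.gfill_spec (I.good g hg)
      have h1 : (X.gfill g).τr ≤ (g.b - g.a)/8 := S.τr_le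
      have h2 := I.maxlen g hg
      have h3 : X.T0 / 8^(k+1) = (X.T0 / 8^k)/8 := by
        rw [pow_succ, ← div_div]
      show g.b - (g.b - (X.gfill g).τr) ≤ X.T0 / 8^(k+1)
      rw [h3]
      have : (g.b - g.a)/8 ≤ (X.T0/8^k)/8 := by linarith
      linarith
  -- sumlen
  · have key : ∀ l : List (Gap Z), (∀ g ∈ l, X.GoodGap g) →
        (((l.flatMap fun g => [X.childL g, X.childR g]).map fun g => g.b - g.a).sum ≤
          ((l.map fun g => g.b - g.a).sum) / 4) := by
      intro l
      induction l with
      | nil => intro _; simp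
      | cons a l ih =>
        intro hgood
        have ha := hgood a (by simp)
        have S := X.gfill_spec ha
        have hrest := ih (fun g hgm => hgood g (by simp [hgm]))
        simp only [List.flatMap_cons, List.map_append, List.sum_append, List.map_cons,
          List.sum_cons, List.map_nil, List.sum_nil]
        have h1 : (X.childL a).b - (X.childL a).a = (X.gfill a).τl := by
          show a.a + _ - a.a = _; ring
        have h2 : (X.childR a).b - (X.childR a).a = (X.gfill a).τr := by
          show a.b - (a.b - _) = _; ring
        have h3 : (X.gfill a).τl ≤ (a.b - a.a)/8 := S.τl_le
        have h4 : (X.gfill a).τr ≤ (a.b - a.a)/8 := S.τr_le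
        rw [h1, h2]
        linarith
    have h5 := key (X.Gaps k) I.good
    have h6 := I.sumlen
    have h7 : 2 * X.T0 / 4^(k+1) = (2 * X.T0 / 4^k)/4 := by
      rw [pow_succ, ← div_div]
    show (((X.Gaps k).flatMap fun g => [X.childL g, X.childR g]).map fun g => g.b - g.a).sum ≤
      2 * X.T0 / 4^(k+1)
    rw [h7]
    linarith
  -- endval
  · intro g' hg'
    rw [X.mem_gaps_succ] at hg'
    obtain ⟨g, hg, rfl | rfl⟩ := hg'
    · have S := X.gfill_spec (I.good g hg)
      constructor
      · show X.FF (k+1) g.a = g.p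
        rw [X.FF_stable (notin_gapint I hg).1]
        exact (I.endval g hg).1
      · show X.FF (k+1) (g.a + (X.gfill g).τl) = (X.gfill g).c.start
        have hIoo : g.a + (X.gfill g).τl ∈ Ioo g.a g.b :=
          ⟨by linarith [S.τl_pos], lm_a_lt_b S⟩
        rw [FF_gap I hg hIoo]
        exact lm_start S
    · have S := X.gfill_spec (I.good g hg)
      have hroom := S.room
      have hlen := (X.gfill g).c.len_nonneg
      constructor
      · show X.FF (k+1) (g.b - (X.gfill g).τr) = (X.gfill g).c.finish
        have hIoo : g.b - (X.gfill g).τr ∈ Ioo g.a g.b :=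
          ⟨by linarith [S.τl_pos], by linarith [S.τr_pos]⟩
        rw [FF_gap I hg hIoo]
        exact lm_finish S
      · show X.FF (k+1) g.b = g.q
        rw [X.FF_stable (notin_gapint I hg).2]
        exact (I.endval g hg).2
  -- intval
  · intro g' hg' t ht
    rw [X.mem_gaps_succ] at hg'
    obtain ⟨g, hg, rfl | rfl⟩ := hg'
    · have S := X.gfill_spec (I.good g hg)
      show X.FF (k+1) t = g.p
      rw [FF_gap I hg (X.childL_Ioo (I.good g hg) ht)]
      exact lm_childL S ht
    · have S := X.gfill_spec (I.good g hg)
      show X.FF (k+1) t = (X.gfill g).c.finish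
      rw [FF_gap I hg (X.childR_Ioo (I.good g hg) ht)]
      exact lm_childR S ht
  -- lipd
  · intro s t hs ht hs' ht' hst
    by_cases hsk : s ∈ X.GapInt k <;> by_cases htk : t ∈ X.GapInt k
    · -- both inside stage-k gaps
      obtain ⟨g₁, hg₁, hsIoo⟩ := hsk
      obtain ⟨g₂, hg₂, htIoo⟩ := htk
      by_cases hlt : t < g₁.b
      · have hpar : g₂ = g₁ := I.uniq g₂ hg₂ g₁ hg₁ t (Ioo_subset_Icc_self htIoo)
          ⟨le_of_lt (lt_of_lt_of_le hsIoo.1 hst), le_of_lt hlt⟩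
        subst hpar
        exact step_local I hg₁ (Ioo_subset_Icc_self hsIoo) (Ioo_subset_Icc_self htIoo)
          hs' ht' hst
      · push_neg at hlt
        have hord : g₁.b ≤ g₂.a := by
          by_contra hcon
          push_neg at hcon
          have hpar : g₁ = g₂ := I.uniq g₁ hg₁ g₂ hg₂ g₁.b
            ⟨le_of_lt (good_len_pos (I.good g₁ hg₁)), le_refl _⟩
            ⟨le_of_lt hcon, le_of_lt (lt_of_le_of_lt hlt htIoo.2)⟩
          rw [hpar] at hlt
          exact absurd htIoo.2 (not_lt.mpr hlt)
        have h1 : dist (X.FF (k+1) s) (X.FF (k+1) g₁.b) ≤ g₁.b - s :=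
          step_local I hg₁ (Ioo_subset_Icc_self hsIoo)
            ⟨le_of_lt (good_len_pos (I.good g₁ hg₁)), le_refl _⟩
            hs' (notin_gapint_succ I hg₁).2 (le_of_lt hsIoo.2)
        have h3 : dist (X.FF (k+1) g₂.a) (X.FF (k+1) t) ≤ t - g₂.a :=
          step_local I hg₂ ⟨le_refl _, le_of_lt (good_len_pos (I.good g₂ hg₂))⟩
            (Ioo_subset_Icc_self htIoo) (notin_gapint_succ I hg₂).1 ht' (le_of_lt htIoo.1)
        have h2 : dist (X.FF (k+1) g₁.b) (X.FF (k+1) g₂.a) ≤ g₂.a - g₁.b := by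
          rw [X.FF_stable (notin_gapint I hg₁).2, X.FF_stable (notin_gapint I hg₂).1]
          exact I.lipd g₁.b g₂.a (gap_mem_Icc I hg₁).2 (gap_mem_Icc I hg₂).1
            (notin_gapint I hg₁).2 (notin_gapint I hg₂).1 hord
        have h4 := dist_triangle4 (X.FF (k+1) s) (X.FF (k+1) g₁.b)
          (X.FF (k+1) g₂.a) (X.FF (k+1) t)
        linarith
    · -- s in a stage-k gap, t not
      obtain ⟨g₁, hg₁, hsIoo⟩ := hsk
      have hbt : g₁.b ≤ t := by
        by_contra hcon
        push_neg at hcon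
        exact htk ⟨g₁, hg₁, ⟨lt_of_lt_of_le hsIoo.1 hst, hcon⟩⟩
      have h1 : dist (X.FF (k+1) s) (X.FF (k+1) g₁.b) ≤ g₁.b - s :=
        step_local I hg₁ (Ioo_subset_Icc_self hsIoo)
          ⟨le_of_lt (good_len_pos (I.good g₁ hg₁)), le_refl _⟩
          hs' (notin_gapint_succ I hg₁).2 (le_of_lt hsIoo.2)
      have h2 : dist (X.FF (k+1) g₁.b) (X.FF (k+1) t) ≤ t - g₁.b := by
        rw [X.FF_stable (notin_gapint I hg₁).2, X.FF_stable htk]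
        exact I.lipd g₁.b t (gap_mem_Icc I hg₁).2 ht (notin_gapint I hg₁).2 htk hbt
      have h3 := dist_triangle (X.FF (k+1) s) (X.FF (k+1) g₁.b) (X.FF (k+1) t)
      linarith
    · -- t in a stage-k gap, s not
      obtain ⟨g₂, hg₂, htIoo⟩ := htk
      have hsa : s ≤ g₂.a := by
        by_contra hcon
        push_neg at hcon
        exact hsk ⟨g₂, hg₂, ⟨hcon, lt_of_le_of_lt hst htIoo.2⟩⟩
      have h1 : dist (X.FF (k+1) s) (X.FF (k+1) g₂.a) ≤ g₂.a - s := by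
        rw [X.FF_stable hsk, X.FF_stable (notin_gapint I hg₂).1]
        exact I.lipd s g₂.a hs (gap_mem_Icc I hg₂).1 hsk (notin_gapint I hg₂).1 hsa
      have h2 : dist (X.FF (k+1) g₂.a) (X.FF (k+1) t) ≤ t - g₂.a :=
        step_local I hg₂ ⟨le_refl _, le_of_lt (good_len_pos (I.good g₂ hg₂))⟩
          (Ioo_subset_Icc_self htIoo) (notin_gapint_succ I hg₂).1 ht' (le_of_lt htIoo.1)
      have h3 := dist_triangle (X.FF (k+1) s) (X.FF (k+1) g₂.a) (X.FF (k+1) t)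
      linarith
    · -- neither
      rw [X.FF_stable hsk, X.FF_stable htk]
      exact I.lipd s t hs ht hsk htk hst

lemma inv_all : ∀ k, X.Inv k := by
  intro k
  induction k with
  | zero => exact X.inv_zero
  | succ k ih => exact inv_succ ih

lemma cauchy_step (k : ℕ) (t : ℝ) : dist (X.FF k t) (X.FF (k+1) t) ≤ X.T0 / 8^k := by
  have I := X.inv_all k
  by_cases h : t ∈ X.GapInt k
  · obtain ⟨g, hg, ht⟩ := h
    have S := X.gfill_spec (I.good g hg)
    rw [I.intval g hg t ht, FF_gap I hg ht]
    exact le_trans (lm_close S ht) (I.maxlen g hg)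
  · rw [X.FF_stable h, dist_self]
    exact le_of_lt (div_pos X.hT00 (pow_pos (by norm_num) k))

lemma gapint_antitone {k m : ℕ} (hkm : k ≤ m) : X.GapInt m ⊆ X.GapInt k := by
  induction m, hkm using Nat.le_induction with
  | base => exact subset_refl _
  | succ m hm ih => exact subset_trans (gapint_succ_subset (X.inv_all m)) ih

lemma FF_stable_ge {k m : ℕ} (hkm : k ≤ m) {t : ℝ} (h : t ∉ X.GapInt k) :
    X.FF m t = X.FF k t := by
  induction m, hkm using Nat.le_induction with
  | base => rfl
  | succ m hm ih =>
      rw [X.FF_stable (fun hin => h (X.gapint_antitone hm hin)), ih]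

lemma FF_cauchySeq (t : ℝ) : CauchySeq (fun k => X.FF k t) := by
  apply cauchySeq_of_le_geometric (1/8 : ℝ) X.T0 (by norm_num)
  intro n
  have h := X.cauchy_step n t
  have he : X.T0 * (1/8:ℝ)^n = X.T0/8^n := by
    rw [div_pow, one_pow]; ring
  rw [he]
  exact h

lemma nest : ∀ k, ∀ g ∈ X.Gaps k, ∃ g0 ∈ X.Gaps 0, Icc g.a g.b ⊆ Icc g0.a g0.b := by
  intro k
  induction k with
  | zero => exact fun g hg => ⟨g, hg, subset_refl _⟩
  | succ k ih =>
      intro g hg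
      rw [X.mem_gaps_succ] at hg
      obtain ⟨g', hg', hc⟩ := hg
      obtain ⟨g0, hg0, hsub⟩ := ih g' hg'
      refine ⟨g0, hg0, subset_trans ?_ hsub⟩
      rcases hc with rfl | rfl
      · exact X.childL_Icc ((X.inv_all k).good g' hg')
      · exact X.childR_Icc ((X.inv_all k).good g' hg')

open Filter Topology in
lemma FF_conv (t : ℝ) (ht : t ∈ Icc (0:ℝ) X.Λ) :
    ∃ z, Filter.Tendsto (fun k => X.FF k t) Filter.atTop (nhds z) := by
  by_cases hD : ∃ k, t ∉ X.GapInt k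
  · obtain ⟨k, hk⟩ := hD
    refine ⟨X.FF k t, ?_⟩
    have hconst : Filter.Tendsto (fun _ : ℕ => X.FF k t) Filter.atTop (nhds (X.FF k t)) :=
      tendsto_const_nhds
    apply Filter.Tendsto.congr' ?_ hconst
    filter_upwards [Filter.eventually_ge_atTop k] with m hm
    exact (X.FF_stable_ge hm hk).symm
  · push_neg at hD
    obtain ⟨g₀, hg₀, ht₀⟩ := hD 0
    have I0 := X.inv_all 0
    have hgood₀ := I0.good g₀ hg₀
    have hcont : ∀ m, X.FF m t ∈ Metric.closedBall g₀.p (g₀.b - g₀.a) ∩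
        Metric.closedBall g₀.q (g₀.b - g₀.a) := by
      intro m
      cases m with
      | zero =>
        rw [I0.intval g₀ hg₀ t ht₀]
        constructor
        · rw [Metric.mem_closedBall, dist_self]
          exact le_of_lt hgood₀.1
        · rw [Metric.mem_closedBall]
          exact good_dist_le hgood₀
      | succ m =>
        have Im := X.inv_all (m+1)
        obtain ⟨gm, hgm, htm⟩ := hD (m+1)
        obtain ⟨g0', hg0', hsub⟩ := X.nest (m+1) gm hgm
        have heq : g0' = g₀ := I0.uniq g0' hg0' g₀ hg₀ t (hsub (Ioo_subset_Icc_self htm))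
          (Ioo_subset_Icc_self ht₀)
        subst heq
        have e1 : X.FF (m+1) t = X.FF (m+1) gm.a := by
          rw [Im.intval gm hgm t htm, (Im.endval gm hgm).1]
        have hma : gm.a ∈ Icc g0'.a g0'.b :=
          hsub ⟨le_refl _, le_of_lt (good_len_pos (Im.good gm hgm))⟩
        have hnotin0a : g0'.a ∉ X.GapInt (m+1) :=
          fun hin => (notin_gapint I0 hg0').1 (X.gapint_antitone (Nat.zero_le _) hin)
        have hnotin0b : g0'.b ∉ X.GapInt (m+1) :=
          fun hin => (notin_gapint I0 hg0').2 (X.gapint_antitone (Nat.zero_le _) hin)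
        have d1 : dist (X.FF (m+1) gm.a) (X.FF (m+1) g0'.a) ≤ gm.a - g0'.a := by
          have := Im.lipd g0'.a gm.a (gap_mem_Icc I0 hg0').1 (gap_mem_Icc Im hgm).1
            hnotin0a (notin_gapint Im hgm).1 hma.1
          rw [dist_comm]
          exact this
        have d2 : dist (X.FF (m+1) gm.a) (X.FF (m+1) g0'.b) ≤ g0'.b - gm.a :=
          Im.lipd gm.a g0'.b (gap_mem_Icc Im hgm).1 (gap_mem_Icc I0 hg0').2
            (notin_gapint Im hgm).1 hnotin0b hma.2
        have e2 : X.FF (m+1) g0'.a = g0'.p := by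
          rw [X.FF_stable_ge (Nat.zero_le _) (notin_gapint I0 hg0').1]
          exact (I0.endval g0' hg0').1
        have e3 : X.FF (m+1) g0'.b = g0'.q := by
          rw [X.FF_stable_ge (Nat.zero_le _) (notin_gapint I0 hg0').2]
          exact (I0.endval g0' hg0').2
        constructor
        · rw [Metric.mem_closedBall, e1, dist_comm, ← e2, dist_comm]
          refine le_trans d1 ?_
          linarith [hma.2]
        · rw [Metric.mem_closedBall, e1, ← e3]
          refine le_trans d2 ?_
          linarith [hma.1]
    rcases hgood₀.2.2.2.2 with hcomp | hcomp
    · obtain ⟨z, _, htend⟩ := cauchySeq_tendsto_of_isComplete hcomp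
        (fun m => (hcont m).1) (X.FF_cauchySeq t)
      exact ⟨z, htend⟩
    · obtain ⟨z, _, htend⟩ := cauchySeq_tendsto_of_isComplete hcomp
        (fun m => (hcont m).2) (X.FF_cauchySeq t)
      exact ⟨z, htend⟩

open Classical in
/-- The limit curve function. -/
noncomputable def limF : ℝ → Z := fun t =>
  if h : ∃ z, Filter.Tendsto (fun k => X.FF k t) Filter.atTop (nhds z) then h.choose
  else X.x

lemma limF_tendsto {t : ℝ} (ht : t ∈ Icc (0:ℝ) X.Λ) :
    Filter.Tendsto (fun k => X.FF k t) Filter.atTop (nhds (X.limF t)) := by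
  have h := X.FF_conv t ht
  rw [limF, dif_pos h]
  exact h.choose_spec

lemma limF_eq {k : ℕ} {t : ℝ} (ht : t ∈ Icc (0:ℝ) X.Λ) (h : t ∉ X.GapInt k) :
    X.limF t = X.FF k t := by
  have h1 := X.limF_tendsto ht
  have h2 : Filter.Tendsto (fun m => X.FF m t) Filter.atTop (nhds (X.FF k t)) := by
    apply Filter.Tendsto.congr' ?_ tendsto_const_nhds
    filter_upwards [Filter.eventually_ge_atTop k] with m hm
    exact (X.FF_stable_ge hm h).symm
  exact tendsto_nhds_unique h1 h2

lemma boundary_notin (k : ℕ) : (0:ℝ) ∉ X.GapInt k ∧ X.Λ ∉ X.GapInt k := by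
  have I := X.inv_all k
  constructor
  · rintro ⟨g, hg, ht⟩
    exact absurd ht.1 (not_lt.mpr (I.sub g hg).1)
  · rintro ⟨g, hg, ht⟩
    exact absurd ht.2 (not_lt.mpr (I.sub g hg).2)

lemma limF_zero : X.limF 0 = X.x := by
  rw [X.limF_eq ⟨le_refl _, le_of_lt X.hΛ0⟩ (X.boundary_notin 0).1]
  exact ((X.inv_all 0).endval _ X.gaps0_memA).1

lemma limF_top : X.limF X.Λ = X.y := by
  rw [X.limF_eq ⟨le_of_lt X.hΛ0, le_refl _⟩ (X.boundary_notin 0).2]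
  exact ((X.inv_all 0).endval _ X.gaps0_memB).2

lemma limF_dist {s t : ℝ} (hs : s ∈ Icc (0:ℝ) X.Λ) (ht : t ∈ Icc (0:ℝ) X.Λ)
    (hst : s ≤ t) : dist (X.limF s) (X.limF t) ≤ t - s := by
  have hk : ∀ k, dist (X.FF k s) (X.FF k t) ≤ (t - s) + 2*(X.T0/8^k) := by
    intro k
    have I := X.inv_all k
    have hT0k : 0 < X.T0/8^k := div_pos X.hT00 (pow_pos (by norm_num) k)
    have hproj : ∀ u, u ∈ Icc (0:ℝ) X.Λ → ∃ u', u' ∈ Icc (0:ℝ) X.Λ ∧ u' ∉ X.GapInt k ∧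
        X.FF k u' = X.FF k u ∧ |u' - u| ≤ X.T0/8^k := by
      intro u hu
      by_cases huk : u ∈ X.GapInt k
      · obtain ⟨g, hg, hIoo⟩ := huk
        refine ⟨g.a, (gap_mem_Icc I hg).1, (notin_gapint I hg).1, ?_, ?_⟩
        · rw [(I.endval g hg).1, I.intval g hg u hIoo]
        · rw [abs_of_nonpos (by linarith [hIoo.1])]
          have := I.maxlen g hg
          have := hIoo.2
          linarith [hIoo.1]
      · exact ⟨u, hu, huk, rfl, by simp [le_of_lt hT0k]⟩
    obtain ⟨s', hs'1, hs'2, hs'3, hs'4⟩ := hproj s hs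
    obtain ⟨t', ht'1, ht'2, ht'3, ht'4⟩ := hproj t ht
    rw [← hs'3, ← ht'3]
    have hl : dist (X.FF k s') (X.FF k t') ≤ |t' - s'| := by
      rcases le_total s' t' with h | h
      · have := I.lipd s' t' hs'1 ht'1 hs'2 ht'2 h
        rwa [abs_of_nonneg (by linarith)]
      · have := I.lipd t' s' ht'1 hs'1 ht'2 hs'2 h
        rw [dist_comm, abs_of_nonpos (by linarith), neg_sub]
        exact this
    have habs : |t' - s'| ≤ (t - s) + 2*(X.T0/8^k) := by
      have h1 : t' - s' = (t' - t) + (t - s) + (s - s') := by ring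
      calc |t' - s'| ≤ |(t' - t) + (t - s)| + |s - s'| := by rw [h1]; exact abs_add_le _ _
        _ ≤ |t' - t| + |t - s| + |s - s'| := by
            have := abs_add_le (t' - t) (t - s)
            linarith
        _ ≤ X.T0/8^k + (t - s) + X.T0/8^k := by
            have e1 : |t - s| = t - s := abs_of_nonneg (by linarith)
            have e2 : |s - s'| = |s' - s| := abs_sub_comm _ _
            rw [e1, e2]
            linarith [ht'4, hs'4]
        _ = (t - s) + 2*(X.T0/8^k) := by ring
    linarith [hl, habs]
  have h1 : Filter.Tendsto (fun k => dist (X.FF k s) (X.FF k t)) Filter.atTop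
      (nhds (dist (X.limF s) (X.limF t))) :=
    (X.limF_tendsto hs).dist (X.limF_tendsto ht)
  have h2 : Filter.Tendsto (fun k : ℕ => (t - s) + 2*(X.T0/8^k)) Filter.atTop
      (nhds (t - s)) := by
    have h3 : Filter.Tendsto (fun k : ℕ => ((1:ℝ)/8)^k) Filter.atTop (nhds 0) :=
      tendsto_pow_atTop_nhds_zero_of_lt_one (by norm_num) (by norm_num)
    have h4 : Filter.Tendsto (fun k : ℕ => (t - s) + 2*(X.T0 * ((1:ℝ)/8)^k)) Filter.atTop
        (nhds ((t - s) + 2*(X.T0 * 0))) :=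
      Filter.Tendsto.const_add _ (Filter.Tendsto.const_mul _ (Filter.Tendsto.const_mul _ h3))
    simp only [mul_zero, add_zero] at h4
    convert h4 using 2 with k
    rw [div_pow, one_pow]
    ring
  exact le_of_tendsto_of_tendsto' h1 h2 hk

lemma badc_null {g : Gap Z} {T : ℝ} {Fl : Fill Z} (S : X.FillSpec g T Fl) :
    volume {r : ℝ | r ∈ Icc (0:ℝ) Fl.c.len ∧ Fl.c.toFun r ∈ X.N} = 0 := by
  have h1 : (volume.restrict (Icc (0:ℝ) Fl.c.len)) {r : ℝ | Fl.c.toFun r ∈ X.N} = 0 := by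
    have := S.avoid
    rw [MeasureTheory.ae_iff] at this
    simpa using this
  rw [Measure.restrict_apply' measurableSet_Icc] at h1
  refine measure_mono_null ?_ h1
  intro r hr
  exact ⟨hr.2, hr.1⟩

lemma shift_null {A : Set ℝ} (h : volume A = 0) (d : ℝ) :
    volume {s : ℝ | s - d ∈ A} = 0 := by
  have he : {s : ℝ | s - d ∈ A} = (fun s => s + (-d)) ⁻¹' A := by
    ext s; simp [sub_eq_add_neg]
  rw [he, measure_preimage_add_right]
  exact h

lemma badFF_null : ∀ k, volume {s : ℝ | s ∈ Icc (0:ℝ) X.Λ ∧ s ∉ X.GapInt k ∧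
    X.FF k s ∈ X.N} = 0 := by
  intro k
  induction k with
  | zero =>
    have S := X.rootFill_spec
    have hsub : {s : ℝ | s ∈ Icc (0:ℝ) X.Λ ∧ s ∉ X.GapInt 0 ∧ X.FF 0 s ∈ X.N} ⊆
        ({0, X.Λ} : Set ℝ) ∪
          {s : ℝ | s - (X.groot.a + X.rootFill.τl) ∈
            {r : ℝ | r ∈ Icc (0:ℝ) X.rootFill.c.len ∧ X.rootFill.c.toFun r ∈ X.N}} := by
      rintro s ⟨hIcc, hnot, hN⟩
      have hnotA : s ∉ Ioo X.groot.a (X.groot.a + X.rootFill.τl) := by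
        intro hin
        exact hnot ⟨_, X.gaps0_memA, by simpa [groot] using hin⟩
      have hnotB : s ∉ Ioo (X.groot.b - X.rootFill.τr) X.groot.b := by
        intro hin
        exact hnot ⟨_, X.gaps0_memB, by simpa [groot] using hin⟩
      have hIcc' : s ∈ Icc X.groot.a X.groot.b := by simpa [groot] using hIcc
      have hN' : lm X.groot X.rootFill s ∈ X.N := by
        simpa [FF] using hN
      rcases lm_bad S hIcc' hnotA hnotB hN' with h | h | h
      · left; left; simpa [groot] using h
      · left; right; simpa [groot] using h
      · right; exact h
    refine measure_mono_null hsub ?_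
    apply measure_union_null
    · exact measure_union_null Real.volume_singleton Real.volume_singleton
    · exact shift_null (badc_null S) _
  | succ k ih =>
    have I := X.inv_all k
    have hsub : {s : ℝ | s ∈ Icc (0:ℝ) X.Λ ∧ s ∉ X.GapInt (k+1) ∧ X.FF (k+1) s ∈ X.N} ⊆
        {s : ℝ | s ∈ Icc (0:ℝ) X.Λ ∧ s ∉ X.GapInt k ∧ X.FF k s ∈ X.N} ∪
          ⋃ g ∈ {g : Gap Z | g ∈ X.Gaps k},
            (({g.a, g.b} : Set ℝ) ∪
              {s : ℝ | s - (g.a + (X.gfill g).τl) ∈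
                {r : ℝ | r ∈ Icc (0:ℝ) (X.gfill g).c.len ∧ (X.gfill g).c.toFun r ∈ X.N}}) := by
      rintro s ⟨hIcc, hnot, hN⟩
      by_cases hsk : s ∈ X.GapInt k
      · obtain ⟨g, hg, hIoo⟩ := hsk
        have S := X.gfill_spec (I.good g hg)
        obtain ⟨hval, hp1, hp2⟩ := step_val I hg (Ioo_subset_Icc_self hIoo) hnot
        rw [hval] at hN
        right
        refine Set.mem_biUnion hg ?_
        rcases lm_bad S (Ioo_subset_Icc_self hIoo) hp1 hp2 hN with h | h | h
        · exact Or.inl (Or.inl h)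
        · exact Or.inl (Or.inr h)
        · exact Or.inr h
      · left
        rw [X.FF_stable hsk] at hN
        exact ⟨hIcc, hsk, hN⟩
    refine measure_mono_null hsub (measure_union_null ih ?_)
    rw [measure_biUnion_null_iff ((X.Gaps k).finite_toSet.countable)]
    intro g hg
    have S := X.gfill_spec (I.good g hg)
    apply measure_union_null
    · exact measure_union_null Real.volume_singleton Real.volume_singleton
    · exact shift_null (badc_null S) _

lemma gapint_vol (k : ℕ) : volume (X.GapInt k) ≤ ENNReal.ofReal (2 * X.T0 / 4^k) := by
  have I := X.inv_all k
  have key : ∀ l : List (Gap Z), (∀ g ∈ l, X.GoodGap g) →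
      volume {t : ℝ | ∃ g ∈ l, t ∈ Ioo g.a g.b} ≤
        ENNReal.ofReal ((l.map fun g => g.b - g.a).sum) := by
    intro l
    induction l with
    | nil => intro _; simp
    | cons a l ih =>
      intro hgood
      have ha := hgood a (by simp)
      have hrest := ih (fun g hgm => hgood g (by simp [hgm]))
      have hsum0 : 0 ≤ ((l.map fun g => g.b - g.a).sum) := by
        apply List.sum_nonneg
        intro x hx
        simp only [List.mem_map] at hx
        obtain ⟨g, hgm, rfl⟩ := hx
        linarith [(hgood g (by simp [hgm])).1]
      have hset : {t : ℝ | ∃ g ∈ (a :: l), t ∈ Ioo g.a g.b} =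
          Ioo a.a a.b ∪ {t : ℝ | ∃ g ∈ l, t ∈ Ioo g.a g.b} := by
        ext t
        simp only [List.mem_cons, Set.mem_union, Set.mem_setOf_eq]
        constructor
        · rintro ⟨g, rfl | hgm, hIoo⟩
          · exact Or.inl hIoo
          · exact Or.inr ⟨g, hgm, hIoo⟩
        · rintro (h | ⟨g, hgm, hIoo⟩)
          · exact ⟨a, Or.inl rfl, h⟩
          · exact ⟨g, Or.inr hgm, hIoo⟩
      rw [hset]
      refine le_trans (measure_union_le _ _) ?_
      rw [Real.volume_Ioo]
      simp only [List.map_cons, List.sum_cons]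
      rw [ENNReal.ofReal_add (by linarith [ha.1]) hsum0]
      exact add_le_add (le_refl _) hrest
  refine le_trans (key (X.Gaps k) I.good) ?_
  exact ENNReal.ofReal_le_ofReal I.sumlen

lemma cantor_null : volume (⋂ k, X.GapInt k) = 0 := by
  have hb : ∀ k, volume (⋂ k, X.GapInt k) ≤ ENNReal.ofReal (2 * X.T0 * ((1:ℝ)/4)^k) := by
    intro k
    have h1 : (⋂ k, X.GapInt k) ⊆ X.GapInt k := Set.iInter_subset _ k
    refine le_trans (measure_mono h1) (le_trans (X.gapint_vol k) ?_)
    apply ENNReal.ofReal_le_ofReal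
    rw [div_pow, one_pow, mul_one_div, mul_div_assoc]
  have h3 : Filter.Tendsto (fun k : ℕ => ENNReal.ofReal (2 * X.T0 * ((1:ℝ)/4)^k))
      Filter.atTop (nhds 0) := by
    have h4 : Filter.Tendsto (fun k : ℕ => 2 * X.T0 * ((1:ℝ)/4)^k) Filter.atTop (nhds 0) := by
      have := tendsto_pow_atTop_nhds_zero_of_lt_one (by norm_num : (0:ℝ) ≤ 1/4) (by norm_num)
      have h5 := Filter.Tendsto.const_mul (2 * X.T0) this
      simpa using h5
    have := ENNReal.tendsto_ofReal h4
    simpa using this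
  have h6 : volume (⋂ k, X.GapInt k) ≤ 0 :=
    le_of_tendsto_of_tendsto' tendsto_const_nhds h3 hb
  exact le_antisymm h6 bot_le

lemma limF_avoid : volume {s : ℝ | s ∈ Icc (0:ℝ) X.Λ ∧ X.limF s ∈ X.N} = 0 := by
  have hsub : {s : ℝ | s ∈ Icc (0:ℝ) X.Λ ∧ X.limF s ∈ X.N} ⊆
      (⋂ k, X.GapInt k) ∪ ⋃ k, {s : ℝ | s ∈ Icc (0:ℝ) X.Λ ∧ s ∉ X.GapInt k ∧
        X.FF k s ∈ X.N} := by
    rintro s ⟨hIcc, hN⟩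
    by_cases h : ∃ k, s ∉ X.GapInt k
    · obtain ⟨k, hk⟩ := h
      right
      refine Set.mem_iUnion.mpr ⟨k, hIcc, hk, ?_⟩
      rw [← X.limF_eq hIcc hk]
      exact hN
    · push_neg at h
      exact Or.inl (Set.mem_iInter.mpr h)
  exact measure_mono_null hsub
    (measure_union_null X.cantor_null (measure_iUnion_null fun k => X.badFF_null k))

/-- The main construction: a `C'`-quasiconvex curve from `x` to `y` avoiding `N`. -/
lemma exists_good_curve : ∃ γ : Curve Z, γ.start = X.x ∧ γ.finish = X.y ∧
    γ.len ≤ X.C' * dist X.x X.y ∧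
    (∀ᵐ s ∂(volume.restrict (Icc (0:ℝ) γ.len)), γ.toFun s ∉ X.N) := by
  have hlip : LipschitzOnWith 1 X.limF (Icc (0:ℝ) X.Λ) := by
    rw [lipschitzOnWith_iff_dist_le_mul]
    intro u hu v hv
    rw [NNReal.coe_one, one_mul, Real.dist_eq]
    rcases le_total u v with h | h
    · rw [abs_of_nonpos (by linarith), neg_sub]
      exact X.limF_dist hu hv h
    · rw [abs_of_nonneg (by linarith), dist_comm]
      exact X.limF_dist hv hu h
  refine ⟨⟨X.limF, X.Λ, le_of_lt X.hΛ0, hlip⟩, ?_, ?_, ?_, ?_⟩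
  · exact X.limF_zero
  · exact X.limF_top
  · exact le_of_eq rfl
  · show ∀ᵐ s ∂(volume.restrict (Icc (0:ℝ) X.Λ)), X.limF s ∉ X.N
    rw [MeasureTheory.ae_iff]
    rw [Measure.restrict_apply' measurableSet_Icc]
    refine measure_mono_null ?_ X.limF_avoid
    intro s hs
    simp only [Set.mem_inter_iff, Set.mem_setOf_eq, not_not] at hs
    exact ⟨hs.2, hs.1⟩

end Ctx

end Construction

theorem veryThick_of_thick'
    {Z : Type*} [MetricSpace Z] [MeasurableSpace Z] [BorelSpace Z] (μ : Measure Z)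
    (hloc : LocallyComplete Z)
    (hballs : BallsPosFin μ)
    (C : ℝ) (hC : 1 ≤ C) (R : ℝ≥0∞)
    (h : ThickQC μ C R) :
    ∀ C' > C, VeryThick μ C' R := by
  intro C' hC' x₀' x y hx hy hneg
  obtain ⟨ρ, hρm, hρae, hall⟩ := hneg
  by_cases hxy : x = y
  · subst hxy
    have hinf := hall ⟨fun _ => x, 0, le_refl 0, by intro u _ v _; simp⟩
      ⟨rfl, rfl, by simp⟩
    simp only [Curve.integ] at hinf
    rw [Set.Icc_self, Measure.restrict_eq_zero.mpr Real.volume_singleton,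
      lintegral_zero_measure] at hinf
    exact ENNReal.zero_ne_top hinf
  · set N := {z : Z | ρ z ≠ 0} with hN
    have hNm : MeasurableSet N := hρm (measurableSet_singleton 0) |>.compl
    have hN0 : μ N = 0 := by
      rw [MeasureTheory.ae_iff] at hρae
      exact hρae
    set X : Ctx Z := ⟨μ, x₀', R, C, N, x, y, C', hC, hloc, hballs, h, hNm, hN0, hx, hy,
      hxy, hC'⟩ with hX
    obtain ⟨γ, hs, hf, hlen, havoid⟩ := X.exists_good_curve
    have hmem : γ ∈ qcFam C' x y := ⟨hs, hf, hlen⟩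
    have hinf := hall γ hmem
    have hz : γ.integ ρ = 0 := by
      rw [Curve.integ]
      have hae0 : ∀ᵐ s ∂(volume.restrict (Icc (0:ℝ) γ.len)), ρ (γ.toFun s) = 0 := by
        filter_upwards [havoid] with s hsn
        exact not_not.mp hsn
      rw [lintegral_congr_ae hae0, lintegral_zero]
    rw [hz] at hinf
    exact ENNReal.zero_ne_top hinf

/-- In a locally complete, infinitesimally doubling metric measure space
with balls of positive finite measure, ∞-thick (C,R)-quasiconvexity self-improves to
very ∞-thick (C',R)-quasiconvexity for every C' > C. -/
theorem veryThick_of_thick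
    {Z : Type*} [MetricSpace Z] [MeasurableSpace Z] [BorelSpace Z] (μ : Measure Z)
    (hloc : LocallyComplete Z)
    (hdb : InfinitesimallyDoubling μ)
    (hballs : BallsPosFin μ)
    (C : ℝ) (hC : 1 ≤ C) (R : ℝ≥0∞) (hR : 0 < R)
    (h : ThickQC μ C R) :
    ∀ C' > C, VeryThick μ C' R :=
  veryThick_of_thick' μ hloc hballs C hC R h
end

section
/- Let Z be a locally complete metric measure space with an infinitesimally doubling reference measure that is finite and positive on all balls, and let Z̄ be a metric completion of Z (with the pushforward measure). If Z is very ∞-thick (C,R)-quasiconvex, then Z̄ is very ∞-thick (C′,R)-quasiconvex for every C′ > C. -/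
open MeasureTheory Metric Set ENNReal NNReal

variable {Z : Type*} [MetricSpace Z] [MeasurableSpace Z]

section Aux
open Filter Topology

namespace Curve
variable {Z : Type*} [MetricSpace Z]

-- helpers
lemma dist_pts (γ : Curve Z) {s t : ℝ} (hs : s ∈ Icc 0 γ.len) (ht : t ∈ Icc 0 γ.len) :
    dist (γ.toFun s) (γ.toFun t) ≤ dist s t := by
  have := γ.lip.dist_le_mul s hs t ht
  simpa using this

lemma dist_start_finish (γ : Curve Z) : dist γ.start γ.finish ≤ γ.len := by
  have := γ.dist_pts (s := 0) (t := γ.len) ⟨le_refl _, γ.len_nonneg⟩ ⟨γ.len_nonneg, le_refl _⟩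
  simpa [start, finish, Real.dist_eq, abs_of_nonneg γ.len_nonneg] using this

def map {W : Type*} [MetricSpace W] (γ : Curve Z) (ι : Z → W) (hι : Isometry ι) : Curve W where
  toFun := fun t => ι (γ.toFun t)
  len := γ.len
  len_nonneg := γ.len_nonneg
  lip := fun s hs t ht => by rw [hι.edist_eq]; exact γ.lip hs ht

@[simp] lemma map_start {W : Type*} [MetricSpace W] (γ : Curve Z) (ι : Z → W) (hι : Isometry ι) :
    (γ.map ι hι).start = ι γ.start := rfl

@[simp] lemma map_finish {W : Type*} [MetricSpace W] (γ : Curve Z) (ι : Z → W) (hι : Isometry ι) :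
    (γ.map ι hι).finish = ι γ.finish := rfl

@[simp] lemma map_len {W : Type*} [MetricSpace W] (γ : Curve Z) (ι : Z → W) (hι : Isometry ι) :
    (γ.map ι hι).len = γ.len := rfl

lemma map_integ {W : Type*} [MetricSpace W] (γ : Curve Z) (ι : Z → W) (hι : Isometry ι)
    (ρ : W → ℝ≥0∞) : (γ.map ι hι).integ ρ = γ.integ (fun z => ρ (ι z)) := rfl

def const (z : Z) : Curve Z where
  toFun := fun _ => z
  len := 0
  len_nonneg := le_refl _
  lip := fun s _ t _ => by simp

@[simp] lemma const_start (z : Z) : (const z).start = z := rfl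
@[simp] lemma const_finish (z : Z) : (const z).finish = z := rfl
@[simp] lemma const_len (z : Z) : (const z).len = 0 := rfl

lemma const_integ (z : Z) (ρ : Z → ℝ≥0∞) : (const z).integ ρ = 0 := by
  have : Icc (0:ℝ) 0 = {0} := Icc_self 0
  simp only [integ, const_len, this]
  exact setLIntegral_measure_zero _ _ (by simp)

noncomputable def reverse (γ : Curve Z) : Curve Z where
  toFun := fun t => γ.toFun (γ.len - t)
  len := γ.len
  len_nonneg := γ.len_nonneg
  lip := by
    intro s hs t ht
    have h1 : γ.len - s ∈ Icc 0 γ.len := ⟨by simp [hs.2], by simp; linarith [hs.1]⟩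
    have h2 : γ.len - t ∈ Icc 0 γ.len := ⟨by simp [ht.2], by simp; linarith [ht.1]⟩
    calc edist (γ.toFun (γ.len - s)) (γ.toFun (γ.len - t)) ≤ 1 * edist (γ.len - s) (γ.len - t) :=
          γ.lip h1 h2
      _ = 1 * edist s t := by rw [edist_dist, edist_dist, dist_sub_left]

@[simp] lemma reverse_start (γ : Curve Z) : γ.reverse.start = γ.finish := by
  simp [reverse, start, finish]

@[simp] lemma reverse_finish (γ : Curve Z) : γ.reverse.finish = γ.start := by
  simp [reverse, start, finish]

@[simp] lemma reverse_len (γ : Curve Z) : γ.reverse.len = γ.len := rfl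

lemma reverse_integ (γ : Curve Z) (ρ : Z → ℝ≥0∞) : γ.reverse.integ ρ = γ.integ ρ := by
  have hmp : MeasurePreserving (fun t : ℝ => γ.len - t) volume volume := by
    have h1 : MeasurePreserving (fun t : ℝ => γ.len + t) volume volume :=
      measurePreserving_add_left volume γ.len
    have h2 : MeasurePreserving (fun t : ℝ => -t) volume volume :=
      Measure.measurePreserving_neg volume
    have := h1.comp h2
    simpa [Function.comp_def, sub_eq_add_neg] using this
  have hemb : MeasurableEmbedding (fun t : ℝ => γ.len - t) := by
    have h1 : MeasurableEmbedding (fun t : ℝ => γ.len + t) := measurableEmbedding_addLeft γ.len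
    have h2 : MeasurableEmbedding (fun t : ℝ => -t) := (MeasurableEquiv.neg ℝ).measurableEmbedding
    have := h1.comp h2
    simpa [Function.comp_def, sub_eq_add_neg] using this
  have := hmp.setLIntegral_comp_preimage_emb hemb (fun u => ρ (γ.toFun u)) (Icc 0 γ.len)
  have himg : (fun t : ℝ => γ.len - t) ⁻¹' Icc 0 γ.len = Icc 0 γ.len := by
    rw [preimage_const_sub_Icc]; simp
  rw [himg] at this
  simpa [integ, reverse] using this



noncomputable def trans (γ₁ γ₂ : Curve Z) (h : γ₁.finish = γ₂.start) : Curve Z where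
  toFun := fun t => if t ≤ γ₁.len then γ₁.toFun t else γ₂.toFun (t - γ₁.len)
  len := γ₁.len + γ₂.len
  len_nonneg := add_nonneg γ₁.len_nonneg γ₂.len_nonneg
  lip := by
    set f : ℝ → Z := fun t => if t ≤ γ₁.len then γ₁.toFun t else γ₂.toFun (t - γ₁.len) with hf
    have key : ∀ s t, s ∈ Icc 0 (γ₁.len + γ₂.len) → t ∈ Icc 0 (γ₁.len + γ₂.len) → s ≤ t →
        dist (f s) (f t) ≤ t - s := by
      intro s t hs ht hst
      by_cases h1 : t ≤ γ₁.len
      · have h2 : s ≤ γ₁.len := le_trans hst h1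
        simp only [hf, if_pos h1, if_pos h2]
        have := γ₁.dist_pts (s := s) (t := t) ⟨hs.1, h2⟩ ⟨le_trans hs.1 hst, h1⟩
        rw [Real.dist_eq, abs_of_nonpos (by linarith)] at this
        linarith
      · by_cases h2 : s ≤ γ₁.len
        · simp only [hf, if_pos h2, if_neg h1]
          have e1 : dist (γ₁.toFun s) (γ₁.toFun γ₁.len) ≤ γ₁.len - s := by
            have := γ₁.dist_pts (s := s) (t := γ₁.len) ⟨hs.1, h2⟩ ⟨γ₁.len_nonneg, le_refl _⟩
            rw [Real.dist_eq, abs_of_nonpos (by linarith)] at this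
            linarith
          have e2 : dist (γ₂.toFun 0) (γ₂.toFun (t - γ₁.len)) ≤ t - γ₁.len := by
            have := γ₂.dist_pts (s := 0) (t := t - γ₁.len)
              ⟨le_refl _, γ₂.len_nonneg⟩ ⟨by linarith, by linarith [ht.2]⟩
            rw [Real.dist_eq, abs_of_nonpos (by linarith)] at this
            linarith
          calc dist (γ₁.toFun s) (γ₂.toFun (t - γ₁.len))
              ≤ dist (γ₁.toFun s) (γ₁.toFun γ₁.len) + dist (γ₁.toFun γ₁.len) (γ₂.toFun (t - γ₁.len)) :=
                dist_triangle _ _ _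
            _ ≤ (γ₁.len - s) + (t - γ₁.len) := by
                refine add_le_add e1 ?_
                have : γ₁.toFun γ₁.len = γ₂.toFun 0 := h
                rw [this]; exact e2
            _ = t - s := by ring
        · have h3 : ¬ s ≤ γ₁.len := h2
          simp only [hf, if_neg h1, if_neg h3]
          have := γ₂.dist_pts (s := s - γ₁.len) (t := t - γ₁.len)
            ⟨by linarith, by linarith [hs.2]⟩ ⟨by linarith, by linarith [ht.2]⟩
          rw [Real.dist_eq, abs_of_nonpos (by linarith)] at this
          linarith
    rw [lipschitzOnWith_iff_dist_le_mul]
    intro s hs t ht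
    rcases le_total s t with hst | hst
    · have hk := key s t hs ht hst
      have hd : dist s t = t - s := by rw [Real.dist_eq, abs_of_nonpos (by linarith)]; ring
      rw [hd, NNReal.coe_one, one_mul]; linarith
    · have hk := key t s ht hs hst
      have hd : dist s t = s - t := by rw [Real.dist_eq, abs_of_nonneg (by linarith)]
      rw [dist_comm (f s) (f t), hd, NNReal.coe_one, one_mul]; linarith

@[simp] lemma trans_len (γ₁ γ₂ : Curve Z) (h : γ₁.finish = γ₂.start) :
    (γ₁.trans γ₂ h).len = γ₁.len + γ₂.len := rfl

lemma trans_start (γ₁ γ₂ : Curve Z) (h : γ₁.finish = γ₂.start) :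
    (γ₁.trans γ₂ h).start = γ₁.start := by
  simp [trans, start, if_pos γ₁.len_nonneg]

lemma trans_finish (γ₁ γ₂ : Curve Z) (h : γ₁.finish = γ₂.start) :
    (γ₁.trans γ₂ h).finish = γ₂.finish := by
  simp only [trans, finish]
  by_cases h2 : γ₁.len + γ₂.len ≤ γ₁.len
  · have hz : γ₂.len = 0 := le_antisymm (by linarith) γ₂.len_nonneg
    rw [if_pos h2, hz, add_zero]
    exact h
  · rw [if_neg h2, add_sub_cancel_left]

lemma trans_integ_le (γ₁ γ₂ : Curve Z) (h : γ₁.finish = γ₂.start) (ρ : Z → ℝ≥0∞) :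
    (γ₁.trans γ₂ h).integ ρ ≤ γ₁.integ ρ + γ₂.integ ρ := by
  set f : ℝ → Z := fun t => if t ≤ γ₁.len then γ₁.toFun t else γ₂.toFun (t - γ₁.len) with hf
  have hsub : Icc (0:ℝ) (γ₁.len + γ₂.len) ⊆ Icc 0 γ₁.len ∪ Icc γ₁.len (γ₁.len + γ₂.len) := by
    intro t ht
    rcases le_total t γ₁.len with h1 | h1
    · exact Or.inl ⟨ht.1, h1⟩
    · exact Or.inr ⟨h1, ht.2⟩
  calc (γ₁.trans γ₂ h).integ ρ
      ≤ ∫⁻ t in Icc 0 γ₁.len ∪ Icc γ₁.len (γ₁.len + γ₂.len), ρ (f t) :=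
        lintegral_mono_set hsub
    _ ≤ (∫⁻ t in Icc 0 γ₁.len, ρ (f t)) + ∫⁻ t in Icc γ₁.len (γ₁.len + γ₂.len), ρ (f t) :=
        lintegral_union_le _ _ _
    _ ≤ γ₁.integ ρ + γ₂.integ ρ := by
        refine add_le_add ?_ ?_
        · refine le_of_eq (setLIntegral_congr_fun measurableSet_Icc ?_)
          intro t ht; simp only [hf, if_pos ht.2]
        · have e1 : ∫⁻ t in Icc γ₁.len (γ₁.len + γ₂.len), ρ (f t)
              = ∫⁻ t in Icc γ₁.len (γ₁.len + γ₂.len), ρ (γ₂.toFun (t - γ₁.len)) := by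
            refine setLIntegral_congr_fun measurableSet_Icc ?_
            intro t ht
            by_cases h1 : t ≤ γ₁.len
            · have : t = γ₁.len := le_antisymm h1 ht.1
              subst this
              simp only [hf, if_pos le_rfl, sub_self]
              rw [show γ₁.toFun γ₁.len = γ₂.toFun 0 from h]
            · simp only [hf, if_neg h1]
          rw [e1]
          have hmp : MeasurePreserving (fun t : ℝ => t + γ₁.len) volume volume :=
            measurePreserving_add_right volume γ₁.len
          have hemb : MeasurableEmbedding (fun t : ℝ => t + γ₁.len) :=
            measurableEmbedding_addRight γ₁.len
          have := hmp.setLIntegral_comp_preimage_emb hemb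
            (fun u => ρ (γ₂.toFun (u - γ₁.len))) (Icc γ₁.len (γ₁.len + γ₂.len))
          have himg : (fun t : ℝ => t + γ₁.len) ⁻¹' Icc γ₁.len (γ₁.len + γ₂.len)
              = Icc 0 γ₂.len := by
            rw [preimage_add_const_Icc]; simp
          rw [himg] at this
          rw [← this]
          refine le_of_eq (setLIntegral_congr_fun measurableSet_Icc ?_)
          intro u _; simp


end Curve

namespace LimCurve

variable {W : Type*} [MetricSpace W]

noncomputable def A (c : ℕ → Curve W) (n : ℕ) : ℝ := ∑ m ∈ Finset.range n, (c m).len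

lemma A_zero (c : ℕ → Curve W) : A c 0 = 0 := by simp [A]

lemma A_succ (c : ℕ → Curve W) (n : ℕ) : A c (n + 1) = A c n + (c n).len := by
  simp [A, Finset.sum_range_succ]

lemma A_nonneg (c : ℕ → Curve W) (n : ℕ) : 0 ≤ A c n :=
  Finset.sum_nonneg fun i _ => (c i).len_nonneg

lemma A_mono (c : ℕ → Curve W) : Monotone (A c) :=
  monotone_nat_of_le_succ fun n => by rw [A_succ]; linarith [(c n).len_nonneg]

lemma A_le_tsum (c : ℕ → Curve W) (hsum : Summable fun n => (c n).len) (n : ℕ) :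
    A c n ≤ ∑' m, (c m).len :=
  Summable.sum_le_tsum (Finset.range n) (fun i _ => (c i).len_nonneg) hsum

lemma A_tendsto (c : ℕ → Curve W) (hsum : Summable fun n => (c n).len) :
    Tendsto (A c) atTop (𝓝 (∑' m, (c m).len)) :=
  hsum.hasSum.tendsto_sum_nat

/-- if partial sums agree, the starts agree -/
lemma start_eq_of_A_eq (c : ℕ → Curve W) (hchain : ∀ n, (c n).finish = (c (n + 1)).start) :
    ∀ j k, j ≤ k → A c j = A c k → (c j).start = (c k).start := by
  intro j k hjk
  induction k, hjk using Nat.le_induction with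
  | base => intro _; rfl
  | succ k hk ih =>
    intro hA
    have h1 : A c j ≤ A c k := A_mono c hk
    have h2 : A c k ≤ A c (k + 1) := A_mono c (Nat.le_succ k)
    rw [A_succ] at hA
    have hlen : (c k).len = 0 := le_antisymm (by linarith) (c k).len_nonneg
    have := ih (by linarith)
    rw [this, ← hchain k]
    unfold Curve.finish Curve.start
    rw [hlen]

open Classical in
noncomputable def lcFun (c : ℕ → Curve W) (w : W) : ℝ → W := fun t =>
  if h : ∃ n, t < A c (n + 1) then (c (Nat.find h)).toFun (t - A c (Nat.find h)) else w

lemma exists_lt_A (c : ℕ → Curve W) (hsum : Summable fun n => (c n).len) {t : ℝ}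
    (ht : t < ∑' m, (c m).len) : ∃ n, t < A c (n + 1) := by
  have := (A_tendsto c hsum).eventually (eventually_gt_nhds ht)
  rcases this.exists with ⟨n, hn⟩
  exact ⟨n, lt_of_lt_of_le hn (A_mono c (Nat.le_succ n))⟩

open Classical in
lemma lcFun_eq (c : ℕ → Curve W) (w : W) (hsum : Summable fun n => (c n).len)
    (hchain : ∀ n, (c n).finish = (c (n + 1)).start) {n : ℕ} {t : ℝ}
    (h1 : A c n ≤ t) (h2 : t ≤ A c (n + 1)) (h3 : t < ∑' m, (c m).len) :
    lcFun c w t = (c n).toFun (t - A c n) := by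
  have hex : ∃ m, t < A c (m + 1) := exists_lt_A c hsum h3
  rw [lcFun, dif_pos hex]
  set k := Nat.find hex with hkdef
  have hkspec : t < A c (k + 1) := Nat.find_spec hex
  have ht0 : 0 ≤ t := le_trans (A_nonneg c n) h1
  have hAk : A c k ≤ t := by
    rcases Nat.eq_zero_or_pos k with hk0 | hk0
    · rw [hk0, A_zero]; exact ht0
    · have := Nat.find_min hex (m := k - 1) (by omega)
      push_neg at this
      have hk1 : k - 1 + 1 = k := by omega
      rwa [hk1] at this
  -- compare n and k
  have hnk : n ≤ k := by
    by_contra hlt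
    push_neg at hlt
    have : A c (k + 1) ≤ A c n := A_mono c (by omega)
    linarith
  rcases eq_or_lt_of_le hnk with rfl | hlt
  · rfl
  · -- n < k, so t = A c (n+1) = A c k, everything in between zero length
    have e1 : A c (n + 1) ≤ t := by
      have := Nat.find_min hex (m := n) (by omega)
      push_neg at this
      exact this
    have e2 : t = A c (n + 1) := le_antisymm h2 e1
    have e3 : A c (n + 1) ≤ A c k := A_mono c (by omega)
    have e4 : A c k = A c (n + 1) := by linarith
    have e5 : (c (n + 1)).start = (c k).start :=
      start_eq_of_A_eq c hchain (n + 1) k (by omega) e4.symm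
    have e6 : t - A c k = 0 := by rw [e4, ← e2]; ring
    have e7 : t - A c n = (c n).len := by
      rw [e2, A_succ]; ring
    rw [e6, e7]
    show (c k).toFun 0 = (c n).toFun (c n).len
    rw [show (c k).toFun 0 = (c k).start from rfl, ← e5, ← hchain n]
    rfl

lemma lcFun_mem_piece (c : ℕ → Curve W) {n : ℕ} {t : ℝ}
    (h1 : A c n ≤ t) (h2 : t ≤ A c (n + 1)) : t - A c n ∈ Icc 0 (c n).len := by
  constructor
  · linarith
  · have := A_succ c n; linarith

/-- distance from a point on the curve to the finish of a later piece -/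
lemma dist_to_finish (c : ℕ → Curve W) (w : W) (hsum : Summable fun n => (c n).len)
    (hchain : ∀ n, (c n).finish = (c (n + 1)).start) {n : ℕ} {s : ℝ}
    (h1 : A c n ≤ s) (h2 : s ≤ A c (n + 1)) (h3 : s < ∑' m, (c m).len) :
    ∀ k, n ≤ k → dist (lcFun c w s) ((c k).finish) ≤ A c (k + 1) - s := by
  intro k hk
  induction k, hk using Nat.le_induction with
  | base =>
    rw [lcFun_eq c w hsum hchain h1 h2 h3]
    have hmem := lcFun_mem_piece c h1 h2
    have := (c n).dist_pts hmem ⟨(c n).len_nonneg, le_refl _⟩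
    unfold Curve.finish
    rw [Real.dist_eq] at this
    have hA := A_succ c n
    calc dist ((c n).toFun (s - A c n)) ((c n).toFun (c n).len) ≤ |s - A c n - (c n).len| := this
      _ ≤ A c (n + 1) - s := by
          rw [abs_of_nonpos (by linarith [hmem.2])]; linarith
  | succ k hk ih =>
    calc dist (lcFun c w s) ((c (k + 1)).finish)
        ≤ dist (lcFun c w s) ((c k).finish) + dist ((c k).finish) ((c (k + 1)).finish) :=
          dist_triangle _ _ _
      _ ≤ (A c (k + 1) - s) + (c (k + 1)).len := by
          refine add_le_add ih ?_
          rw [hchain k]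
          exact (c (k + 1)).dist_start_finish
      _ = A c (k + 2) - s := by rw [A_succ c (k + 1)]; ring

/-- core Lipschitz estimate between two bracketed parameters -/
lemma lip_core (c : ℕ → Curve W) (w : W) (hsum : Summable fun n => (c n).len)
    (hchain : ∀ n, (c n).finish = (c (n + 1)).start) :
    ∀ N n m s t, A c n ≤ s → s ≤ A c (n + 1) → A c m ≤ t → t ≤ A c (m + 1) →
      s ≤ t → t < ∑' i, (c i).len → n ≤ m → m ≤ n + N →
      dist (lcFun c w s) (lcFun c w t) ≤ t - s := by
  intro N
  induction N with
  | zero =>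
    intro n m s t hs1 hs2 ht1 ht2 hst htL hnm hmn
    have : n = m := le_antisymm hnm (by omega)
    subst this
    rw [lcFun_eq c w hsum hchain hs1 hs2 (lt_of_le_of_lt hst htL),
        lcFun_eq c w hsum hchain ht1 ht2 htL]
    have := (c n).dist_pts (lcFun_mem_piece c hs1 hs2) (lcFun_mem_piece c ht1 ht2)
    rw [Real.dist_eq, abs_of_nonpos (by linarith)] at this
    linarith
  | succ N ih =>
    intro n m s t hs1 hs2 ht1 ht2 hst htL hnm hmn
    by_cases hcase : m ≤ n + N
    · exact ih n m s t hs1 hs2 ht1 ht2 hst htL hnm hcase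
    · have hm : n < m := by omega
      set u := A c (n + 1) with hu
      have hus : s ≤ u := hs2
      have hut : u ≤ t := le_trans (A_mono c hm) ht1
      have huL : u < ∑' i, (c i).len := lt_of_le_of_lt hut htL
      have d1 : dist (lcFun c w s) (lcFun c w u) ≤ u - s :=
        ih n n s u hs1 hs2 (A_mono c (Nat.le_succ n)) (le_refl _) hus huL (le_refl n)
          (by omega)
      have d2 : dist (lcFun c w u) (lcFun c w t) ≤ t - u :=
        ih (n + 1) m u t (le_refl _) (A_mono c (Nat.le_succ (n+1))) ht1 ht2 hut htL
          (by omega) (by omega)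
      calc dist (lcFun c w s) (lcFun c w t)
          ≤ dist (lcFun c w s) (lcFun c w u) + dist (lcFun c w u) (lcFun c w t) :=
            dist_triangle _ _ _
        _ ≤ (u - s) + (t - u) := add_le_add d1 d2
        _ = t - s := by ring

lemma exists_bracket (c : ℕ → Curve W) (hsum : Summable fun n => (c n).len) {s : ℝ}
    (h0 : 0 ≤ s) (hL : s < ∑' m, (c m).len) :
    ∃ n, A c n ≤ s ∧ s < A c (n + 1) := by
  classical
  have hex : ∃ n, s < A c (n + 1) := exists_lt_A c hsum hL
  refine ⟨Nat.find hex, ?_, Nat.find_spec hex⟩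
  rcases Nat.eq_zero_or_pos (Nat.find hex) with hk0 | hk0
  · rw [hk0, A_zero]; exact h0
  · obtain ⟨k', hkk⟩ := Nat.exists_eq_succ_of_ne_zero hk0.ne'
    have := Nat.find_min hex (m := k') (by omega)
    push_neg at this
    rw [hkk]
    exact this

open Classical in
lemma lcFun_at_end (c : ℕ → Curve W) (w : W) (hsum : Summable fun n => (c n).len) :
    lcFun c w (∑' m, (c m).len) = w := by
  rw [lcFun, dif_neg]
  push_neg
  intro n
  exact A_le_tsum c hsum (n + 1)

lemma lcFun_lip (c : ℕ → Curve W) (w : W) (hsum : Summable fun n => (c n).len)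
    (hchain : ∀ n, (c n).finish = (c (n + 1)).start)
    (hw : Tendsto (fun n => (c n).finish) atTop (𝓝 w)) :
    LipschitzOnWith 1 (lcFun c w) (Icc 0 (∑' m, (c m).len)) := by
  set L := ∑' m, (c m).len with hLdef
  -- first: the one-sided bound
  have key : ∀ s t, s ∈ Icc 0 L → t ∈ Icc 0 L → s ≤ t → dist (lcFun c w s) (lcFun c w t) ≤ t - s := by
    intro s t hs ht hst
    rcases eq_or_lt_of_le ht.2 with htL | htL
    · -- t = L
      rcases eq_or_lt_of_le hs.2 with hsL | hsL
      · rw [hsL, htL]; simp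
      · obtain ⟨n, hn1, hn2⟩ := exists_bracket c hsum hs.1 hsL
        rw [htL, lcFun_at_end c w hsum]
        -- dist (lcFun s) w ≤ L - s via limit
        have hbound : ∀ k, n ≤ k →
            dist (lcFun c w s) w ≤ (A c (k + 1) - s) + dist ((c k).finish) w := by
          intro k hk
          calc dist (lcFun c w s) w ≤ dist (lcFun c w s) ((c k).finish) + dist ((c k).finish) w :=
                dist_triangle _ _ _
            _ ≤ (A c (k + 1) - s) + dist ((c k).finish) w := by
                refine add_le_add ?_ (le_refl _)
                exact dist_to_finish c w hsum hchain hn1 (le_of_lt hn2) hsL k hk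
        have htend : Tendsto (fun k => (A c (k + 1) - s) + dist ((c k).finish) w) atTop
            (𝓝 ((L - s) + 0)) := by
          refine Tendsto.add ?_ ?_
          · exact (((A_tendsto c hsum).comp (tendsto_add_atTop_nat 1)).sub_const s)
          · have h2 : Tendsto (fun k => dist ((c k).finish) w) atTop (𝓝 (dist w w)) :=
              hw.dist tendsto_const_nhds
            simpa using h2
        have := ge_of_tendsto htend (eventually_atTop.mpr ⟨n, hbound⟩)
        simpa using this
    · -- t < L
      have hsL : s < L := lt_of_le_of_lt hst htL
      obtain ⟨n, hn1, hn2⟩ := exists_bracket c hsum hs.1 hsL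
      obtain ⟨m, hm1, hm2⟩ := exists_bracket c hsum ht.1 htL
      have hnm : n ≤ m := by
        by_contra hlt
        push_neg at hlt
        have : A c (m + 1) ≤ A c n := A_mono c (by omega)
        linarith
      exact lip_core c w hsum hchain m n m s t hn1 (le_of_lt hn2) hm1 (le_of_lt hm2) hst htL
        hnm (by omega)
  rw [lipschitzOnWith_iff_dist_le_mul]
  intro s hs t ht
  rcases le_total s t with hst | hst
  · have hk := key s t hs ht hst
    have hd : dist s t = t - s := by rw [Real.dist_eq, abs_of_nonpos (by linarith)]; ring
    rw [hd, NNReal.coe_one, one_mul]; linarith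
  · have hk := key t s ht hs hst
    have hd : dist s t = s - t := by rw [Real.dist_eq, abs_of_nonneg (by linarith)]
    rw [dist_comm (lcFun c w s) (lcFun c w t), hd, NNReal.coe_one, one_mul]; linarith

noncomputable def limitCurve (c : ℕ → Curve W) (w : W) (hsum : Summable fun n => (c n).len)
    (hchain : ∀ n, (c n).finish = (c (n + 1)).start)
    (hw : Tendsto (fun n => (c n).finish) atTop (𝓝 w)) : Curve W where
  toFun := lcFun c w
  len := ∑' m, (c m).len
  len_nonneg := tsum_nonneg fun n => (c n).len_nonneg
  lip := lcFun_lip c w hsum hchain hw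

lemma limitCurve_len (c : ℕ → Curve W) (w : W) (hsum : Summable fun n => (c n).len)
    (hchain : ∀ n, (c n).finish = (c (n + 1)).start)
    (hw : Tendsto (fun n => (c n).finish) atTop (𝓝 w)) :
    (limitCurve c w hsum hchain hw).len = ∑' m, (c m).len := rfl

lemma limitCurve_start (c : ℕ → Curve W) (w : W) (hsum : Summable fun n => (c n).len)
    (hchain : ∀ n, (c n).finish = (c (n + 1)).start)
    (hw : Tendsto (fun n => (c n).finish) atTop (𝓝 w)) :
    (limitCurve c w hsum hchain hw).start = (c 0).start := by
  show lcFun c w 0 = (c 0).start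
  rcases eq_or_lt_of_le (tsum_nonneg fun n => (c n).len_nonneg : (0:ℝ) ≤ ∑' m, (c m).len)
    with hL | hL
  · -- total length zero: w = (c 0).start
    rw [show (0:ℝ) = ∑' m, (c m).len from hL, lcFun_at_end c w hsum]
    have hlen : ∀ n, (c n).len = 0 := by
      intro n
      have h1 : (c n).len ≤ ∑' m, (c m).len := Summable.le_tsum hsum n fun m _ => (c m).len_nonneg
      have h2 := (c n).len_nonneg
      linarith [hL.symm ▸ h1]
    have hfin : ∀ n, (c n).finish = (c 0).start := by
      intro n
      have hAeq : ∀ k, A c k = 0 := by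
        intro k
        induction k with
        | zero => exact A_zero c
        | succ k ih => rw [A_succ, ih, hlen k, add_zero]
      have h1 : (c n).start = (c 0).start :=
        (start_eq_of_A_eq c hchain 0 n (Nat.zero_le n) (by rw [hAeq, hAeq])).symm
      rw [← h1]
      unfold Curve.finish Curve.start
      rw [hlen n]
    have : Tendsto (fun _ : ℕ => (c 0).start) atTop (𝓝 w) := by
      rw [show (fun _ : ℕ => (c 0).start) = fun n => (c n).finish from funext fun n => (hfin n).symm]
      exact hw
    exact tendsto_nhds_unique this tendsto_const_nhds
  · rw [lcFun_eq c w hsum hchain (le_of_eq (A_zero c)) (A_nonneg c 1) hL]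
    rw [A_zero, sub_zero]
    rfl

lemma limitCurve_finish (c : ℕ → Curve W) (w : W) (hsum : Summable fun n => (c n).len)
    (hchain : ∀ n, (c n).finish = (c (n + 1)).start)
    (hw : Tendsto (fun n => (c n).finish) atTop (𝓝 w)) :
    (limitCurve c w hsum hchain hw).finish = w :=
  lcFun_at_end c w hsum

lemma limitCurve_integ_le (c : ℕ → Curve W) (w : W) (hsum : Summable fun n => (c n).len)
    (hchain : ∀ n, (c n).finish = (c (n + 1)).start)
    (hw : Tendsto (fun n => (c n).finish) atTop (𝓝 w)) (ρ : W → ℝ≥0∞) :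
    (limitCurve c w hsum hchain hw).integ ρ ≤ ∑' n, (c n).integ ρ := by
  set L := ∑' m, (c m).len with hLdef
  have hsub : Icc (0:ℝ) L ⊆ (⋃ n, Ico (A c n) (A c (n + 1))) ∪ {L} := by
    intro t ht
    rcases eq_or_lt_of_le ht.2 with htL | htL
    · exact Or.inr (by simp [htL])
    · obtain ⟨n, hn1, hn2⟩ := exists_bracket c hsum ht.1 htL
      exact Or.inl (mem_iUnion.mpr ⟨n, hn1, hn2⟩)
  calc (limitCurve c w hsum hchain hw).integ ρ
      ≤ ∫⁻ t in (⋃ n, Ico (A c n) (A c (n + 1))) ∪ {L}, ρ (lcFun c w t) :=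
        lintegral_mono_set hsub
    _ ≤ (∫⁻ t in ⋃ n, Ico (A c n) (A c (n + 1)), ρ (lcFun c w t))
          + ∫⁻ t in ({L} : Set ℝ), ρ (lcFun c w t) := lintegral_union_le _ _ _
    _ ≤ (∑' n, ∫⁻ t in Ico (A c n) (A c (n + 1)), ρ (lcFun c w t)) + 0 := by
        refine add_le_add (lintegral_iUnion_le _ _) ?_
        rw [setLIntegral_measure_zero _ _ (by simp)]
    _ = ∑' n, ∫⁻ t in Ico (A c n) (A c (n + 1)), ρ (lcFun c w t) := by rw [add_zero]
    _ ≤ ∑' n, (c n).integ ρ := by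
        refine Summable.tsum_le_tsum (fun n => ?_) ENNReal.summable ENNReal.summable
        have he : ∫⁻ t in Ico (A c n) (A c (n + 1)), ρ (lcFun c w t)
            = ∫⁻ t in Ico (A c n) (A c (n + 1)), ρ ((c n).toFun (t - A c n)) := by
          refine setLIntegral_congr_fun measurableSet_Ico ?_
          intro t ht
          have htL : t < L := lt_of_lt_of_le ht.2 (A_le_tsum c hsum (n + 1))
          dsimp only
          rw [lcFun_eq c w hsum hchain ht.1 (le_of_lt ht.2) htL]
        rw [he]
        have hmp : MeasurePreserving (fun t : ℝ => t + A c n) volume volume :=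
          measurePreserving_add_right volume (A c n)
        have hemb : MeasurableEmbedding (fun t : ℝ => t + A c n) :=
          measurableEmbedding_addRight (A c n)
        have := hmp.setLIntegral_comp_preimage_emb hemb
          (fun u => ρ ((c n).toFun (u - A c n))) (Ico (A c n) (A c (n + 1)))
        have himg : (fun t : ℝ => t + A c n) ⁻¹' Ico (A c n) (A c (n + 1)) = Ico 0 (c n).len := by
          rw [preimage_add_const_Ico, A_succ]; simp
        rw [himg] at this
        rw [← this]
        have he2 : ∫⁻ u in Ico (0:ℝ) (c n).len, ρ ((c n).toFun (u + A c n - A c n))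
            = ∫⁻ u in Ico (0:ℝ) (c n).len, ρ ((c n).toFun u) := by
          refine setLIntegral_congr_fun measurableSet_Ico ?_
          intro u _; simp
        rw [he2]
        exact lintegral_mono_set Ico_subset_Icc_self

end LimCurve


end Aux

open Filter Topology LimCurve in
/-- If a locally complete, infinitesimally doubling metric measure space
(balls of positive finite measure) is very ∞-thick (C,R)-quasiconvex, then its metric
completion, with the pushforward measure, is very ∞-thick (C',R)-quasiconvex for every
C' > C. -/
theorem veryThick_completion
    {Z : Type*} [MetricSpace Z] [MeasurableSpace Z] [BorelSpace Z]
    [MeasurableSpace (UniformSpace.Completion Z)] [BorelSpace (UniformSpace.Completion Z)]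
    (μ : Measure Z)
    (hloc : LocallyComplete Z)
    (hdb : InfinitesimallyDoubling μ)
    (hballs : BallsPosFin μ)
    (C : ℝ) (hC : 1 ≤ C) (R : ℝ≥0∞) (hR : 0 < R)
    (h : VeryThick μ C R) :
    ∀ C' > C,
      VeryThick (μ.map (UniformSpace.Completion.coe' (α := Z))) C' R := by
  intro C' hC' x₀ x y hx hy
  set ι : Z → UniformSpace.Completion Z := UniformSpace.Completion.coe' (α := Z) with hι
  have hiso : Isometry ι := UniformSpace.Completion.coe_isometry
  have hdense : DenseRange ι := UniformSpace.Completion.denseRange_coe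
  have hιmeas : Measurable ι := hiso.continuous.measurable
  rintro ⟨ρ, hρmeas, hρae, hρall⟩
  -- pull back the a.e. vanishing
  have hsmeas : MeasurableSet {w : UniformSpace.Completion Z | ρ w = 0} := hρmeas (measurableSet_singleton 0)
  have haeZ : ∀ᵐ z ∂μ, ρ (ι z) = 0 :=
    (MeasureTheory.ae_map_iff hιmeas.aemeasurable hsmeas).mp hρae
  set ρZ : Z → ℝ≥0∞ := fun z => (⊤ : ℝ≥0∞) * ρ (ι z) with hρZ
  have hρZmeas : Measurable ρZ := (hρmeas.comp hιmeas).const_mul ⊤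
  have hρZae : ∀ᵐ z ∂μ, ρZ z = 0 := haeZ.mono fun z hz => by rw [hρZ]; simp [hz]
  -- key extraction: zero-integral quasiconvex curves in Z
  have key : ∀ x₀' a b : Z, edist a x₀' < R → edist b x₀' < R →
      ∃ γ : Curve Z, γ ∈ qcFam C a b ∧ γ.integ (fun z => ρ (ι z)) = 0 := by
    intro x₀' a b ha hb
    have h1 := h x₀' a b ha hb
    simp only [InfNegligible, not_exists, not_and] at h1
    have h2 := h1 ρZ hρZmeas hρZae
    push_neg at h2
    obtain ⟨γ, hγ, hint⟩ := h2
    refine ⟨γ, hγ, ?_⟩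
    have haem : AEMeasurable (fun s => ρ (ι (γ.toFun s))) (volume.restrict (Icc 0 γ.len)) := by
      have hcont : ContinuousOn (fun s => ι (γ.toFun s)) (Icc 0 γ.len) :=
        hiso.continuous.comp_continuousOn γ.lip.continuousOn
      exact hρmeas.comp_aemeasurable (hcont.aemeasurable measurableSet_Icc)
    have heq : γ.integ ρZ = ⊤ * γ.integ (fun z => ρ (ι z)) :=
      lintegral_const_mul'' ⊤ haem
    rw [heq] at hint
    by_contra hne
    rw [ENNReal.top_mul hne] at hint
    exact hint rfl
  by_cases hxy : x = y
  · subst hxy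
    have hmem : Curve.const x ∈ qcFam C' x x := ⟨rfl, rfl, by simp⟩
    have := hρall _ hmem
    rw [Curve.const_integ] at this
    simp at this
  -- main case
  have hd : (0:ℝ) < dist x y := dist_pos.mpr hxy
  have hr : max (edist x x₀) (edist y x₀) < R := max_lt hx hy
  obtain ⟨ε, hε, hεR⟩ := ENNReal.lt_iff_exists_add_pos_lt.mp hr
  have hCpos : (0:ℝ) < C := lt_of_lt_of_le one_pos hC
  set δ : ℝ := min ((ε:ℝ)/2) ((C' - C) * dist x y / (10 * C)) with hδdef
  have hδ : 0 < δ := by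
    apply lt_min
    · positivity
    · have : 0 < C' - C := by linarith
      positivity
  have hδε : δ ≤ (ε:ℝ)/2 := min_le_left _ _
  have hδd : δ ≤ (C' - C) * dist x y / (10 * C) := min_le_right _ _
  -- choose approximating points
  obtain ⟨x₀', hx₀'⟩ := Metric.denseRange_iff.mp hdense x₀ ((ε:ℝ)/2) (by positivity)
  have hp' : ∀ n : ℕ, ∃ a : Z, dist x (ι a) < δ * (1/2)^n := fun n =>
    Metric.denseRange_iff.mp hdense x _ (by positivity)
  choose p hpd using hp'
  have hq' : ∀ n : ℕ, ∃ a : Z, dist y (ι a) < δ * (1/2)^n := fun n =>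
    Metric.denseRange_iff.mp hdense y _ (by positivity)
  choose q hqd using hq'
  have hpow : ∀ n : ℕ, δ * ((1:ℝ)/2)^n ≤ δ := by
    intro n
    have h1 : ((1:ℝ)/2)^n ≤ 1 := pow_le_one₀ (by norm_num) (by norm_num)
    nlinarith [hδ.le]
  -- all chosen points are within R of x₀'
  have htwo : ENNReal.ofReal ((ε:ℝ)/2) + ENNReal.ofReal ((ε:ℝ)/2) = (ε : ℝ≥0∞) := by
    rw [← ENNReal.ofReal_add (by positivity) (by positivity),
      show (ε:ℝ)/2 + (ε:ℝ)/2 = ((ε:ℝ≥0):ℝ) by ring, ENNReal.ofReal_coe_nnreal]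
  have hedist : ∀ u : UniformSpace.Completion Z, edist u x₀ ≤ max (edist x x₀) (edist y x₀) →
      ∀ a : Z, dist u (ι a) ≤ δ → edist a x₀' < R := by
    intro u hu a hda
    have e1 : edist a x₀' = edist (ι a) (ι x₀') := (hiso.edist_eq a x₀').symm
    calc edist a x₀' = edist (ι a) (ι x₀') := e1
      _ ≤ edist (ι a) u + edist u (ι x₀') := edist_triangle _ _ _
      _ ≤ edist (ι a) u + (edist u x₀ + edist x₀ (ι x₀')) := by
          gcongr
          exact edist_triangle _ _ _
      _ ≤ ENNReal.ofReal ((ε:ℝ)/2) + (max (edist x x₀) (edist y x₀) + ENNReal.ofReal ((ε:ℝ)/2)) := by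
          gcongr
          · rw [edist_dist, dist_comm]
            exact ENNReal.ofReal_le_ofReal (le_trans hda hδε)
          · rw [edist_dist, dist_comm]
            exact ENNReal.ofReal_le_ofReal (by
              rw [dist_comm]; exact (le_of_lt hx₀'))
      _ = max (edist x x₀) (edist y x₀) + (ε : ℝ≥0∞) := by
          rw [← htwo]; ring
      _ < R := hεR
  have hpR : ∀ n, edist (p n) x₀' < R := fun n =>
    hedist x (le_max_left _ _) (p n) (le_trans (hpd n).le (hpow n))
  have hqR : ∀ n, edist (q n) x₀' < R := fun n =>
    hedist y (le_max_right _ _) (q n) (le_trans (hqd n).le (hpow n))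
  -- extract the curves
  have hKx : ∀ n : ℕ, ∃ γ : Curve Z, γ ∈ qcFam C (p n) (p (n+1)) ∧
      γ.integ (fun z => ρ (ι z)) = 0 := fun n => key x₀' _ _ (hpR n) (hpR (n+1))
  choose σx hσxmem hσxint using hKx
  have hKy : ∀ n : ℕ, ∃ γ : Curve Z, γ ∈ qcFam C (q n) (q (n+1)) ∧
      γ.integ (fun z => ρ (ι z)) = 0 := fun n => key x₀' _ _ (hqR n) (hqR (n+1))
  choose σy hσymem hσyint using hKy
  obtain ⟨σm, hσmmem, hσmint⟩ := key x₀' (p 0) (q 0) (hpR 0) (hqR 0)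
  -- map them to the completion
  set cx : ℕ → Curve (UniformSpace.Completion Z) := fun n => (σx n).map ι hiso with hcx
  set cy : ℕ → Curve (UniformSpace.Completion Z) := fun n => (σy n).map ι hiso with hcy
  set M : Curve (UniformSpace.Completion Z) := σm.map ι hiso with hM
  have hfx : ∀ n, (cx n).finish = ι (p (n+1)) := fun n => by
    rw [hcx]; simp [Curve.map_finish, (hσxmem n).2.1]
  have hsx : ∀ n, (cx n).start = ι (p n) := fun n => by
    rw [hcx]; simp [Curve.map_start, (hσxmem n).1]
  have hfy : ∀ n, (cy n).finish = ι (q (n+1)) := fun n => by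
    rw [hcy]; simp [Curve.map_finish, (hσymem n).2.1]
  have hsy : ∀ n, (cy n).start = ι (q n) := fun n => by
    rw [hcy]; simp [Curve.map_start, (hσymem n).1]
  have hchainx : ∀ n, (cx n).finish = (cx (n+1)).start := fun n => by
    rw [hfx n, hsx (n+1)]
  have hchainy : ∀ n, (cy n).finish = (cy (n+1)).start := fun n => by
    rw [hfy n, hsy (n+1)]
  -- length bounds
  have hdistp : ∀ n, dist (p n) (p (n+1)) ≤ 2 * δ * (1/2)^n := by
    intro n
    have e1 : dist (p n) (p (n+1)) = dist (ι (p n)) (ι (p (n+1))) := (hiso.dist_eq _ _).symm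
    have e2 : dist (ι (p n)) (ι (p (n+1))) ≤ dist x (ι (p n)) + dist x (ι (p (n+1))) :=
      dist_triangle_left _ _ _
    have e3 := (hpd n).le
    have e4 := (hpd (n+1)).le
    have e5 : δ * ((1:ℝ)/2)^(n+1) ≤ δ * ((1:ℝ)/2)^n := by
      have hps : ((1:ℝ)/2)^(n+1) ≤ ((1:ℝ)/2)^n := by
        rw [pow_succ]
        nlinarith [pow_nonneg (by norm_num : (0:ℝ) ≤ 1/2) n]
      nlinarith [hδ.le]
    rw [e1]; nlinarith
  have hdistq : ∀ n, dist (q n) (q (n+1)) ≤ 2 * δ * (1/2)^n := by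
    intro n
    have e1 : dist (q n) (q (n+1)) = dist (ι (q n)) (ι (q (n+1))) := (hiso.dist_eq _ _).symm
    have e2 : dist (ι (q n)) (ι (q (n+1))) ≤ dist y (ι (q n)) + dist y (ι (q (n+1))) :=
      dist_triangle_left _ _ _
    have e3 := (hqd n).le
    have e4 := (hqd (n+1)).le
    have e5 : δ * ((1:ℝ)/2)^(n+1) ≤ δ * ((1:ℝ)/2)^n := by
      have hps : ((1:ℝ)/2)^(n+1) ≤ ((1:ℝ)/2)^n := by
        rw [pow_succ]
        nlinarith [pow_nonneg (by norm_num : (0:ℝ) ≤ 1/2) n]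
      nlinarith [hδ.le]
    rw [e1]; nlinarith
  have hbx : ∀ n, (cx n).len ≤ (2*C*δ) * (1/2)^n := by
    intro n
    have h1 : (cx n).len = (σx n).len := rfl
    have h2 := (hσxmem n).2.2
    have h3 := hdistp n
    rw [h1]
    calc (σx n).len ≤ C * dist (p n) (p (n+1)) := h2
      _ ≤ C * (2 * δ * (1/2)^n) := by
          apply mul_le_mul_of_nonneg_left h3 hCpos.le
      _ = (2*C*δ) * (1/2)^n := by ring
  have hby : ∀ n, (cy n).len ≤ (2*C*δ) * (1/2)^n := by
    intro n
    have h2 := (hσymem n).2.2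
    have h3 := hdistq n
    calc (cy n).len = (σy n).len := rfl
      _ ≤ C * dist (q n) (q (n+1)) := h2
      _ ≤ C * (2 * δ * (1/2)^n) := by
          apply mul_le_mul_of_nonneg_left h3 hCpos.le
      _ = (2*C*δ) * (1/2)^n := by ring
  have hsumgeo : Summable (fun n : ℕ => (2*C*δ) * ((1:ℝ)/2)^n) :=
    summable_geometric_two.mul_left _
  have hsumx : Summable (fun n => (cx n).len) :=
    Summable.of_nonneg_of_le (fun n => (cx n).len_nonneg) hbx hsumgeo
  have hsumy : Summable (fun n => (cy n).len) :=
    Summable.of_nonneg_of_le (fun n => (cy n).len_nonneg) hby hsumgeo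
  have htsumgeo : (∑' n : ℕ, (2*C*δ) * ((1:ℝ)/2)^n) = 4*C*δ := by
    rw [_root_.tsum_mul_left, tsum_geometric_two]; ring
  have htsumx : (∑' n, (cx n).len) ≤ 4*C*δ := by
    rw [← htsumgeo]
    exact Summable.tsum_le_tsum hbx hsumx hsumgeo
  have htsumy : (∑' n, (cy n).len) ≤ 4*C*δ := by
    rw [← htsumgeo]
    exact Summable.tsum_le_tsum hby hsumy hsumgeo
  -- the limits
  have hgz : Tendsto (fun n : ℕ => δ * ((1:ℝ)/2)^(n+1)) atTop (𝓝 0) := by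
    have h0 : Tendsto (fun n : ℕ => ((1:ℝ)/2)^n) atTop (𝓝 0) :=
      tendsto_pow_atTop_nhds_zero_of_lt_one (by norm_num) (by norm_num)
    have h1 := (h0.comp (tendsto_add_atTop_nat 1)).const_mul δ
    simpa [Function.comp] using h1
  have htendx : Tendsto (fun n => (cx n).finish) atTop (𝓝 x) := by
    rw [tendsto_iff_dist_tendsto_zero]
    refine squeeze_zero (fun n => dist_nonneg) (fun n => ?_) hgz
    rw [hfx n, dist_comm]
    exact (hpd (n+1)).le
  have htendy : Tendsto (fun n => (cy n).finish) atTop (𝓝 y) := by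
    rw [tendsto_iff_dist_tendsto_zero]
    refine squeeze_zero (fun n => dist_nonneg) (fun n => ?_) hgz
    rw [hfy n, dist_comm]
    exact (hqd (n+1)).le
  -- build the pieces
  set Fx : Curve (UniformSpace.Completion Z) := limitCurve cx x hsumx hchainx htendx with hFx
  set Fy : Curve (UniformSpace.Completion Z) := limitCurve cy y hsumy hchainy htendy with hFy
  have hMfin : M.finish = Fy.start := by
    rw [hFy, limitCurve_start, hsy 0, hM]
    simp [Curve.map_finish, hσmmem.2.1]
  set G : Curve (UniformSpace.Completion Z) := M.trans Fy hMfin with hG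
  have hrevfin : Fx.reverse.finish = G.start := by
    rw [Curve.reverse_finish, hG, Curve.trans_start, hFx, limitCurve_start, hsx 0, hM]
    simp [Curve.map_start, hσmmem.1]
  set Γ : Curve (UniformSpace.Completion Z) := Fx.reverse.trans G hrevfin with hΓ
  -- membership in qcFam C' x y
  have hMlen : M.len ≤ C * (dist x y + 2 * δ) := by
    have h1 : M.len = σm.len := rfl
    have h2 := hσmmem.2.2
    have h3 : dist (p 0) (q 0) = dist (ι (p 0)) (ι (q 0)) := (hiso.dist_eq _ _).symm
    have h4 : dist (ι (p 0)) (ι (q 0)) ≤ dist (ι (p 0)) x + dist x y + dist y (ι (q 0)) := by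
      calc dist (ι (p 0)) (ι (q 0)) ≤ dist (ι (p 0)) y + dist y (ι (q 0)) := dist_triangle _ _ _
        _ ≤ (dist (ι (p 0)) x + dist x y) + dist y (ι (q 0)) := by
            gcongr
            exact dist_triangle _ _ _
        _ = dist (ι (p 0)) x + dist x y + dist y (ι (q 0)) := by ring
    have h5 := (hpd 0).le
    have h6 := (hqd 0).le
    rw [h1]
    have h7 : dist (ι (p 0)) x ≤ δ := by rw [dist_comm]; simpa using h5
    have h8 : dist y (ι (q 0)) ≤ δ := by simpa using h6
    calc σm.len ≤ C * dist (p 0) (q 0) := h2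
      _ ≤ C * (dist x y + 2 * δ) := by
          rw [h3]
          apply mul_le_mul_of_nonneg_left _ hCpos.le
          linarith
  have hΓlen : Γ.len ≤ C' * dist x y := by
    have h1 : Γ.len = Fx.len + (M.len + Fy.len) := by
      rw [hΓ, Curve.trans_len, Curve.reverse_len, hG, Curve.trans_len]
    have h2 : Fx.len = ∑' n, (cx n).len := by rw [hFx, limitCurve_len]
    have h3 : Fy.len = ∑' n, (cy n).len := by rw [hFy, limitCurve_len]
    have h4 : 10 * C * δ ≤ (C' - C) * dist x y := by
      have hB : (0:ℝ) < 10 * C := by positivity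
      have h5 := (le_div_iff₀ hB).mp hδd
      nlinarith
    rw [h1, h2, h3]
    nlinarith [htsumx, htsumy, hMlen]
  have hΓstart : Γ.start = x := by
    rw [hΓ, Curve.trans_start, Curve.reverse_start, hFx, limitCurve_finish]
  have hΓfinish : Γ.finish = y := by
    rw [hΓ, Curve.trans_finish, hG, Curve.trans_finish, hFy, limitCurve_finish]
  have hmem : Γ ∈ qcFam C' x y := ⟨hΓstart, hΓfinish, hΓlen⟩
  -- the integral is zero
  have hintx : Fx.integ ρ = 0 := by
    have h1 := limitCurve_integ_le cx x hsumx hchainx htendx ρ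
    rw [← hFx] at h1
    have h2 : ∀ n, (cx n).integ ρ = 0 := fun n => by
      rw [hcx]; rw [Curve.map_integ]; exact hσxint n
    simp only [h2, tsum_zero] at h1
    exact le_antisymm h1 (zero_le)
  have hinty : Fy.integ ρ = 0 := by
    have h1 := limitCurve_integ_le cy y hsumy hchainy htendy ρ
    rw [← hFy] at h1
    have h2 : ∀ n, (cy n).integ ρ = 0 := fun n => by
      rw [hcy]; rw [Curve.map_integ]; exact hσyint n
    simp only [h2, tsum_zero] at h1
    exact le_antisymm h1 (zero_le)
  have hintM : M.integ ρ = 0 := by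
    rw [hM, Curve.map_integ]; exact hσmint
  have hintΓ : Γ.integ ρ = 0 := by
    have h2 : G.integ ρ ≤ 0 := by
      calc G.integ ρ ≤ M.integ ρ + Fy.integ ρ := by
            rw [hG]; exact Curve.trans_integ_le _ _ _ ρ
        _ = 0 := by rw [hintM, hinty, add_zero]
    have h1 : Γ.integ ρ ≤ 0 := by
      calc Γ.integ ρ ≤ Fx.reverse.integ ρ + G.integ ρ := by
            rw [hΓ]; exact Curve.trans_integ_le _ _ _ ρ
        _ ≤ 0 + 0 := by
            refine add_le_add ?_ h2
            rw [Curve.reverse_integ, hintx]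
        _ = 0 := by ring
    exact le_antisymm h1 (zero_le)
  have := hρall Γ hmem
  rw [hintΓ] at this
  simp at this
end

section
/- Let Z be an infinitesimally doubling metric measure space that is ∞-thick (C,R)-quasiconvex. Then for every measurable function û : Z → ℝ with an ∞-weak upper gradient ρ ∈ L^∞(Z), the constant function C·‖ρ‖_{L^∞(Z)} is a Hajłasz gradient of û up to scale R; that is, there is a null set N such that |û(x) − û(y)| ≤ 2C·‖ρ‖_{L^∞(Z)}·d(x,y) for all x, y ∉ N with d(x,y) < R. -/
open MeasureTheory Metric Set ENNReal NNReal

variable {Z : Type*} [MetricSpace Z] [MeasurableSpace Z]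

lemma exists_pair_of_thick {Z : Type*} [MetricSpace Z] [MeasurableSpace Z] [BorelSpace Z]
    (μ : Measure Z) (C : ℝ) (hC : 1 ≤ C) (R : ℝ≥0∞) (h : ThickQC μ C R)
    (u : Z → ℝ) (ρ : Z → ℝ≥0∞) (hρ : IsInfWeakUpperGrad μ u ρ) (hρb : essSup ρ μ ≠ ∞)
    (x₀ : Z) (E F : Set Z) (hEm : MeasurableSet E) (hFm : MeasurableSet F)
    (hER : E ⊆ {z | edist z x₀ < R}) (hFR : F ⊆ {z | edist z x₀ < R})
    (hE : 0 < μ E) (hF : 0 < μ F) :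
    ∃ a ∈ E, ∃ b ∈ F, |u a - u b| ≤ C * (essSup ρ μ).toReal * dist a b := by
  obtain ⟨hρm, Γ₀, ⟨g₀, hg₀m, hg₀0, hg₀i⟩, hgrad⟩ := hρ
  set M := essSup ρ μ with hM
  set T : Set Z := {z | M < ρ z} with hT
  have hTm : MeasurableSet T := measurableSet_lt measurable_const hρm
  have hT0 : μ T = 0 := by
    have hae := ae_le_essSup (μ := μ) ρ
    rw [ae_iff] at hae
    simpa [hT, not_le] using hae
  set g : Z → ℝ≥0∞ := fun z => g₀ z + T.indicator (fun _ => ∞) z with hg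
  have hgm : Measurable g := hg₀m.add (measurable_const.indicator hTm)
  have hg0 : ∀ᵐ z ∂μ, g z = 0 := by
    have h1 : ∀ᵐ z ∂μ, z ∉ T := by
      rw [MeasureTheory.ae_iff]; simpa using hT0
    filter_upwards [hg₀0, h1] with z hz1 hz2
    simp [hg, hz1, Set.indicator_of_notMem hz2]
  have hneg := h x₀ E F hEm hFm hER hFR hE hF
  have hex : ∃ γ ∈ thickFam C E F, γ.integ g ≠ ∞ := by
    by_contra hcon
    push_neg at hcon
    exact hneg ⟨g, hgm, hg0, hcon⟩
  obtain ⟨γ, hγmem, hγfin⟩ := hex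
  set I : Set ℝ := Set.Icc (0 : ℝ) γ.len with hI
  set ν := (volume : Measure ℝ).restrict I with hν
  have hγae : AEMeasurable γ.toFun ν :=
    (γ.lip.continuousOn).aemeasurable measurableSet_Icc
  have hsplit : γ.integ g = γ.integ g₀ + γ.integ (T.indicator (fun _ => ∞)) := by
    simpa [Curve.integ, hg] using
      lintegral_add_left' (μ := ν) (hg₀m.comp_aemeasurable hγae)
        (fun s => T.indicator (fun _ => ∞) (γ.toFun s))
  rw [hsplit] at hγfin
  obtain ⟨hfin₀, hfinT⟩ := ENNReal.add_ne_top.1 hγfin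
  have hγΓ₀ : γ ∉ Γ₀ := fun hmem => hfin₀ (hg₀i γ hmem)
  have hub := hgrad γ hγΓ₀
  set U : Set ℝ := (fun s => ρ (γ.toFun s)) ⁻¹' Set.Ioi M with hU
  have hUnm : NullMeasurableSet U ν :=
    ((hρm.comp_aemeasurable hγae).nullMeasurable) measurableSet_Ioi
  have hindI : γ.integ (T.indicator (fun _ => ∞)) = ∞ * ν U := by
    have hpt : ∀ s, T.indicator (fun _ => (∞ : ℝ≥0∞)) (γ.toFun s)
        = U.indicator (fun _ => ∞) s := by
      intro s
      by_cases hs : s ∈ U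
      · have hsT : γ.toFun s ∈ T := hs
        simp [Set.indicator_of_mem, hs, hsT]
      · have hsT : γ.toFun s ∉ T := hs
        simp [Set.indicator_of_notMem, hs, hsT]
    calc γ.integ (T.indicator (fun _ => ∞))
        = ∫⁻ s, U.indicator (fun _ => ∞) s ∂ν := lintegral_congr hpt
      _ = ∫⁻ _ in U, ∞ ∂ν := lintegral_indicator₀ hUnm _
      _ = ∞ * ν U := setLIntegral_const U ∞
  have hνU : ν U = 0 := by
    by_contra hne
    rw [hindI] at hfinT
    exact hfinT (ENNReal.top_mul hne)
  have haeM : ∀ᵐ s ∂ν, ρ (γ.toFun s) ≤ M := by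
    rw [ae_iff]
    simpa [hU, not_le, Set.preimage, Set.mem_Ioi] using hνU
  have hlen : γ.integ ρ ≤ M * ENNReal.ofReal γ.len := by
    calc γ.integ ρ = ∫⁻ s, ρ (γ.toFun s) ∂ν := rfl
      _ ≤ ∫⁻ _, M ∂ν := lintegral_mono_ae haeM
      _ = M * ν Set.univ := lintegral_const M
      _ = M * ENNReal.ofReal γ.len := by
          rw [hν, Measure.restrict_apply_univ, hI, Real.volume_Icc, sub_zero]
  obtain ⟨hstart, hfinish, hlenle⟩ := hγmem
  refine ⟨γ.start, hstart, γ.finish, hfinish, ?_⟩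
  have hd0 : (0:ℝ) ≤ dist γ.start γ.finish := dist_nonneg
  have hchain : ENNReal.ofReal |u γ.start - u γ.finish|
      ≤ M * ENNReal.ofReal (C * dist γ.start γ.finish) := by
    refine hub.trans (hlen.trans ?_)
    exact mul_le_mul_right (ENNReal.ofReal_le_ofReal hlenle) M
  have hfin : M * ENNReal.ofReal (C * dist γ.start γ.finish) ≠ ∞ :=
    ENNReal.mul_ne_top hρb ENNReal.ofReal_ne_top
  have hreal := ENNReal.toReal_mono hfin hchain
  rw [ENNReal.toReal_ofReal (abs_nonneg _), ENNReal.toReal_mul,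
    ENNReal.toReal_ofReal (mul_nonneg (by linarith) hd0)] at hreal
  calc |u γ.start - u γ.finish| ≤ M.toReal * (C * dist γ.start γ.finish) := hreal
    _ = C * M.toReal * dist γ.start γ.finish := by ring

lemma null_of_locally_null {Z : Type*} [MetricSpace Z] [MeasurableSpace Z] [BorelSpace Z]
    (μ : Measure Z) (hballs : BallsPosFin μ) (A : Set Z) (r : ℝ) (hr : 0 < r)
    (hA : ∀ x ∈ A, μ (A ∩ Metric.ball x r) = 0) : μ A = 0 := by
  rcases isEmpty_or_nonempty Z with hZ | ⟨⟨z₀⟩⟩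
  · simp [Set.eq_empty_of_isEmpty A]
  · haveI : SigmaFinite μ := by
      apply Measure.sigmaFinite_of_countable (Set.countable_range (fun n : ℕ => Metric.ball z₀ n))
      · rintro s ⟨n, rfl⟩
        exact lt_of_le_of_lt
          (measure_mono (Metric.ball_subset_ball (by linarith : (n : ℝ) ≤ (n : ℝ) + 1)))
          (hballs z₀ ((n : ℝ) + 1) (by positivity)).2
      · apply Set.eq_univ_of_forall
        intro x
        obtain ⟨n, hn⟩ := exists_nat_gt (dist x z₀)
        exact ⟨Metric.ball z₀ n, ⟨n, rfl⟩, Metric.mem_ball.2 hn⟩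
    have hchains : ∀ c ⊆ {D : Set Z | D ⊆ A ∧ D.Pairwise (fun a b => r ≤ dist a b)},
        IsChain (· ⊆ ·) c → ∃ ub ∈ {D : Set Z | D ⊆ A ∧ D.Pairwise (fun a b => r ≤ dist a b)},
          ∀ s ∈ c, s ⊆ ub := by
      intro c hcS hchain
      refine ⟨⋃₀ c, ⟨Set.sUnion_subset fun s hs => (hcS hs).1, ?_⟩,
        fun s hs => Set.subset_sUnion_of_mem hs⟩
      rintro a ⟨s₁, hs₁, ha⟩ b ⟨s₂, hs₂, hb⟩ hab
      rcases hchain.total hs₁ hs₂ with hsub | hsub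
      · exact (hcS hs₂).2 (hsub ha) hb hab
      · exact (hcS hs₁).2 ha (hsub hb) hab
    obtain ⟨D, hDmax⟩ := zorn_subset
        {D : Set Z | D ⊆ A ∧ D.Pairwise (fun a b => r ≤ dist a b)} hchains
    have hDc : D.Countable := by
      rw [show D.Countable ↔ Countable ↥D from Set.countable_coe_iff]
      have key := Measure.countable_meas_pos_of_disjoint_iUnion (μ := μ)
        (As := fun d : D => Metric.ball (d : Z) (r / 2)) (fun d => measurableSet_ball) ?_
      · have huniv : {i : D | 0 < μ (Metric.ball (i : Z) (r / 2))} = Set.univ :=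
          Set.eq_univ_of_forall fun d => (hballs d (r / 2) (by linarith)).1
        rw [huniv] at key
        exact Set.countable_univ_iff.1 key
      · intro d₁ d₂ hne
        have hsep : r ≤ dist (d₁ : Z) (d₂ : Z) :=
          hDmax.1.2 d₁.2 d₂.2 (fun h => hne (Subtype.ext h))
        exact Metric.ball_disjoint_ball (by linarith)
    have hcover : A ⊆ ⋃ d ∈ D, A ∩ Metric.ball d r := by
      intro x hx
      by_contra hxc
      have hxout : ∀ d ∈ D, x ∉ Metric.ball d r := fun d hd hmem =>
        hxc (Set.mem_biUnion hd ⟨hx, hmem⟩)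
      have hxD : x ∉ D := fun hxD => hxout x hxD (Metric.mem_ball_self hr)
      have hins : insert x D ∈ {D : Set Z | D ⊆ A ∧ D.Pairwise (fun a b => r ≤ dist a b)} := by
        refine ⟨Set.insert_subset hx hDmax.1.1, ?_⟩
        rw [Set.pairwise_insert]
        refine ⟨hDmax.1.2, fun d hd _ => ?_⟩
        have h1 : ¬ dist x d < r := fun hlt => hxout d hd (Metric.mem_ball.2 hlt)
        exact ⟨not_lt.1 h1, by rw [dist_comm]; exact not_lt.1 h1⟩
      have := hDmax.2 hins (Set.subset_insert x D)
      exact hxD (this (Set.mem_insert x D))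
    refine measure_mono_null hcover ?_
    exact (measure_biUnion_null_iff hDc).2 fun d hd => hA d (hDmax.1.1 hd)

/-- In an infinitesimally doubling, ∞-thick (C,R)-quasiconvex metric
measure space, the constant `C·‖ρ‖_{L^∞}` is a Hajłasz gradient up to scale `R` of any
measurable function with ∞-weak upper gradient `ρ ∈ L^∞`:
`|u x − u y| ≤ 2C‖ρ‖_{L^∞} d(x,y)` for `x, y` outside a null set with `d(x,y) < R`. -/
theorem hajlasz_gradient_of_thickQC
    {Z : Type*} [MetricSpace Z] [MeasurableSpace Z] [BorelSpace Z] (μ : Measure Z)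
    (hdb : InfinitesimallyDoubling μ)
    (hballs : BallsPosFin μ)
    (C : ℝ) (hC : 1 ≤ C) (R : ℝ≥0∞) (hR : 0 < R)
    (h : ThickQC μ C R)
    (u : Z → ℝ) (hu : Measurable u)
    (ρ : Z → ℝ≥0∞) (hρ : IsInfWeakUpperGrad μ u ρ) (hρb : essSup ρ μ ≠ ∞) :
    ∃ N : Set Z, μ N = 0 ∧ ∀ x ∉ N, ∀ y ∉ N, edist x y < R →
      |u x - u y| ≤ 2 * C * (essSup ρ μ).toReal * dist x y := by
  classical
  set M := essSup ρ μ with hM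
  set lam := C * M.toReal with hlam
  have hlam0 : (0:ℝ) ≤ lam := mul_nonneg (by linarith) ENNReal.toReal_nonneg
  set Aplus : ℚ → ℚ → Set Z := fun q r =>
    {x | 0 < (r : ℝ) ∧ (q : ℝ) < u x ∧ μ (Metric.ball x (r : ℝ) ∩ {z | (q : ℝ) < u z}) = 0}
    with hAplus
  set Aminus : ℚ → ℚ → Set Z := fun q r =>
    {x | 0 < (r : ℝ) ∧ u x < (q : ℝ) ∧ μ (Metric.ball x (r : ℝ) ∩ {z | u z < (q : ℝ)}) = 0}
    with hAminus
  set N : Set Z := (⋃ q : ℚ, ⋃ r : ℚ, Aplus q r) ∪ (⋃ q : ℚ, ⋃ r : ℚ, Aminus q r) with hN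
  have hAplus0 : ∀ q r : ℚ, μ (Aplus q r) = 0 := by
    intro q r
    by_cases hr : 0 < (r : ℝ)
    · refine null_of_locally_null μ hballs _ (r : ℝ) hr ?_
      intro x hx
      refine measure_mono_null (fun z hz => ?_) hx.2.2
      exact ⟨hz.2, hz.1.2.1⟩
    · have : Aplus q r = ∅ := Set.eq_empty_iff_forall_notMem.2 fun x hx => hr hx.1
      simp [this]
  have hAminus0 : ∀ q r : ℚ, μ (Aminus q r) = 0 := by
    intro q r
    by_cases hr : 0 < (r : ℝ)
    · refine null_of_locally_null μ hballs _ (r : ℝ) hr ?_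
      intro x hx
      refine measure_mono_null (fun z hz => ?_) hx.2.2
      exact ⟨hz.2, hz.1.2.1⟩
    · have : Aminus q r = ∅ := Set.eq_empty_iff_forall_notMem.2 fun x hx => hr hx.1
      simp [this]
  have hN0 : μ N = 0 :=
    measure_union_null
      (measure_iUnion_null fun q => measure_iUnion_null fun r => hAplus0 q r)
      (measure_iUnion_null fun q => measure_iUnion_null fun r => hAminus0 q r)
  have key : ∀ x ∉ N, ∀ y ∉ N, edist x y < R → u x - u y ≤ 2 * lam * dist x y := by
    intro x hx y hy hxy
    by_contra hcon
    push_neg at hcon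
    set d := dist x y with hd
    have hd0 : (0:ℝ) ≤ d := dist_nonneg
    set δ := (u x - u y - 2 * lam * d) / 4 with hδdef
    have hδ : 0 < δ := by
      have : 0 < u x - u y - 2 * lam * d := by linarith
      positivity
    obtain ⟨q₁, hq₁⟩ := exists_rat_btwn (show u x - δ < u x by linarith)
    obtain ⟨q₂, hq₂⟩ := exists_rat_btwn (show u y < u y + δ by linarith)
    have hdR : ENNReal.ofReal d < R := by rwa [hd, ← edist_dist]
    have hrex : ∃ ε : ℝ, 0 < ε ∧ ENNReal.ofReal (d + ε) < R := by
      rcases eq_or_ne R ∞ with hRtop | hRtop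
      · exact ⟨1, one_pos, by simp [hRtop]⟩
      · have hdlt : d < R.toReal := (ENNReal.ofReal_lt_iff_lt_toReal hd0 hRtop).1 hdR
        refine ⟨(R.toReal - d) / 2, by linarith, ?_⟩
        rw [ENNReal.ofReal_lt_iff_lt_toReal (by linarith) hRtop]
        linarith
    obtain ⟨ε, hε, hεR⟩ := hrex
    obtain ⟨r, hr1, hr2⟩ := exists_rat_btwn
      (show (0:ℝ) < min ε (δ / (lam + 1)) by
        apply lt_min hε
        positivity)
    have hr0 : 0 < (r : ℝ) := hr1
    have hrε : (r : ℝ) < ε := lt_of_lt_of_le hr2 (min_le_left _ _)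
    have hrδ : lam * r < δ := by
      have h1 : (r : ℝ) < δ / (lam + 1) := lt_of_lt_of_le hr2 (min_le_right _ _)
      have h3 : (r : ℝ) * (lam + 1) < δ := (lt_div_iff₀ (by linarith)).1 h1
      nlinarith
    set E := Metric.ball x (r : ℝ) ∩ {z | (q₁ : ℝ) < u z} with hE
    set F := Metric.ball y (r : ℝ) ∩ {z | u z < (q₂ : ℝ)} with hF
    have hEm : MeasurableSet E := measurableSet_ball.inter (measurableSet_lt measurable_const hu)
    have hFm : MeasurableSet F := measurableSet_ball.inter (measurableSet_lt hu measurable_const)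
    have hEpos : 0 < μ E := by
      rcases eq_or_ne (μ E) 0 with h0 | h0
      · exact absurd (Or.inl (Set.mem_iUnion.2 ⟨q₁, Set.mem_iUnion.2 ⟨r, show _ ∧ _ ∧ _ from ⟨hr0, hq₁.2, h0⟩⟩⟩)) hx
      · exact zero_le.lt_of_ne (Ne.symm h0)
    have hFpos : 0 < μ F := by
      rcases eq_or_ne (μ F) 0 with h0 | h0
      · exact absurd (Or.inr (Set.mem_iUnion.2 ⟨q₂, Set.mem_iUnion.2 ⟨r, show _ ∧ _ ∧ _ from ⟨hr0, hq₂.1, h0⟩⟩⟩)) hy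
      · exact zero_le.lt_of_ne (Ne.symm h0)
    have hER : E ⊆ {z | edist z x < R} := by
      intro z hz
      have h1 : dist z x ≤ d + ε := by
        have := Metric.mem_ball.1 hz.1
        linarith
      calc edist z x = ENNReal.ofReal (dist z x) := edist_dist z x
        _ ≤ ENNReal.ofReal (d + ε) := ENNReal.ofReal_le_ofReal h1
        _ < R := hεR
    have hFR : F ⊆ {z | edist z x < R} := by
      intro z hz
      have h1 : dist z x ≤ d + ε := by
        have h2 := Metric.mem_ball.1 hz.1
        have h3 : dist z x ≤ dist z y + dist y x := dist_triangle z y x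
        rw [dist_comm y x] at h3
        linarith
      calc edist z x = ENNReal.ofReal (dist z x) := edist_dist z x
        _ ≤ ENNReal.ofReal (d + ε) := ENNReal.ofReal_le_ofReal h1
        _ < R := hεR
    obtain ⟨a, ha, b, hb, hab⟩ := exists_pair_of_thick μ C hC R h u ρ hρ hρb x E F
      hEm hFm hER hFR hEpos hFpos
    rw [← hM, ← hlam] at hab
    have hdab : dist a b ≤ d + 2 * r := by
      have h1 : dist a x < r := Metric.mem_ball.1 ha.1
      have h2 : dist b y < r := Metric.mem_ball.1 hb.1
      have h3 : dist a b ≤ dist a x + dist x y + dist y b := dist_triangle4 a x y b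
      rw [dist_comm y b] at h3
      linarith
    have hub2 : u a - u b ≤ lam * (d + 2 * r) := by
      have h1 := le_trans (le_abs_self _) hab
      have h2 : lam * dist a b ≤ lam * (d + 2 * r) := mul_le_mul_of_nonneg_left hdab hlam0
      linarith
    have hlb : (q₁ : ℝ) - q₂ < u a - u b := sub_lt_sub ha.2 hb.2
    have h4δ : 4 * δ = u x - u y - 2 * lam * d := by rw [hδdef]; ring
    have hq : 2 * lam * d + 2 * δ < (q₁ : ℝ) - q₂ := by
      have e1 : u x - δ < q₁ := hq₁.1
      have e2 : (q₂ : ℝ) < u y + δ := hq₂.2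
      linarith
    have hfinal : lam * (d + 2 * r) < (q₁ : ℝ) - q₂ := by nlinarith
    linarith
  refine ⟨N, hN0, ?_⟩
  intro x hx y hy hxy
  have h1 := key x hx y hy hxy
  have h2 := key y hy x hx (by rwa [edist_comm])
  rw [dist_comm y x] at h2
  have heq : 2 * C * M.toReal * dist x y = 2 * lam * dist x y := by rw [hlam]; ring
  rw [abs_sub_le_iff]
  constructor <;> linarith
end

section
/- Let Z be a locally complete metric measure space with infinitesimally doubling reference measure, finite and positive on all balls, which is very ∞-thick (C,R)-quasiconvex. Then the essential distance d̂ satisfies d(x,y) ≤ d̂(x,y) ≤ C·d(x,y) for every pair x, y ∈ Z with d(x,y) < R. -/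
open MeasureTheory Metric Set ENNReal NNReal

variable {Z : Type*} [MetricSpace Z] [MeasurableSpace Z]

variable {Z : Type*} [MetricSpace Z] [MeasurableSpace Z]

/-- `d_Γ(x,y)`: infimum of lengths of curves from `x` to `y` avoiding `Γ`
(`∞` if there is none). -/
noncomputable def dGamma (Γ : Set (Curve Z)) (x y : Z) : ℝ≥0∞ :=
  ⨅ (γ : Curve Z) (_ : γ ∉ Γ ∧ γ.start = x ∧ γ.finish = y), ENNReal.ofReal γ.len

/-- The essential distance `d̂(x,y) = sup { d_Γ(x,y) : Γ ∞-negligible }`. -/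
noncomputable def essDist (μ : Measure Z) (x y : Z) : ℝ≥0∞ :=
  ⨆ (Γ : Set (Curve Z)) (_ : InfNegligible μ Γ), dGamma Γ x y

/-- In a locally complete, infinitesimally doubling (balls positive and
finite), very ∞-thick (C,R)-quasiconvex metric measure space, the essential distance
satisfies `d(x,y) ≤ d̂(x,y) ≤ C·d(x,y)` whenever `d(x,y) < R`. -/
theorem essDist_comparable
    [BorelSpace Z] (μ : Measure Z)
    (hloc : LocallyComplete Z)
    (hdb : InfinitesimallyDoubling μ)
    (hballs : BallsPosFin μ)
    (C : ℝ) (hC : 1 ≤ C) (R : ℝ≥0∞) (hR : 0 < R)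
    (h : VeryThick μ C R) :
    ∀ x y : Z, edist x y < R →
      ENNReal.ofReal (dist x y) ≤ essDist μ x y ∧
      essDist μ x y ≤ ENNReal.ofReal (C * dist x y) := by
  intro x y hxy
  constructor
  · -- lower bound via Γ = ∅
    have hneg : InfNegligible μ (∅ : Set (Curve Z)) :=
      ⟨fun _ => 0, measurable_const, Filter.Eventually.of_forall fun _ => rfl,
        fun γ hγ => absurd hγ (Set.notMem_empty γ)⟩
    refine le_trans ?_ (le_iSup₂ (f := fun Γ (_ : InfNegligible μ Γ) => dGamma Γ x y)
      (∅ : Set (Curve Z)) hneg)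
    refine le_iInf₂ fun γ hγ => ?_
    obtain ⟨-, hs, hf⟩ := hγ
    have hlen : dist x y ≤ γ.len := by
      have h0 : (0 : ℝ) ∈ Set.Icc (0 : ℝ) γ.len := ⟨le_refl 0, γ.len_nonneg⟩
      have h1 : γ.len ∈ Set.Icc (0 : ℝ) γ.len := ⟨γ.len_nonneg, le_refl _⟩
      have := γ.lip.dist_le_mul 0 h0 γ.len h1
      simpa [Curve.start, Curve.finish, ← hs, ← hf, abs_of_nonneg γ.len_nonneg,
        Real.dist_eq] using this
    exact ENNReal.ofReal_le_ofReal hlen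
  · refine iSup₂_le fun Γ hΓ => ?_
    -- find a quasiconvex curve avoiding Γ
    have hthick : ¬ InfNegligible μ (qcFam C x y) := by
      refine h x x y ?_ ?_
      · simpa using hR
      · simpa [edist_comm] using hxy
    have hex : ∃ γ ∈ qcFam C x y, γ ∉ Γ := by
      by_contra hcon
      push_neg at hcon
      obtain ⟨ρ, hm, hae, hinf⟩ := hΓ
      exact hthick ⟨ρ, hm, hae, fun γ hγ => hinf γ (hcon γ hγ)⟩
    obtain ⟨γ, ⟨hs, hf, hl⟩, hnot⟩ := hex
    refine le_trans (iInf₂_le γ ⟨hnot, hs, hf⟩) ?_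
    exact ENNReal.ofReal_le_ofReal hl
end

section
/- Let Z be a metric measure space that is ∞-thick (C,R)-quasiconvex and infinitesimally doubling, and let C′ > C and r ∈ (0,R]. Then Z supports a weak (1,∞)-Poincaré inequality up to scale r with dilation constant λ = C′·r/r and constant 2C: for every u ∈ W^{1,∞}(Z) with minimal ∞-weak upper gradient ρ_u and every ball B(x,r′) with r′ ≤ r, ⨍_{B(x,r′)} |u − u_{B(x,r′)}| dμ ≤ 2C · diam(B(x,r′)) · ‖ρ_u‖_{L^∞(B(x, C′r′))}. -/
open MeasureTheory Metric Set ENNReal NNReal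

variable {Z : Type*} [MetricSpace Z] [MeasurableSpace Z]

/-- ∞-thick (C,R)-quasiconvexity with a real scale `R`. -/
def ThickQCr {Z : Type*} [MetricSpace Z] [MeasurableSpace Z]
    (μ : Measure Z) (C R : ℝ) : Prop :=
  ∀ x₀ : Z, ∀ E F : Set Z, MeasurableSet E → MeasurableSet F →
    E ⊆ Metric.ball x₀ R → F ⊆ Metric.ball x₀ R →
    0 < μ E → 0 < μ F → ¬ InfNegligible μ (thickFam C E F)

private lemma exists_eps_aux (C C' : ℝ) (hC : 1 ≤ C) (hC' : C < C') :
    ∃ ε : ℝ, 0 < ε ∧ ε ≤ 1 ∧ (C + 1) * (1 + ε) ≤ 2 * C' := by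
  have hC1 : (0:ℝ) < C + 1 := by linarith
  have hlt : (1:ℝ) < 2 * C' / (C + 1) := by
    rw [lt_div_iff₀ hC1]; linarith
  refine ⟨min 1 (2 * C' / (C + 1) - 1), ?_, min_le_left _ _, ?_⟩
  · exact lt_min one_pos (by linarith)
  · have h2 : 1 + min 1 (2 * C' / (C + 1) - 1) ≤ 2 * C' / (C + 1) := by
      have := min_le_right 1 (2 * C' / (C + 1) - 1); linarith
    calc (C + 1) * (1 + min 1 (2 * C' / (C + 1) - 1))
        ≤ (C + 1) * (2 * C' / (C + 1)) := mul_le_mul_of_nonneg_left h2 (by linarith)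
      _ = 2 * C' := by field_simp

private lemma key_estimate
    {Z : Type*} [MetricSpace Z] [MeasurableSpace Z] [BorelSpace Z] (μ : Measure Z)
    (C : ℝ) (hC : 1 ≤ C) (R : ℝ) (h : ThickQCr μ C R)
    (C' : ℝ)
    (u : Z → ℝ) (ρ : Z → ℝ≥0∞) (hρ : IsInfWeakUpperGrad μ u ρ)
    (x : Z) (r' ε : ℝ) (hr'0 : 0 < r') (hr'R : r' ≤ R)
    (hε0 : 0 < ε) (hε1 : ε ≤ 1) (hεg : (C + 1) * (1 + ε) ≤ 2 * C')
    (hM : essSup ρ (μ.restrict (Metric.ball x (C' * r'))) ≠ ∞)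
    (E F : Set Z) (hEm : MeasurableSet E) (hFm : MeasurableSet F)
    (hE1 : E ⊆ Metric.ball x r') (hF1 : F ⊆ Metric.ball x (ε * r'))
    (hEpos : 0 < μ E) (hFpos : 0 < μ F)
    (hc : ∀ z ∈ E, ∀ w ∈ F, c ≤ |u z - u w|) :
    c ≤ C * Metric.diam (Metric.ball x r') *
      (essSup ρ (μ.restrict (Metric.ball x (C' * r')))).toReal := by
  set B' := Metric.ball x (C' * r') with hB'def
  set M := essSup ρ (μ.restrict B') with hMdef
  by_contra hlt
  push_neg at hlt
  have hdiam0 : 0 ≤ Metric.diam (Metric.ball x r') := Metric.diam_nonneg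
  have hK0 : 0 ≤ C * Metric.diam (Metric.ball x r') * M.toReal := by positivity
  have hc0 : 0 < c := lt_of_le_of_lt hK0 hlt
  have hεr' : ε * r' ≤ r' := by nlinarith
  refine h x E F hEm hFm (hE1.trans (Metric.ball_subset_ball hr'R))
    ((hF1.trans (Metric.ball_subset_ball hεr')).trans (Metric.ball_subset_ball hr'R))
    hEpos hFpos ?_
  obtain ⟨hρm, Γ₀, ⟨ρ₀, hρ₀m, hρ₀0, hΓ₀⟩, hup⟩ := hρ
  set D := B' ∩ {z | M < ρ z} with hDdef
  have hDm : MeasurableSet D :=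
    measurableSet_ball.inter (measurableSet_lt measurable_const hρm)
  have hD0 : μ D = 0 := by
    have h1 : ∀ᵐ z ∂μ.restrict B', ρ z ≤ M := ae_le_essSup
    have h2 : (μ.restrict B') {z | M < ρ z} = 0 := by
      rw [ae_iff] at h1
      simpa [not_le] using h1
    rw [Measure.restrict_apply (measurableSet_lt measurable_const hρm)] at h2
    rw [hDdef, Set.inter_comm]
    exact h2
  refine ⟨fun z => ρ₀ z + D.indicator (fun _ => (∞ : ℝ≥0∞)) z,
    hρ₀m.add (measurable_const.indicator hDm), ?_, ?_⟩
  · have hDae : ∀ᵐ z ∂μ, z ∉ D := by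
      rw [ae_iff]; simpa using hD0
    filter_upwards [hρ₀0, hDae] with z h1 h2
    simp [h1, Set.indicator_of_notMem h2]
  · rintro γ ⟨hstart, hfinish, hlen⟩
    have hlen0 := γ.len_nonneg
    by_cases hΓ : γ ∈ Γ₀
    · have htop := hΓ₀ γ hΓ
      have hmono : γ.integ ρ₀
          ≤ γ.integ (fun z => ρ₀ z + D.indicator (fun _ => (∞ : ℝ≥0∞)) z) :=
        lintegral_mono fun s => self_le_add_right _ _
      rw [htop] at hmono
      exact top_unique hmono
    · -- geometry: the curve stays in B'
      have hα : dist γ.start x < r' := Metric.mem_ball.mp (hE1 hstart)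
      have hβ : dist γ.finish x < ε * r' := Metric.mem_ball.mp (hF1 hfinish)
      have hgeo : ∀ s ∈ Set.Icc (0:ℝ) γ.len, γ.toFun s ∈ B' := by
        intro s hs
        obtain ⟨hs0, hs1⟩ := hs
        have h0mem : (0:ℝ) ∈ Set.Icc (0:ℝ) γ.len := ⟨le_refl 0, hlen0⟩
        have hlmem : γ.len ∈ Set.Icc (0:ℝ) γ.len := ⟨hlen0, le_refl _⟩
        have d1 : dist (γ.toFun s) γ.start ≤ s := by
          have := γ.lip.dist_le_mul s ⟨hs0, hs1⟩ 0 h0mem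
          rw [Real.dist_eq] at this
          simpa [Curve.start, abs_of_nonneg hs0] using this
        have d2 : dist (γ.toFun s) γ.finish ≤ γ.len - s := by
          have := γ.lip.dist_le_mul s ⟨hs0, hs1⟩ γ.len hlmem
          rw [Real.dist_eq] at this
          simpa [Curve.finish, abs_of_nonpos (by linarith : s - γ.len ≤ 0)] using this
        have t1 : dist (γ.toFun s) x ≤ dist (γ.toFun s) γ.start + dist γ.start x :=
          dist_triangle _ _ _
        have t2 : dist (γ.toFun s) x ≤ dist (γ.toFun s) γ.finish + dist γ.finish x :=
          dist_triangle _ _ _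
        have t3 : dist γ.start γ.finish ≤ dist γ.start x + dist γ.finish x := by
          rw [dist_comm γ.finish x] at *
          exact dist_triangle _ _ _
        rw [hB'def, Metric.mem_ball]
        have hsum : dist γ.start x + dist γ.finish x < (1 + ε) * r' := by nlinarith
        have h5 : γ.len ≤ C * (dist γ.start x + dist γ.finish x) := by
          nlinarith [mul_le_mul_of_nonneg_left t3 (show (0:ℝ) ≤ C by linarith)]
        have h6 : 2 * dist (γ.toFun s) x < (C + 1) * ((1 + ε) * r') := by
          nlinarith [mul_lt_mul_of_pos_left hsum (show (0:ℝ) < C + 1 by linarith)]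
        have h7 : (C + 1) * ((1 + ε) * r') ≤ 2 * C' * r' := by
          nlinarith [mul_le_mul_of_nonneg_right hεg hr'0.le]
        linarith
      have hγae : AEMeasurable γ.toFun (volume.restrict (Set.Icc (0:ℝ) γ.len)) :=
        γ.lip.continuousOn.aemeasurable measurableSet_Icc
      have hgae : AEMeasurable
          (fun s => D.indicator (fun _ => (∞ : ℝ≥0∞)) (γ.toFun s))
          (volume.restrict (Set.Icc (0:ℝ) γ.len)) :=
        (measurable_const.indicator hDm).comp_aemeasurable hγae
      have hI : ∫⁻ s in Set.Icc (0:ℝ) γ.len,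
          D.indicator (fun _ => (∞ : ℝ≥0∞)) (γ.toFun s) = ∞ := by
        by_contra hI
        have hae1 : ∀ᵐ s ∂(volume.restrict (Set.Icc (0:ℝ) γ.len)),
            D.indicator (fun _ => (∞ : ℝ≥0∞)) (γ.toFun s) < ∞ := ae_lt_top' hgae hI
        have hae2 : ∀ᵐ s ∂(volume.restrict (Set.Icc (0:ℝ) γ.len)),
            ρ (γ.toFun s) ≤ M := by
          filter_upwards [hae1, ae_restrict_mem measurableSet_Icc] with s h1 h2
          by_contra h3
          push_neg at h3
          have hmem : γ.toFun s ∈ D := ⟨hgeo s h2, h3⟩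
          rw [Set.indicator_of_mem hmem] at h1
          exact (lt_irrefl _ h1)
        have hbound : γ.integ ρ ≤ M * ENNReal.ofReal γ.len := by
          simp only [Curve.integ]
          calc ∫⁻ s in Set.Icc (0:ℝ) γ.len, ρ (γ.toFun s)
              ≤ ∫⁻ _s in Set.Icc (0:ℝ) γ.len, M := lintegral_mono_ae hae2
            _ = M * volume (Set.Icc (0:ℝ) γ.len) := setLIntegral_const _ _
            _ = M * ENNReal.ofReal γ.len := by rw [Real.volume_Icc, sub_zero]
        have hdd : dist γ.start γ.finish ≤ Metric.diam (Metric.ball x r') :=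
          Metric.dist_le_diam_of_mem Metric.isBounded_ball (hE1 hstart)
            (Metric.ball_subset_ball hεr' (hF1 hfinish))
        have h5 : ENNReal.ofReal γ.len
            ≤ ENNReal.ofReal (C * Metric.diam (Metric.ball x r')) := by
          apply ENNReal.ofReal_le_ofReal
          calc γ.len ≤ C * dist γ.start γ.finish := hlen
            _ ≤ C * Metric.diam (Metric.ball x r') :=
              mul_le_mul_of_nonneg_left hdd (by linarith)
        have hchain : ENNReal.ofReal c
            ≤ M * ENNReal.ofReal (C * Metric.diam (Metric.ball x r')) :=
          (ENNReal.ofReal_le_ofReal (hc _ hstart _ hfinish)).trans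
            ((hup γ hΓ).trans (hbound.trans (mul_le_mul_right h5 M)))
        have h7 : (ENNReal.ofReal c).toReal
            ≤ (M * ENNReal.ofReal (C * Metric.diam (Metric.ball x r'))).toReal :=
          ENNReal.toReal_mono (ENNReal.mul_ne_top hM ENNReal.ofReal_ne_top) hchain
        rw [ENNReal.toReal_ofReal hc0.le, ENNReal.toReal_mul,
          ENNReal.toReal_ofReal (by positivity)] at h7
        nlinarith
      have hmono : (∫⁻ s in Set.Icc (0:ℝ) γ.len,
          D.indicator (fun _ => (∞ : ℝ≥0∞)) (γ.toFun s))
          ≤ γ.integ (fun z => ρ₀ z + D.indicator (fun _ => (∞ : ℝ≥0∞)) z) :=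
        lintegral_mono fun s => self_le_add_left _ _
      rw [hI] at hmono
      exact top_unique hmono

/-- An infinitesimally doubling, ∞-thick (C,R)-quasiconvex metric
measure space supports a weak (1,∞)-Poincaré inequality up to scale `r ∈ (0,R]` with
dilation `C'` and constant `2C`: for every `u ∈ W^{1,∞}(Z)` with ∞-weak upper
gradient `ρ` and every ball of radius `r' ≤ r`,
`⨍_B |u − u_B| dμ ≤ 2C · diam B · ‖ρ‖_{L^∞(C'B)}`. -/
theorem weak_poincare_of_thickQC
    {Z : Type*} [MetricSpace Z] [MeasurableSpace Z] [BorelSpace Z] (μ : Measure Z)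
    (hdb : InfinitesimallyDoubling μ)
    (hballs : BallsPosFin μ)
    (C : ℝ) (hC : 1 ≤ C) (R : ℝ) (hR : 0 < R)
    (h : ThickQCr μ C R)
    (C' : ℝ) (hC' : C < C') (r : ℝ) (hr : 0 < r) (hrR : r ≤ R)
    (u : Z → ℝ) (hu : MemLp u ⊤ μ)
    (ρ : Z → ℝ≥0∞) (hρ : IsInfWeakUpperGrad μ u ρ) (hρb : essSup ρ μ ≠ ∞) :
    ∀ (x : Z) (r' : ℝ), 0 < r' → r' ≤ r →
      ⨍ z in Metric.ball x r', |u z - ⨍ w in Metric.ball x r', u w ∂μ| ∂μ ≤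
        2 * C * Metric.diam (Metric.ball x r') *
          (essSup ρ (μ.restrict (Metric.ball x (C' * r')))).toReal := by
  intro x r' hr'0 hr'r
  obtain ⟨ε, hε0, hε1, hεg⟩ := exists_eps_aux C C' hC hC'
  set B := Metric.ball x r' with hBdef
  set M := essSup ρ (μ.restrict (Metric.ball x (C' * r'))) with hMdef
  have hMne : M ≠ ∞ :=
    ne_top_of_le_ne_top hρb
      (essSup_mono_measure Measure.restrict_le_self.absolutelyContinuous)
  have hr'R : r' ≤ R := le_trans hr'r hrR
  have hBpos : 0 < μ B := (hballs x r' hr'0).1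
  have hBfin : μ B < ∞ := (hballs x r' hr'0).2
  have htpos : 0 < (μ B).toReal := ENNReal.toReal_pos hBpos.ne' hBfin.ne
  haveI : IsFiniteMeasure (μ.restrict B) :=
    ⟨by rwa [Measure.restrict_apply_univ]⟩
  have hum := hu.aestronglyMeasurable
  set v := hum.mk u with hvdef
  have hvm : Measurable v := hum.stronglyMeasurable_mk.measurable
  have huv : ∀ᵐ z ∂μ, u z = v z := hum.ae_eq_mk
  set N := toMeasurable μ {z | u z ≠ v z} with hNdef
  have hN0 : μ N = 0 := by
    rw [hNdef, measure_toMeasurable]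
    exact ae_iff.mp huv
  have hNout : ∀ z, z ∉ N → u z = v z := by
    intro z hz
    by_contra h'
    exact hz (subset_toMeasurable _ _ h')
  set K := 2 * C * Metric.diam B * M.toReal with hKdef
  have hdiam0 : 0 ≤ Metric.diam B := Metric.diam_nonneg
  have hK0 : 0 ≤ K := by
    rw [hKdef]; positivity
  set Ea : ℝ → Set Z := fun a => ({z | a < v z} ∩ B) \ N with hEadef
  set Fb : ℝ → Set Z := fun b => ({z | v z < b} ∩ B) \ N with hFbdef
  have hEam : ∀ a, MeasurableSet (Ea a) := fun a =>
    ((measurableSet_lt measurable_const hvm).inter measurableSet_ball).diff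
      (measurableSet_toMeasurable _ _)
  have hFbm : ∀ b, MeasurableSet (Fb b) := fun b =>
    ((measurableSet_lt hvm measurable_const).inter measurableSet_ball).diff
      (measurableSet_toMeasurable _ _)
  have main : ∀ a b : ℝ, 0 < μ (Ea a) → 0 < μ (Fb b) → a - b ≤ K := by
    intro a b ha hb
    by_contra hab
    push_neg at hab
    set m := (a + b) / 2 with hmdef
    set S1 := (Metric.ball x (ε * r') \ N) ∩ {z | m < v z} with hS1def
    set S2 := (Metric.ball x (ε * r') \ N) ∩ {z | v z ≤ m} with hS2def
    have hS1m : MeasurableSet S1 :=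
      (measurableSet_ball.diff (measurableSet_toMeasurable _ _)).inter
        (measurableSet_lt measurable_const hvm)
    have hS2m : MeasurableSet S2 :=
      (measurableSet_ball.diff (measurableSet_toMeasurable _ _)).inter
        (measurableSet_le hvm measurable_const)
    have hGpos : 0 < μ (Metric.ball x (ε * r') \ N) := by
      rw [measure_diff_null hN0]
      exact (hballs x (ε * r') (by positivity)).1
    have hsplit : Metric.ball x (ε * r') \ N ⊆ S1 ∪ S2 := by
      intro z hz
      by_cases h' : m < v z
      · exact Or.inl ⟨hz, h'⟩
      · exact Or.inr ⟨hz, not_lt.mp h'⟩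
    have hUpos : 0 < μ (S1 ∪ S2) := lt_of_lt_of_le hGpos (measure_mono hsplit)
    have hhalf : C * Metric.diam B * M.toReal < (a - b) / 2 := by
      rw [hKdef] at hab; linarith
    by_cases h1 : 0 < μ S1
    · have hkey := key_estimate μ C hC R h C' u ρ hρ x r' ε hr'0 hr'R hε0 hε1 hεg hMne
        (Fb b) S1 (hFbm b) hS1m
        (fun z hz => hz.1.2) (fun z hz => hz.1.1)
        hb h1 (c := m - b) ?_
      · rw [← hMdef, ← hBdef] at hkey; linarith
      · intro z hz w hw
        have h2 : u z = v z := hNout z hz.2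
        have h3 : u w = v w := hNout w hw.1.2
        have h4 : v z < b := hz.1.1
        have h5 : m < v w := hw.2
        rw [abs_sub_comm]
        calc m - b ≤ u w - u z := by rw [h2, h3]; linarith
          _ ≤ |u w - u z| := le_abs_self _
    · have h1' : μ S1 = 0 := le_antisymm (not_lt.mp h1) zero_le
      have h2 : 0 < μ S2 := by
        rcases (zero_le : 0 ≤ μ S2).lt_or_eq with h' | h'
        · exact h'
        · exfalso
          have hle := measure_union_le (μ := μ) S1 S2
          rw [h1', ← h', add_zero] at hle
          exact hUpos.ne' (le_antisymm hle zero_le)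
      have hkey := key_estimate μ C hC R h C' u ρ hρ x r' ε hr'0 hr'R hε0 hε1 hεg hMne
        (Ea a) S2 (hEam a) hS2m
        (fun z hz => hz.1.2) (fun z hz => hz.1.1)
        ha h2 (c := a - m) ?_
      · rw [← hMdef, ← hBdef] at hkey; linarith
      · intro z hz w hw
        have h3 : u z = v z := hNout z hz.2
        have h4 : u w = v w := hNout w hw.1.2
        have h5 : a < v z := hz.1.1
        have h6 : v w ≤ m := hw.2
        calc a - m ≤ u z - u w := by rw [h3, h4]; linarith
          _ ≤ |u z - u w| := le_abs_self _
  set Bad1 := ⋃ p : ℚ × ℚ,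
    {z | z ∈ Ea (p.1 : ℝ) ∧ K < (p.1 : ℝ) - (p.2 : ℝ) ∧ 0 < μ (Fb (p.2 : ℝ))}
    with hBad1def
  set Bad2 := ⋃ p : ℚ × ℚ,
    {z | z ∈ Fb (p.2 : ℝ) ∧ K < (p.1 : ℝ) - (p.2 : ℝ) ∧ 0 < μ (Ea (p.1 : ℝ))}
    with hBad2def
  have hBad1 : μ Bad1 = 0 := by
    rw [hBad1def]
    refine measure_iUnion_null fun p => ?_
    by_cases hp : K < (p.1 : ℝ) - (p.2 : ℝ) ∧ 0 < μ (Fb (p.2 : ℝ))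
    · have hEa0 : μ (Ea (p.1 : ℝ)) = 0 := by
        by_contra h'
        have hpos : 0 < μ (Ea (p.1 : ℝ)) := zero_le.lt_of_ne (Ne.symm h')
        exact absurd (main _ _ hpos hp.2) (not_le.mpr hp.1)
      exact measure_mono_null (fun z hz => hz.1) hEa0
    · have hempty : {z | z ∈ Ea (p.1:ℝ) ∧ K < (p.1:ℝ) - (p.2:ℝ) ∧ 0 < μ (Fb (p.2:ℝ))}
          = ∅ := by
        ext z
        simp only [Set.mem_setOf_eq, Set.mem_empty_iff_false, iff_false]
        intro hz
        exact hp ⟨hz.2.1, hz.2.2⟩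
      rw [hempty]; exact measure_empty
  have hBad2 : μ Bad2 = 0 := by
    rw [hBad2def]
    refine measure_iUnion_null fun p => ?_
    by_cases hp : K < (p.1 : ℝ) - (p.2 : ℝ) ∧ 0 < μ (Ea (p.1 : ℝ))
    · have hFb0 : μ (Fb (p.2 : ℝ)) = 0 := by
        by_contra h'
        have hpos : 0 < μ (Fb (p.2 : ℝ)) := zero_le.lt_of_ne (Ne.symm h')
        exact absurd (main _ _ hp.2 hpos) (not_le.mpr hp.1)
      exact measure_mono_null (fun z hz => hz.1) hFb0
    · have hempty : {z | z ∈ Fb (p.2:ℝ) ∧ K < (p.1:ℝ) - (p.2:ℝ) ∧ 0 < μ (Ea (p.1:ℝ))}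
          = ∅ := by
        ext z
        simp only [Set.mem_setOf_eq, Set.mem_empty_iff_false, iff_false]
        intro hz
        exact hp ⟨hz.2.1, hz.2.2⟩
      rw [hempty]; exact measure_empty
  have hptwise : ∀ z, z ∈ B → z ∉ N → z ∉ Bad1 → z ∉ Bad2 →
      ∀ᵐ y ∂μ, y ∈ B → y ∉ N → |u z - u y| ≤ K := by
    intro z hzB hzN hz1 hz2
    have hz1' : ∀ p : ℚ × ℚ, ¬(z ∈ Ea (p.1:ℝ) ∧ K < (p.1:ℝ) - (p.2:ℝ)
        ∧ 0 < μ (Fb (p.2:ℝ))) := by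
      intro p hp
      exact hz1 (by rw [hBad1def]; exact Set.mem_iUnion.2 ⟨p, hp⟩)
    have hz2' : ∀ p : ℚ × ℚ, ¬(z ∈ Fb (p.2:ℝ) ∧ K < (p.1:ℝ) - (p.2:ℝ)
        ∧ 0 < μ (Ea (p.1:ℝ))) := by
      intro p hp
      exact hz2 (by rw [hBad2def]; exact Set.mem_iUnion.2 ⟨p, hp⟩)
    have hTnull : μ ((⋃ p : ℚ × ℚ,
        {y | y ∈ Fb (p.2:ℝ) ∧ K < (p.1:ℝ) - (p.2:ℝ) ∧ z ∈ Ea (p.1:ℝ)}) ∪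
        (⋃ p : ℚ × ℚ,
        {y | y ∈ Ea (p.1:ℝ) ∧ K < (p.1:ℝ) - (p.2:ℝ) ∧ z ∈ Fb (p.2:ℝ)})) = 0 := by
      refine measure_union_null (measure_iUnion_null fun p => ?_)
        (measure_iUnion_null fun p => ?_)
      · by_cases hp : K < (p.1:ℝ) - (p.2:ℝ) ∧ z ∈ Ea (p.1:ℝ)
        · have hFb0 : μ (Fb (p.2:ℝ)) = 0 := by
            by_contra h'
            exact hz1' p ⟨hp.2, hp.1, zero_le.lt_of_ne (Ne.symm h')⟩
          exact measure_mono_null (fun y hy => hy.1) hFb0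
        · have hempty : {y | y ∈ Fb (p.2:ℝ) ∧ K < (p.1:ℝ) - (p.2:ℝ)
              ∧ z ∈ Ea (p.1:ℝ)} = ∅ := by
            ext y
            simp only [Set.mem_setOf_eq, Set.mem_empty_iff_false, iff_false]
            intro hy
            exact hp ⟨hy.2.1, hy.2.2⟩
          rw [hempty]; exact measure_empty
      · by_cases hp : K < (p.1:ℝ) - (p.2:ℝ) ∧ z ∈ Fb (p.2:ℝ)
        · have hEa0 : μ (Ea (p.1:ℝ)) = 0 := by
            by_contra h'
            exact hz2' p ⟨hp.2, hp.1, zero_le.lt_of_ne (Ne.symm h')⟩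
          exact measure_mono_null (fun y hy => hy.1) hEa0
        · have hempty : {y | y ∈ Ea (p.1:ℝ) ∧ K < (p.1:ℝ) - (p.2:ℝ)
              ∧ z ∈ Fb (p.2:ℝ)} = ∅ := by
            ext y
            simp only [Set.mem_setOf_eq, Set.mem_empty_iff_false, iff_false]
            intro hy
            exact hp ⟨hy.2.1, hy.2.2⟩
          rw [hempty]; exact measure_empty
    have hsub : {y | (y ∈ B ∧ y ∉ N) ∧ K < |v z - v y|} ⊆
        (⋃ p : ℚ × ℚ,
        {y | y ∈ Fb (p.2:ℝ) ∧ K < (p.1:ℝ) - (p.2:ℝ) ∧ z ∈ Ea (p.1:ℝ)}) ∪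
        (⋃ p : ℚ × ℚ,
        {y | y ∈ Ea (p.1:ℝ) ∧ K < (p.1:ℝ) - (p.2:ℝ) ∧ z ∈ Fb (p.2:ℝ)}) := by
      rintro y ⟨⟨hyB, hyN⟩, habs⟩
      rcases lt_abs.mp habs with hgt | hgt
      · -- v y < v z - K
        obtain ⟨q, hq1, hq2⟩ := exists_rat_btwn (show v y + K < v z by linarith)
        obtain ⟨q', hq1', hq2'⟩ := exists_rat_btwn (show v y < (q:ℝ) - K by linarith)
        refine Or.inl (Set.mem_iUnion.2 ⟨(q, q'), ?_⟩)
        exact ⟨⟨⟨hq1', hyB⟩, hyN⟩, by linarith, ⟨⟨hq2, hzB⟩, hzN⟩⟩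
      · -- v z < v y - K
        obtain ⟨q', hq1', hq2'⟩ := exists_rat_btwn (show v z < v y - K by linarith)
        obtain ⟨q, hq1, hq2⟩ := exists_rat_btwn (show (q':ℝ) + K < v y by linarith)
        refine Or.inr (Set.mem_iUnion.2 ⟨(q, q'), ?_⟩)
        exact ⟨⟨⟨hq2, hyB⟩, hyN⟩, by linarith, ⟨⟨hq1', hzB⟩, hzN⟩⟩
    have hnull2 : μ {y | (y ∈ B ∧ y ∉ N) ∧ K < |v z - v y|} = 0 :=
      measure_mono_null hsub hTnull
    have hae := (measure_eq_zero_iff_ae_notMem.mp hnull2)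
    filter_upwards [hae] with y hy hyB hyN
    have h1 : ¬((y ∈ B ∧ y ∉ N) ∧ K < |v z - v y|) := hy
    have h2 : ¬ K < |v z - v y| := fun h' => h1 ⟨⟨hyB, hyN⟩, h'⟩
    rw [hNout z hzN, hNout y hyN]
    exact not_lt.mp h2
  have hint : Integrable u (μ.restrict B) := MemLp.integrable le_top (hu.restrict B)
  have hzae : ∀ᵐ z ∂μ, z ∈ B → |u z - ⨍ w in B, u w ∂μ| ≤ K := by
    have hN' : ∀ᵐ z ∂μ, z ∉ N := measure_eq_zero_iff_ae_notMem.mp hN0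
    have hB1 : ∀ᵐ z ∂μ, z ∉ Bad1 := measure_eq_zero_iff_ae_notMem.mp hBad1
    have hB2 : ∀ᵐ z ∂μ, z ∉ Bad2 := measure_eq_zero_iff_ae_notMem.mp hBad2
    filter_upwards [hN', hB1, hB2] with z hzN hz1 hz2 hzB
    have hy := hptwise z hzB hzN hz1 hz2
    have hyres : ∀ᵐ y ∂(μ.restrict B), |u z - u y| ≤ K := by
      filter_upwards [ae_restrict_of_ae hy, ae_restrict_mem measurableSet_ball,
        ae_restrict_of_ae hN'] with y hy' hyB hyN
      exact hy' hyB hyN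
    have hint2 : Integrable (fun y => u z - u y) (μ.restrict B) :=
      (integrable_const _).sub hint
    have habs : Integrable (fun y => |u z - u y|) (μ.restrict B) := hint2.abs
    have hIb : ∫ y in B, |u z - u y| ∂μ ≤ K * (μ B).toReal := by
      calc ∫ y in B, |u z - u y| ∂μ ≤ ∫ _y in B, K ∂μ :=
            integral_mono_ae habs (integrable_const _) hyres
        _ = (μ B).toReal * K := by rw [setIntegral_const, smul_eq_mul, measureReal_def]
        _ = K * (μ B).toReal := mul_comm _ _
    have hsubint : ∫ y in B, (u z - u y) ∂μ = (μ B).toReal * u z - ∫ y in B, u y ∂μ := by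
      rw [integral_sub (integrable_const _) hint, setIntegral_const, smul_eq_mul, measureReal_def]
    have havg : u z - ⨍ w in B, u w ∂μ
        = ((μ B).toReal)⁻¹ * ∫ y in B, (u z - u y) ∂μ := by
      rw [setAverage_eq, measureReal_def, hsubint, smul_eq_mul]
      field_simp
    rw [havg, abs_mul, abs_inv, abs_of_pos htpos]
    have h8 : |∫ y in B, (u z - u y) ∂μ| ≤ K * (μ B).toReal := by
      calc |∫ y in B, (u z - u y) ∂μ| ≤ ∫ y in B, |u z - u y| ∂μ := by
            simpa [Real.norm_eq_abs] using
              norm_integral_le_integral_norm (μ := μ.restrict B) (fun y => u z - u y)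
        _ ≤ K * (μ B).toReal := hIb
    calc ((μ B).toReal)⁻¹ * |∫ y in B, (u z - u y) ∂μ|
        ≤ ((μ B).toReal)⁻¹ * (K * (μ B).toReal) :=
          mul_le_mul_of_nonneg_left h8 (by positivity)
      _ = K := by field_simp
  have hfin : Integrable (fun z => |u z - ⨍ w in B, u w ∂μ|) (μ.restrict B) :=
    (hint.sub (integrable_const _)).abs
  have hres : ∀ᵐ z ∂(μ.restrict B), |u z - ⨍ w in B, u w ∂μ| ≤ K := by
    filter_upwards [ae_restrict_of_ae hzae, ae_restrict_mem measurableSet_ball]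
      with z h1 h2
    exact h1 h2
  have hintK : ∫ z in B, |u z - ⨍ w in B, u w ∂μ| ∂μ ≤ K * (μ B).toReal := by
    calc ∫ z in B, |u z - ⨍ w in B, u w ∂μ| ∂μ ≤ ∫ _z in B, K ∂μ :=
          integral_mono_ae hfin (integrable_const _) hres
      _ = (μ B).toReal * K := by rw [setIntegral_const, smul_eq_mul, measureReal_def]
      _ = K * (μ B).toReal := mul_comm _ _
  rw [setAverage_eq, smul_eq_mul]
  calc ((μ B).toReal)⁻¹ * ∫ z in B, |u z - ⨍ w in B, u w ∂μ| ∂μ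
      ≤ ((μ B).toReal)⁻¹ * (K * (μ B).toReal) :=
        mul_le_mul_of_nonneg_left hintK (by positivity)
    _ = K := by field_simp
end
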